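/- arXiv:1701.07915 — 7 statements merged into one kernel-verified Lean document; each statement's English description precedes it below -/
import Mathlib

section
/- For positive integers m and n, the over-(q,t)-binomial coefficient satisfies the recurrence: O(m+n, n) = O(m+n-1, n-1) + q^n · O(m+n-1, n) + t·q^n · O(m+n-2, n-1), where O(a,b) denotes the over-(q,t)-binomial coefficient for overpartitions fitting inside an (a-b)×b rectangle. -/
open Finset Polynomial

/-- `overp m n k N` is the number of overpartitions of `N` with `k` overlined parts,
largest part `≤ m`, and at most `n` parts. An overpartition is a partition together
with a subset of its (distinct) part sizes which are overlined. -/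
noncomputable def overp (m n k N : ℕ) : ℕ :=
  Nat.card {p : Nat.Partition N × Finset ℕ //
    (∀ i ∈ p.1.parts, i ≤ m) ∧ Multiset.card p.1.parts ≤ n ∧
    p.2 ⊆ p.1.parts.toFinset ∧ p.2.card = k}

/-- The over-(q,t)-binomial coefficient for the `m × n` rectangle, evaluated at
elements `q t` of a commutative ring. -/
noncomputable def Oqt {R : Type*} [CommRing R] (q t : R) (m n : ℕ) : R :=
  ∑ N ∈ range (m * n + 1), ∑ k ∈ range (n + 1), (overp m n k N : R) * t ^ k * q ^ N

namespace OqtAux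


/-- remove a column: drop 1s, subtract 1 from the rest -/
def shrink (A : Multiset ℕ) : Multiset ℕ := (A.filter (· ≠ 1)).map (· - 1)

/-- add a column: add 1 to all parts, append `j` ones -/
def grow (A : Multiset ℕ) (j : ℕ) : Multiset ℕ := A.map (· + 1) + Multiset.replicate j 1

lemma mem_shrink {A : Multiset ℕ} {i : ℕ} :
    i ∈ shrink A ↔ ∃ a ∈ A, a ≠ 1 ∧ a - 1 = i := by
  simp [shrink, and_assoc]

lemma shrink_cons_one (s : Multiset ℕ) : shrink (1 ::ₘ s) = shrink s := by
  simp [shrink]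

lemma shrink_cons {a : ℕ} (s : Multiset ℕ) (h : a ≠ 1) :
    shrink (a ::ₘ s) = (a - 1) ::ₘ shrink s := by
  simp [shrink, Multiset.filter_cons, h]

lemma shrink_sum {A : Multiset ℕ} (h : ∀ i ∈ A, 0 < i) :
    (shrink A).sum + Multiset.card A = A.sum := by
  induction A using Multiset.induction_on with
  | empty => simp [shrink]
  | cons a s ih =>
    have ha : 0 < a := h a (Multiset.mem_cons_self a s)
    have hs : ∀ i ∈ s, 0 < i := fun i hi => h i (Multiset.mem_cons_of_mem hi)
    by_cases h1 : a = 1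
    · subst h1
      rw [shrink_cons_one]
      simp only [Multiset.card_cons, Multiset.sum_cons]
      have := ih hs
      omega
    · rw [shrink_cons s h1]
      simp only [Multiset.card_cons, Multiset.sum_cons]
      have := ih hs
      omega

lemma shrink_card (A : Multiset ℕ) :
    Multiset.card (shrink A) + A.count 1 = Multiset.card A := by
  induction A using Multiset.induction_on with
  | empty => simp [shrink]
  | cons a s ih =>
    by_cases h1 : a = 1
    · subst h1; rw [shrink_cons_one]; simp only [Multiset.count_cons_self,
        Multiset.card_cons]; omega
    · rw [shrink_cons s h1, Multiset.count_cons_of_ne (Ne.symm h1)]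
      simp only [Multiset.card_cons]; omega

lemma grow_sum (A : Multiset ℕ) (j : ℕ) :
    (grow A j).sum = A.sum + Multiset.card A + j := by
  induction A using Multiset.induction_on with
  | empty => simp [grow, Multiset.sum_replicate]
  | cons a s ih => simp only [grow, Multiset.map_cons, Multiset.cons_add,
      Multiset.sum_cons, Multiset.card_cons] at ih ⊢; omega

lemma grow_card (A : Multiset ℕ) (j : ℕ) :
    Multiset.card (grow A j) = Multiset.card A + j := by
  simp [grow]

lemma mem_grow {A : Multiset ℕ} {j i : ℕ} :
    i ∈ grow A j ↔ (∃ a ∈ A, a + 1 = i) ∨ (j ≠ 0 ∧ i = 1) := by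
  simp [grow, Multiset.mem_replicate]

lemma shrink_add (s t : Multiset ℕ) : shrink (s + t) = shrink s + shrink t := by
  simp [shrink, Multiset.filter_add]

lemma shrink_grow {A : Multiset ℕ} (h : ∀ i ∈ A, 0 < i) (j : ℕ) :
    shrink (grow A j) = A := by
  rw [grow, shrink_add]
  have h1 : shrink (Multiset.replicate j 1) = 0 := by
    simp [shrink, Multiset.filter_eq_nil]
    intro a ha
    simp [Multiset.eq_of_mem_replicate ha]
  have h2 : shrink (A.map (· + 1)) = A := by
    rw [shrink]
    rw [Multiset.filter_map]
    have : Multiset.filter ((fun x => x ≠ 1) ∘ (· + 1)) A = A := by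
      rw [Multiset.filter_eq_self]
      intro a ha
      have := h a ha
      simp; omega
    rw [this, Multiset.map_map]
    rw [show ((fun x => x - 1) ∘ (· + 1)) = id by funext x; simp]
    exact Multiset.map_id A
  rw [h1, h2, add_zero]

lemma grow_shrink {A : Multiset ℕ} (h : ∀ i ∈ A, 0 < i) :
    grow (shrink A) (A.count 1) = A := by
  rw [grow, shrink, Multiset.map_map]
  have h2 : (A.filter (· ≠ 1)).map ((· + 1) ∘ (· - 1)) = A.filter (· ≠ 1) := by
    rw [show A.filter (· ≠ 1) = (A.filter (· ≠ 1)).map id from (Multiset.map_id _).symm]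
    rw [Multiset.map_map]
    apply Multiset.map_congr rfl
    intro a ha
    rw [Multiset.mem_filter] at ha
    have := h a ha.1
    have h1 : a ≠ 1 := by simpa using ha.2
    simp; omega
  rw [h2, ← Multiset.filter_eq' A 1]
  have := Multiset.filter_add_not (fun a => a ≠ 1) A
  rw [show (Multiset.filter (· = 1) A) = Multiset.filter (fun a => ¬ a ≠ 1) A by
    apply Multiset.filter_congr; intro a _; simp]
  exact this

lemma card_le_sum {A : Multiset ℕ} (h : ∀ i ∈ A, 0 < i) : Multiset.card A ≤ A.sum := by
  induction A using Multiset.induction_on with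
  | empty => simp
  | cons a s ih =>
    have ha := h a (Multiset.mem_cons_self a s)
    have := ih (fun i hi => h i (Multiset.mem_cons_of_mem hi))
    simp only [Multiset.card_cons, Multiset.sum_cons]
    omega


abbrev OT (m n k N : ℕ) := {p : Nat.Partition N × Finset ℕ //
    (∀ i ∈ p.1.parts, i ≤ m) ∧ Multiset.card p.1.parts ≤ n ∧
    p.2 ⊆ p.1.parts.toFinset ∧ p.2.card = k}

lemma overp_eq (m n k N : ℕ) : overp m n k N = Nat.card (OT m n k N) := rfl

lemma parts_le_N {N : ℕ} (p : Nat.Partition N) {i : ℕ} (hi : i ∈ p.parts) : i ≤ N := by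
  have := Multiset.single_le_sum (fun a _ => Nat.zero_le a) i hi
  rwa [p.parts_sum] at this

instance instFinOT (m n k N : ℕ) : Finite (OT m n k N) := by
  classical
  have hf : ∀ x : OT m n k N, x.1.2 ∈ (Finset.range (N+1)).powerset := by
    intro x
    rw [Finset.mem_powerset]
    intro i hi
    have hi' : i ∈ x.1.1.parts := Multiset.mem_toFinset.1 (x.2.2.2.1 hi)
    have := parts_le_N x.1.1 hi'
    rw [Finset.mem_range]; omega
  have hinj : Function.Injective (fun x : OT m n k N =>
      ((x.1.1, ⟨x.1.2, hf x⟩) : Nat.Partition N × {S // S ∈ (Finset.range (N+1)).powerset})) := by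
    intro x y h
    apply Subtype.ext
    have h1 := congrArg Prod.fst h
    have h2 := congrArg (fun z => (Prod.snd z).1) h
    exact Prod.ext h1 h2
  exact Finite.of_injective _ hinj


variable {m n k N : ℕ}


def shrinkPart (p : Nat.Partition N) (h : Multiset.card p.parts = n) (hN : n ≤ N) :
    Nat.Partition (N - n) where
  parts := shrink p.parts
  parts_pos := by
    intro i hi
    rw [mem_shrink] at hi
    obtain ⟨a, ha, h1, rfl⟩ := hi
    have := p.parts_pos ha
    omega
  parts_sum := by
    have := shrink_sum (fun i hi => p.parts_pos hi)
    rw [p.parts_sum, h] at this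
    omega

@[simp] lemma shrinkPart_parts (p : Nat.Partition N) (h : Multiset.card p.parts = n)
    (hN : n ≤ N) : (shrinkPart p h hN).parts = shrink p.parts := rfl

def growPart (p : Nat.Partition (N - n)) (hc : Multiset.card p.parts ≤ n) (hN : n ≤ N) :
    Nat.Partition N where
  parts := grow p.parts (n - Multiset.card p.parts)
  parts_pos := by
    intro i hi
    rw [mem_grow] at hi
    rcases hi with ⟨a, ha, rfl⟩ | ⟨_, rfl⟩ <;> omega
  parts_sum := by
    rw [grow_sum]
    have h1 : p.parts.sum = N - n := p.parts_sum
    omega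

@[simp] lemma growPart_parts (p : Nat.Partition (N - n)) (hc : Multiset.card p.parts ≤ n)
    (hN : n ≤ N) : (growPart p hc hN).parts = grow p.parts (n - Multiset.card p.parts) := rfl

/-- Case 1 equivalence: fewer than `n` parts. -/
def e1 (hn : 1 ≤ n) :
    {x : OT m n k N // ¬ Multiset.card x.1.1.parts = n} ≃ OT m (n-1) k N where
  toFun x := ⟨x.1.1, x.1.2.1, by have h1 := x.1.2.2.1; have h2 := x.2; omega, x.1.2.2.2⟩
  invFun y := ⟨⟨y.1, y.2.1, by have := y.2.2.1; omega, y.2.2.2⟩, by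
    show ¬ Multiset.card y.1.1.parts = n
    have := y.2.2.1; omega⟩
  left_inv x := rfl
  right_inv y := rfl

lemma image_of_eqOn {S : Finset ℕ} {f : ℕ → ℕ} (h : ∀ s ∈ S, f s = s) : S.image f = S := by
  rw [Finset.image_congr (g := id) (fun s hs => h s hs), Finset.image_id]

/-- Case 2 equivalence: exactly `n` parts, `1` not overlined. -/
def e2 (hm : 1 ≤ m) (hN : n ≤ N) :
    {x : OT m n k N // Multiset.card x.1.1.parts = n ∧ 1 ∉ x.1.2} ≃ OT (m-1) n k (N - n) where
  toFun x := ⟨(shrinkPart x.1.1.1 x.2.1 hN, x.1.1.2.image (· - 1)), by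
    obtain ⟨⟨⟨p, S⟩, hle, hcard, hsub, hk⟩, hn', h1S⟩ := x
    have hSparts : ∀ s ∈ S, s ∈ p.parts := fun s hs => Multiset.mem_toFinset.1 (hsub hs)
    refine ⟨?_, ?_, ?_, ?_⟩
    · intro i hi
      rw [shrinkPart_parts, mem_shrink] at hi
      obtain ⟨a, ha, h1, rfl⟩ := hi
      have := hle a ha
      omega
    · rw [shrinkPart_parts]
      have h2 : Multiset.card p.parts = n := hn'
      have := shrink_card p.parts
      show Multiset.card (shrink p.parts) ≤ n
      omega
    · intro i hi
      simp only [Finset.mem_image] at hi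
      obtain ⟨s, hs, rfl⟩ := hi
      have hsp := hSparts s hs
      have hs1 : s ≠ 1 := fun h => h1S (h ▸ hs)
      rw [shrinkPart_parts, Multiset.mem_toFinset, mem_shrink]
      exact ⟨s, hsp, hs1, rfl⟩
    · rw [Finset.card_image_of_injOn, hk]
      intro a ha b hb hab
      have := p.parts_pos (hSparts a ha)
      have := p.parts_pos (hSparts b hb)
      simp only at hab
      omega⟩
  invFun y := ⟨⟨(growPart y.1.1 y.2.2.1 hN, y.1.2.image (· + 1)), by
    obtain ⟨⟨p, S⟩, hle, hcard, hsub, hk⟩ := y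
    refine ⟨?_, ?_, ?_, ?_⟩
    · intro i hi
      rw [growPart_parts, mem_grow] at hi
      rcases hi with ⟨a, ha, rfl⟩ | ⟨-, rfl⟩
      · have := hle a ha; omega
      · omega
    · show Multiset.card (grow p.parts (n - Multiset.card p.parts)) ≤ n
      rw [grow_card]
      have hc : Multiset.card p.parts ≤ n := hcard
      omega
    · intro i hi
      simp only [Finset.mem_image] at hi
      obtain ⟨s, hs, rfl⟩ := hi
      have hsp : s ∈ p.parts := Multiset.mem_toFinset.1 (hsub hs)
      show s + 1 ∈ (grow p.parts (n - Multiset.card p.parts)).toFinset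
      rw [Multiset.mem_toFinset, mem_grow]
      exact Or.inl ⟨s, hsp, rfl⟩
    · rw [Finset.card_image_of_injective _ (add_left_injective 1), hk]⟩, by
    refine ⟨?_, ?_⟩
    · show Multiset.card (grow y.1.1.parts (n - Multiset.card y.1.1.parts)) = n
      rw [grow_card]
      have := y.2.2.1
      omega
    · show 1 ∉ y.1.2.image (· + 1)
      intro h
      simp only [Finset.mem_image] at h
      obtain ⟨s, hs, hs1⟩ := h
      have hsp : s ∈ y.1.1.parts := Multiset.mem_toFinset.1 (y.2.2.2.1 hs)
      have := y.1.1.parts_pos hsp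
      omega⟩
  left_inv x := by
    obtain ⟨⟨⟨p, S⟩, hle, hcard, hsub, hk⟩, hn', h1S⟩ := x
    apply Subtype.ext
    apply Subtype.ext
    refine Prod.ext ?_ ?_
    · apply Nat.Partition.ext
      show grow (shrink p.parts) (n - Multiset.card (shrink p.parts)) = p.parts
      have h1 := shrink_card p.parts
      have h2 : Multiset.card p.parts = n := hn'
      have hcount : n - Multiset.card (shrink p.parts) = p.parts.count 1 := by omega
      rw [hcount, grow_shrink (fun i hi => p.parts_pos hi)]
    · show (S.image (· - 1)).image (· + 1) = S
      rw [Finset.image_image]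
      apply image_of_eqOn
      intro s hs
      have := p.parts_pos (Multiset.mem_toFinset.1 (hsub hs))
      simp only [Function.comp_apply]
      omega
  right_inv y := by
    obtain ⟨⟨p, S⟩, hle, hcard, hsub, hk⟩ := y
    apply Subtype.ext
    refine Prod.ext ?_ ?_
    · apply Nat.Partition.ext
      show shrink (grow p.parts (n - Multiset.card p.parts)) = p.parts
      exact shrink_grow (fun i hi => p.parts_pos hi) _
    · show (S.image (· + 1)).image (· - 1) = S
      rw [Finset.image_image]
      apply image_of_eqOn
      intro s hs
      simp

/-- Case 3 equivalence: exactly `n` parts, `1` overlined. -/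
def e3 (hm : 1 ≤ m) (hn : 1 ≤ n) (hN : n ≤ N) (hk : 1 ≤ k) :
    {x : OT m n k N // Multiset.card x.1.1.parts = n ∧ 1 ∈ x.1.2} ≃ OT (m-1) (n-1) (k-1) (N - n) where
  toFun x := ⟨(shrinkPart x.1.1.1 x.2.1 hN, (x.1.1.2.erase 1).image (· - 1)), by
    obtain ⟨⟨⟨p, S⟩, hle, hcard, hsub, hk'⟩, hn', h1S⟩ := x
    have hSparts : ∀ s ∈ S, s ∈ p.parts := fun s hs => Multiset.mem_toFinset.1 (hsub hs)
    have h1p : 1 ∈ p.parts := hSparts 1 h1S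
    refine ⟨?_, ?_, ?_, ?_⟩
    · intro i hi
      rw [shrinkPart_parts, mem_shrink] at hi
      obtain ⟨a, ha, h1, rfl⟩ := hi
      have := hle a ha
      omega
    · rw [shrinkPart_parts]
      have h2 : Multiset.card p.parts = n := hn'
      have h3 := shrink_card p.parts
      have h4 : 1 ≤ p.parts.count 1 := Multiset.one_le_count_iff_mem.2 h1p
      show Multiset.card (shrink p.parts) ≤ n - 1
      omega
    · intro i hi
      simp only [Finset.mem_image, Finset.mem_erase] at hi
      obtain ⟨s, ⟨hs1, hs⟩, rfl⟩ := hi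
      have hsp := hSparts s hs
      rw [shrinkPart_parts, Multiset.mem_toFinset, mem_shrink]
      exact ⟨s, hsp, hs1, rfl⟩
    · rw [Finset.card_image_of_injOn, Finset.card_erase_of_mem h1S, hk']
      intro a ha b hb hab
      rw [Finset.mem_coe, Finset.mem_erase] at ha hb
      have := p.parts_pos (hSparts a ha.2)
      have := p.parts_pos (hSparts b hb.2)
      simp only at hab
      omega⟩
  invFun y := ⟨⟨(growPart y.1.1 (le_trans y.2.2.1 (by omega)) hN,
      insert 1 (y.1.2.image (· + 1))), by
    obtain ⟨⟨p, S⟩, hle, hcard, hsub, hk'⟩ := y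
    have hc : Multiset.card p.parts ≤ n - 1 := hcard
    refine ⟨?_, ?_, ?_, ?_⟩
    · intro i hi
      rw [growPart_parts, mem_grow] at hi
      rcases hi with ⟨a, ha, rfl⟩ | ⟨-, rfl⟩
      · have := hle a ha; omega
      · omega
    · show Multiset.card (grow p.parts (n - Multiset.card p.parts)) ≤ n
      rw [grow_card]
      omega
    · intro i hi
      rw [Finset.mem_insert] at hi
      show i ∈ (grow p.parts (n - Multiset.card p.parts)).toFinset
      rw [Multiset.mem_toFinset, mem_grow]
      rcases hi with rfl | hi
      · exact Or.inr ⟨by omega, rfl⟩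
      · simp only [Finset.mem_image] at hi
        obtain ⟨s, hs, rfl⟩ := hi
        exact Or.inl ⟨s, Multiset.mem_toFinset.1 (hsub hs), rfl⟩
    · have h1 : (1 : ℕ) ∉ S.image (· + 1) := by
        intro h
        simp only [Finset.mem_image] at h
        obtain ⟨s, hs, hs1⟩ := h
        have := p.parts_pos (Multiset.mem_toFinset.1 (hsub hs))
        omega
      rw [Finset.card_insert_of_notMem h1,
        Finset.card_image_of_injective _ (add_left_injective 1), hk']
      omega⟩, by
    refine ⟨?_, ?_⟩
    · show Multiset.card (grow y.1.1.parts (n - Multiset.card y.1.1.parts)) = n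
      rw [grow_card]
      have : Multiset.card y.1.1.parts ≤ n - 1 := y.2.2.1
      omega
    · exact Finset.mem_insert_self 1 _⟩
  left_inv x := by
    obtain ⟨⟨⟨p, S⟩, hle, hcard, hsub, hk'⟩, hn', h1S⟩ := x
    apply Subtype.ext
    apply Subtype.ext
    refine Prod.ext ?_ ?_
    · apply Nat.Partition.ext
      show grow (shrink p.parts) (n - Multiset.card (shrink p.parts)) = p.parts
      have h1 := shrink_card p.parts
      have h2 : Multiset.card p.parts = n := hn'
      have hcount : n - Multiset.card (shrink p.parts) = p.parts.count 1 := by omega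
      rw [hcount, grow_shrink (fun i hi => p.parts_pos hi)]
    · show insert 1 (((S.erase 1).image (· - 1)).image (· + 1)) = S
      rw [Finset.image_image]
      rw [image_of_eqOn (f := (· + 1) ∘ (· - 1))]
      · exact Finset.insert_erase h1S
      · intro s hs
        rw [Finset.mem_erase] at hs
        have := p.parts_pos (Multiset.mem_toFinset.1 (hsub hs.2))
        have h1 : s ≠ 1 := hs.1
        simp only [Function.comp_apply]
        omega
  right_inv y := by
    obtain ⟨⟨p, S⟩, hle, hcard, hsub, hk'⟩ := y
    apply Subtype.ext
    refine Prod.ext ?_ ?_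
    · apply Nat.Partition.ext
      show shrink (grow p.parts (n - Multiset.card p.parts)) = p.parts
      exact shrink_grow (fun i hi => p.parts_pos hi) _
    · show ((insert 1 (S.image (· + 1))).erase 1).image (· - 1) = S
      have h1 : (1 : ℕ) ∉ S.image (· + 1) := by
        intro h
        simp only [Finset.mem_image] at h
        obtain ⟨s, hs, hs1⟩ := h
        have := p.parts_pos (Multiset.mem_toFinset.1 (hsub hs))
        omega
      rw [Finset.erase_insert h1, Finset.image_image]
      apply image_of_eqOn
      intro s hs
      simp

lemma empty_of_lt (hNn : N < n) :
    IsEmpty {x : OT m n k N // Multiset.card x.1.1.parts = n ∧ 1 ∈ x.1.2} := by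
  constructor
  rintro ⟨⟨⟨p, S⟩, hc⟩, hP⟩
  obtain ⟨hn', -⟩ := hP
  have h1 : Multiset.card p.parts ≤ p.parts.sum := card_le_sum (fun i hi => p.parts_pos hi)
  have h2 : Multiset.card p.parts = n := hn'
  rw [p.parts_sum] at h1
  omega

lemma empty_of_lt' (hNn : N < n) :
    IsEmpty {x : OT m n k N // Multiset.card x.1.1.parts = n ∧ 1 ∉ x.1.2} := by
  constructor
  rintro ⟨⟨⟨p, S⟩, hc⟩, hP⟩
  obtain ⟨hn', -⟩ := hP
  have h1 : Multiset.card p.parts ≤ p.parts.sum := card_le_sum (fun i hi => p.parts_pos hi)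
  have h2 : Multiset.card p.parts = n := hn'
  rw [p.parts_sum] at h1
  omega

lemma empty_of_k_zero (hk : k = 0) :
    IsEmpty {x : OT m n k N // Multiset.card x.1.1.parts = n ∧ 1 ∈ x.1.2} := by
  constructor
  rintro ⟨⟨⟨p, S⟩, hc⟩, hP⟩
  obtain ⟨-, h1S⟩ := hP
  have h2 : S.card = k := hc.2.2.2
  rw [hk, Finset.card_eq_zero] at h2
  subst h2
  exact absurd h1S (Finset.notMem_empty 1)

lemma nat_card_split (T : Type*) [Finite T] (P Q : T → Prop) :
    Nat.card T = Nat.card {x : T // ¬ P x} + Nat.card {x : T // P x ∧ ¬ Q x}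
      + Nat.card {x : T // P x ∧ Q x} := by
  classical
  have h1 : Nat.card T = Nat.card {x // ¬ P x} + Nat.card {x // P x} := by
    rw [← Nat.card_sum]
    exact Nat.card_congr ((Equiv.sumCompl P).symm.trans (Equiv.sumComm _ _))
  have h2 : Nat.card {x // P x} =
      Nat.card {x : T // P x ∧ ¬ Q x} + Nat.card {x : T // P x ∧ Q x} := by
    rw [← Nat.card_sum]
    refine Nat.card_congr ?_
    refine ((Equiv.sumCompl (fun y : {x // P x} => ¬ Q y.1)).symm.trans ?_)
    refine Equiv.sumCongr ?_ ?_
    · exact Equiv.subtypeSubtypeEquivSubtypeInter P (fun a => ¬ Q a)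
    · exact (Equiv.subtypeEquivRight (fun y => not_not)).trans
        (Equiv.subtypeSubtypeEquivSubtypeInter P Q)
  rw [h1, h2, add_assoc]

lemma key (hm : 1 ≤ m) (hn : 1 ≤ n) (k N : ℕ) :
    overp m n k N = overp m (n-1) k N
      + (if n ≤ N then overp (m-1) n k (N-n) else 0)
      + (if n ≤ N ∧ 1 ≤ k then overp (m-1) (n-1) (k-1) (N-n) else 0) := by
  classical
  rw [overp_eq, nat_card_split (OT m n k N)
    (fun x => Multiset.card x.1.1.parts = n) (fun x => 1 ∈ x.1.2)]
  have hA : Nat.card {x : OT m n k N // ¬ Multiset.card x.1.1.parts = n} = overp m (n-1) k N := by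
    rw [overp_eq]; exact Nat.card_congr (e1 hn)
  rw [hA]
  by_cases hN : n ≤ N
  · have hB : Nat.card {x : OT m n k N // Multiset.card x.1.1.parts = n ∧ ¬ 1 ∈ x.1.2}
        = overp (m-1) n k (N-n) := by
      rw [overp_eq]; exact Nat.card_congr (e2 hm hN)
    rw [hB, if_pos hN]
    by_cases hk : 1 ≤ k
    · have hC : Nat.card {x : OT m n k N // Multiset.card x.1.1.parts = n ∧ 1 ∈ x.1.2}
          = overp (m-1) (n-1) (k-1) (N-n) := by
        rw [overp_eq]; exact Nat.card_congr (e3 hm hn hN hk)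
      rw [hC, if_pos ⟨hN, hk⟩]
    · have : k = 0 := by omega
      rw [@Nat.card_of_isEmpty _ (empty_of_k_zero this), if_neg (by tauto)]
  · push_neg at hN
    rw [@Nat.card_of_isEmpty _ (empty_of_lt hN),
      @Nat.card_of_isEmpty _ (empty_of_lt' hN), if_neg (by omega), if_neg (by omega)]

lemma overp_zero_big_N (h : m * n < N) : overp m n k N = 0 := by
  rw [overp_eq]
  have : IsEmpty (OT m n k N) := by
    constructor
    rintro ⟨⟨p, S⟩, hc⟩
    have h1 : p.parts.sum ≤ Multiset.card p.parts • m :=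
      Multiset.sum_le_card_nsmul _ _ hc.1
    rw [p.parts_sum, smul_eq_mul] at h1
    have h2 : Multiset.card p.parts * m ≤ n * m := Nat.mul_le_mul_right m hc.2.1
    have h3 : n * m = m * n := Nat.mul_comm n m
    omega
  exact @Nat.card_of_isEmpty _ this

lemma overp_zero_big_k (h : n < k) : overp m n k N = 0 := by
  rw [overp_eq]
  have : IsEmpty (OT m n k N) := by
    constructor
    rintro ⟨⟨p, S⟩, hc⟩
    have h1 : S.card ≤ p.parts.toFinset.card := Finset.card_le_card hc.2.2.1
    have h2 := Multiset.toFinset_card_le p.parts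
    have h3 : S.card = k := hc.2.2.2
    have h4 : Multiset.card p.parts ≤ n := hc.2.1
    omega
  exact @Nat.card_of_isEmpty _ this

end OqtAux

theorem stmt1 {R : Type*} [CommRing R] (q t : R) (m n : ℕ) (hm : 0 < m) (hn : 0 < n) :
    Oqt q t m n =
      Oqt q t m (n - 1) + q ^ n * Oqt q t (m - 1) n + t * q ^ n * Oqt q t (m - 1) (n - 1) := by
  classical
  have hm1 : 1 ≤ m := hm
  have hn1 : 1 ≤ n := hn
  have key' : ∀ (N k : ℕ), ((overp m n k N : R) * t ^ k * q ^ N) =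
      (overp m (n-1) k N : R) * t ^ k * q ^ N
      + (if n ≤ N then (overp (m-1) n k (N-n) : R) * t ^ k * q ^ N else 0)
      + (if n ≤ N ∧ 1 ≤ k then (overp (m-1) (n-1) (k-1) (N-n) : R) * t ^ k * q ^ N else 0) := by
    intro N k
    rw [OqtAux.key hm1 hn1 k N]
    split_ifs with h1 h2 <;> push_cast <;> ring
  have expand : Oqt q t m n =
      (∑ N ∈ range (m*n+1), ∑ k ∈ range (n+1), (overp m (n-1) k N : R) * t^k * q^N)
      + (∑ N ∈ range (m*n+1), ∑ k ∈ range (n+1),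
          if n ≤ N then (overp (m-1) n k (N-n) : R) * t^k * q^N else 0)
      + (∑ N ∈ range (m*n+1), ∑ k ∈ range (n+1),
          if n ≤ N ∧ 1 ≤ k then (overp (m-1) (n-1) (k-1) (N-n) : R) * t^k * q^N else 0) := by
    rw [Oqt]
    simp_rw [key']
    simp_rw [Finset.sum_add_distrib]
  rw [expand]
  have hA : (∑ N ∈ range (m*n+1), ∑ k ∈ range (n+1), (overp m (n-1) k N : R) * t^k * q^N)
      = Oqt q t m (n-1) := by
    rw [Oqt]
    have h1 : range (m*(n-1)+1) ⊆ range (m*n+1) := by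
      apply Finset.range_subset_range.2
      have := Nat.mul_le_mul_left m (show n - 1 ≤ n by omega)
      omega
    rw [Finset.sum_subset h1 (fun x _ hx => Finset.sum_eq_zero (fun k _ => by
      have hx' : m * (n-1) < x := by
        have := Finset.mem_range.not.1 hx
        omega
      rw [OqtAux.overp_zero_big_N hx']
      simp))]
    apply Finset.sum_congr rfl
    intro N _
    rw [show n - 1 + 1 = n by omega]
    rw [Finset.sum_subset (Finset.range_subset_range.2 (show n ≤ n + 1 by omega))
      (fun k _ hk => by
        have hk' : n - 1 < k := by
          have := Finset.mem_range.not.1 hk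
          omega
        rw [OqtAux.overp_zero_big_k hk']
        simp)]
  have hB : (∑ N ∈ range (m*n+1), ∑ k ∈ range (n+1),
        if n ≤ N then (overp (m-1) n k (N-n) : R) * t^k * q^N else 0)
      = q ^ n * Oqt q t (m-1) n := by
    have step1 : ∀ N : ℕ, (∑ k ∈ range (n+1),
        if n ≤ N then (overp (m-1) n k (N-n) : R) * t^k * q^N else 0)
        = if n ≤ N then (∑ k ∈ range (n+1), (overp (m-1) n k (N-n) : R) * t^k * q^N) else 0 := by
      intro N
      split_ifs with h
      · rfl
      · exact Finset.sum_eq_zero (fun _ _ => rfl)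
    simp_rw [step1]
    rw [← Finset.sum_filter]
    have hfil : (range (m*n+1)).filter (fun N => n ≤ N) = Finset.Ico n (m*n+1) := by
      ext x
      simp only [Finset.mem_filter, Finset.mem_range, Finset.mem_Ico]
      omega
    rw [hfil, Finset.sum_Ico_eq_sum_range]
    have hrange : m*n+1-n = (m-1)*n+1 := by
      have h1 : n ≤ m * n := Nat.le_mul_of_pos_left n hm
      rw [Nat.sub_one_mul]
      omega
    rw [hrange, Oqt, Finset.mul_sum]
    apply Finset.sum_congr rfl
    intro N' _
    rw [Finset.mul_sum]
    apply Finset.sum_congr rfl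
    intro k _
    rw [show n + N' - n = N' by omega, pow_add]
    ring
  have hC : (∑ N ∈ range (m*n+1), ∑ k ∈ range (n+1),
        if n ≤ N ∧ 1 ≤ k then (overp (m-1) (n-1) (k-1) (N-n) : R) * t^k * q^N else 0)
      = t * q ^ n * Oqt q t (m-1) (n-1) := by
    have step1 : ∀ N : ℕ, (∑ k ∈ range (n+1),
        if n ≤ N ∧ 1 ≤ k then (overp (m-1) (n-1) (k-1) (N-n) : R) * t^k * q^N else 0)
        = if n ≤ N then (∑ k ∈ range (n+1),
            if 1 ≤ k then (overp (m-1) (n-1) (k-1) (N-n) : R) * t^k * q^N else 0) else 0 := by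
      intro N
      simp_rw [ite_and]
      split_ifs with h
      · rfl
      · exact Finset.sum_eq_zero (fun _ _ => rfl)
    simp_rw [step1]
    rw [← Finset.sum_filter]
    have hfil : (range (m*n+1)).filter (fun N => n ≤ N) = Finset.Ico n (m*n+1) := by
      ext x
      simp only [Finset.mem_filter, Finset.mem_range, Finset.mem_Ico]
      omega
    rw [hfil, Finset.sum_Ico_eq_sum_range]
    have hrange : m*n+1-n = (m-1)*n+1 := by
      have h1 : n ≤ m * n := Nat.le_mul_of_pos_left n hm
      rw [Nat.sub_one_mul]
      omega
    rw [hrange]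
    have step2 : ∀ N' : ℕ, (∑ k ∈ range (n+1),
        if 1 ≤ k then (overp (m-1) (n-1) (k-1) (n+N'-n) : R) * t^k * q^(n+N') else 0)
        = ∑ k' ∈ range n, (overp (m-1) (n-1) k' N' : R) * t^(k'+1) * q^(n+N') := by
      intro N'
      rw [← Finset.sum_filter]
      have hfil2 : (range (n+1)).filter (fun k => 1 ≤ k) = Finset.Ico 1 (n+1) := by
        ext x
        simp only [Finset.mem_filter, Finset.mem_range, Finset.mem_Ico]
        omega
      rw [hfil2, Finset.sum_Ico_eq_sum_range]
      rw [show n + 1 - 1 = n by omega]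
      apply Finset.sum_congr rfl
      intro k' _
      rw [show 1 + k' - 1 = k' by omega, show n + N' - n = N' by omega,
        show 1 + k' = k' + 1 by omega]
    simp_rw [step2]
    rw [Oqt, Finset.mul_sum]
    have hsub : range ((m-1)*(n-1)+1) ⊆ range ((m-1)*n+1) := by
      apply Finset.range_subset_range.2
      have := Nat.mul_le_mul_left (m-1) (show n - 1 ≤ n by omega)
      omega
    rw [Finset.sum_subset hsub (fun x _ hx => by
      rw [Finset.mul_sum]
      apply Finset.sum_eq_zero
      intro k _
      have hx' : (m-1) * (n-1) < x := by
        have := Finset.mem_range.not.1 hx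
        omega
      rw [OqtAux.overp_zero_big_N hx']
      simp)]
    apply Finset.sum_congr rfl
    intro N' _
    rw [Finset.mul_sum]
    rw [show n - 1 + 1 = n by omega]
    apply Finset.sum_congr rfl
    intro k _
    rw [pow_add, pow_add]
    ring
  rw [hA, hB, hC]
end

section
/- For positive integers m and n, the over-(q,t)-binomial coefficient satisfies: O(m+n, n) = O(m+n-1, n) + q^m · O(m+n-1, n-1) + t·q^m · O(m+n-2, n-1), where O(a,b) denotes the over-(q,t)-binomial coefficient for the rectangle of width a-b and height b. -/
open Finset Polynomial

/-- The defining condition of `overp`. -/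
def OCond (m n k N : ℕ) (p : Nat.Partition N × Finset ℕ) : Prop :=
  (∀ i ∈ p.1.parts, i ≤ m) ∧ Multiset.card p.1.parts ≤ n ∧
    p.2 ⊆ p.1.parts.toFinset ∧ p.2.card = k

lemma overp_eq (m n k N : ℕ) :
    overp m n k N = Nat.card {p : Nat.Partition N × Finset ℕ // OCond m n k N p} := rfl

lemma finite_aux {N : ℕ} (C : Nat.Partition N × Finset ℕ → Prop)
    (hC : ∀ p, C p → p.2 ⊆ p.1.parts.toFinset) :
    Finite {p : Nat.Partition N × Finset ℕ // C p} := by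
  classical
  have key : ∀ x : {p : Nat.Partition N × Finset ℕ // C p},
      x.1.2 ∈ (Finset.range (N + 1)).powerset := by
    intro x
    rw [Finset.mem_powerset]
    intro a ha
    have h1 : a ∈ x.1.1.parts := Multiset.mem_toFinset.mp (hC _ x.2 ha)
    have h2 : a ≤ N := by
      have := Multiset.single_le_sum (fun y _ => Nat.zero_le y) a h1
      rwa [x.1.1.parts_sum] at this
    exact Finset.mem_range.mpr (by omega)
  exact Finite.of_injective
    (fun x => ((x.1.1, ⟨x.1.2, key x⟩) :
      Nat.Partition N × {s : Finset ℕ // s ∈ (Finset.range (N + 1)).powerset}))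
    (by
      intro a b h
      apply Subtype.ext
      have h1 := congrArg Prod.fst h
      have h2 := congrArg (fun z : Nat.Partition N ×
        {s : Finset ℕ // s ∈ (Finset.range (N + 1)).powerset} => z.2.1) h
      exact Prod.ext h1 h2)

lemma card_split {α : Type*} (P Q : α → Prop) (hfin : Finite {x : α // P x}) :
    Nat.card {x : α // P x} =
      Nat.card {x : α // P x ∧ Q x} + Nat.card {x : α // P x ∧ ¬ Q x} := by
  classical
  haveI := hfin
  haveI : Finite {x : α // P x ∧ Q x} :=
    Finite.of_injective (fun y => (⟨y.1, y.2.1⟩ : {x : α // P x}))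
      (fun a b h => Subtype.ext (congrArg (fun z : {x : α // P x} => z.1) h))
  haveI : Finite {x : α // P x ∧ ¬ Q x} :=
    Finite.of_injective (fun y => (⟨y.1, y.2.1⟩ : {x : α // P x}))
      (fun a b h => Subtype.ext (congrArg (fun z : {x : α // P x} => z.1) h))
  rw [← Nat.card_sum]
  exact Nat.card_congr (((Equiv.subtypeSubtypeEquivSubtypeInter P Q).symm.sumCongr
    (Equiv.subtypeSubtypeEquivSubtypeInter P (fun x => ¬ Q x)).symm).trans
    (Equiv.sumCompl _)).symm

lemma overp_zero_k {m n k N : ℕ} (h : n < k) : overp m n k N = 0 := by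
  rw [overp_eq]
  rw [Nat.card_eq_zero]
  left
  rw [isEmpty_subtype]
  rintro p ⟨-, h2, h3, h4⟩
  have : p.2.card ≤ p.1.parts.toFinset.card := Finset.card_le_card h3
  have := Multiset.toFinset_card_le p.1.parts
  omega

lemma overp_zero_N {m n k N : ℕ} (h : m * n < N) : overp m n k N = 0 := by
  rw [overp_eq]
  rw [Nat.card_eq_zero]
  left
  rw [isEmpty_subtype]
  rintro p ⟨h1, h2, -, -⟩
  have hs := Multiset.sum_le_card_nsmul p.1.parts m h1
  rw [p.1.parts_sum, smul_eq_mul] at hs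
  have : Multiset.card p.1.parts * m ≤ n * m := Nat.mul_le_mul_right m h2
  have : n * m = m * n := Nat.mul_comm n m
  omega

lemma overp_small {m n k N : ℕ} (hm : 0 < m) (h : N < m) :
    overp m n k N = overp (m - 1) n k N := by
  rw [overp_eq, overp_eq]
  apply Nat.card_congr
  apply Equiv.subtypeEquivRight
  intro p
  unfold OCond
  constructor
  · rintro ⟨h1, h2, h3, h4⟩
    refine ⟨fun i hi => ?_, h2, h3, h4⟩
    have := Multiset.single_le_sum (fun y _ => Nat.zero_le y) i hi
    rw [p.1.parts_sum] at this
    omega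
  · rintro ⟨h1, h2, h3, h4⟩
    exact ⟨fun i hi => le_trans (h1 i hi) (by omega), h2, h3, h4⟩

section equivs

variable {m n k M : ℕ}

lemma cardA1 (hm : 0 < m) :
    Nat.card {p : Nat.Partition (M + m) × Finset ℕ //
        OCond m n k (M + m) p ∧ ¬ (m ∈ p.1.parts)} =
      Nat.card {p : Nat.Partition (M + m) × Finset ℕ // OCond (m - 1) n k (M + m) p} := by
  apply Nat.card_congr
  apply Equiv.subtypeEquivRight
  intro p
  unfold OCond
  constructor
  · rintro ⟨⟨h1, h2, h3, h4⟩, h5⟩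
    refine ⟨fun i hi => ?_, h2, h3, h4⟩
    have := h1 i hi
    have : i ≠ m := fun he => h5 (he ▸ hi)
    omega
  · rintro ⟨h1, h2, h3, h4⟩
    refine ⟨⟨fun i hi => le_trans (h1 i hi) (by omega), h2, h3, h4⟩, fun hmem => ?_⟩
    have := h1 m hmem
    omega

lemma cardB (hm : 0 < m) (hn : 0 < n) :
    Nat.card {p : Nat.Partition (M + m) × Finset ℕ //
        (OCond m n k (M + m) p ∧ m ∈ p.1.parts) ∧
          ¬ (m ∈ p.2 ∧ p.1.parts.count m = 1)} =
      Nat.card {p : Nat.Partition M × Finset ℕ // OCond m (n - 1) k M p} := by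
  classical
  apply Nat.card_congr
  refine ⟨fun x => ⟨(⟨x.1.1.parts.erase m, ?_, ?_⟩, x.1.2), ?_⟩,
    fun y => ⟨(⟨m ::ₘ y.1.1.parts, ?_, ?_⟩, y.1.2), ?_⟩, ?_, ?_⟩
  · intro i hi
    exact x.1.1.parts_pos (Multiset.mem_of_mem_erase hi)
  · have := congrArg Multiset.sum (Multiset.cons_erase x.2.1.2)
    rw [Multiset.sum_cons, x.1.1.parts_sum] at this
    omega
  · obtain ⟨⟨⟨h1, h2, h3, h4⟩, h5⟩, h6⟩ := x.2
    refine ⟨fun i hi => h1 i (Multiset.mem_of_mem_erase hi), ?_, ?_, h4⟩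
    · rw [Multiset.card_erase_of_mem h5, Nat.pred_eq_sub_one]
      have hc : 0 < Multiset.card x.1.1.parts :=
        Multiset.card_pos_iff_exists_mem.mpr ⟨m, h5⟩
      omega
    · intro a ha
      rw [Multiset.mem_toFinset]
      have hap : a ∈ x.1.1.parts := Multiset.mem_toFinset.mp (h3 ha)
      by_cases hea : a = m
      · subst hea
        have hcount : x.1.1.parts.count a ≠ 1 := fun hc => h6 ⟨ha, hc⟩
        have hcount1 : 1 ≤ x.1.1.parts.count a := Multiset.one_le_count_iff_mem.mpr hap
        rw [← Multiset.count_pos, Multiset.count_erase_self]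
        omega
      · exact (Multiset.mem_erase_of_ne hea).mpr hap
  · intro i hi
    rcases Multiset.mem_cons.mp hi with h | h
    · omega
    · exact y.1.1.parts_pos h
  · rw [Multiset.sum_cons, y.1.1.parts_sum]
    omega
  · obtain ⟨h1, h2, h3, h4⟩ := y.2
    refine ⟨⟨⟨fun i hi => ?_, ?_, ?_, h4⟩, Multiset.mem_cons_self m _⟩, ?_⟩
    · rcases Multiset.mem_cons.mp hi with h | h
      · omega
      · exact h1 i h
    · rw [Multiset.card_cons]
      omega
    · intro a ha
      rw [Multiset.mem_toFinset]
      exact Multiset.mem_cons_of_mem (Multiset.mem_toFinset.mp (h3 ha))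
    · rintro ⟨hms, hcount⟩
      have hmp : m ∈ y.1.1.parts := Multiset.mem_toFinset.mp (h3 hms)
      rw [Multiset.count_cons_self] at hcount
      have := Multiset.one_le_count_iff_mem.mpr hmp
      omega
  · intro x
    apply Subtype.ext
    apply Prod.ext
    · apply Nat.Partition.ext
      exact Multiset.cons_erase x.2.1.2
    · rfl
  · intro y
    apply Subtype.ext
    apply Prod.ext
    · apply Nat.Partition.ext
      exact Multiset.erase_cons_head m y.1.1.parts
    · rfl

lemma cardC (hm : 0 < m) (hn : 0 < n) (hk : 1 ≤ k) :
    Nat.card {p : Nat.Partition (M + m) × Finset ℕ //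
        (OCond m n k (M + m) p ∧ m ∈ p.1.parts) ∧
          (m ∈ p.2 ∧ p.1.parts.count m = 1)} =
      Nat.card {p : Nat.Partition M × Finset ℕ // OCond (m - 1) (n - 1) (k - 1) M p} := by
  classical
  apply Nat.card_congr
  refine ⟨fun x => ⟨(⟨x.1.1.parts.erase m, ?_, ?_⟩, x.1.2.erase m), ?_⟩,
    fun y => ⟨(⟨m ::ₘ y.1.1.parts, ?_, ?_⟩, insert m y.1.2), ?_⟩, ?_, ?_⟩
  · intro i hi
    exact x.1.1.parts_pos (Multiset.mem_of_mem_erase hi)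
  · have := congrArg Multiset.sum (Multiset.cons_erase x.2.1.2)
    rw [Multiset.sum_cons, x.1.1.parts_sum] at this
    omega
  · obtain ⟨⟨⟨h1, h2, h3, h4⟩, h5⟩, h6, h7⟩ := x.2
    have hnm : m ∉ x.1.1.parts.erase m := by
      rw [← Multiset.count_pos, Multiset.count_erase_self]
      omega
    refine ⟨fun i hi => ?_, ?_, ?_, ?_⟩
    · have := h1 i (Multiset.mem_of_mem_erase hi)
      have : i ≠ m := fun he => hnm (he ▸ hi)
      omega
    · rw [Multiset.card_erase_of_mem h5, Nat.pred_eq_sub_one]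
      have hc : 0 < Multiset.card x.1.1.parts :=
        Multiset.card_pos_iff_exists_mem.mpr ⟨m, h5⟩
      omega
    · intro a ha
      obtain ⟨hne, has⟩ := Finset.mem_erase.mp ha
      rw [Multiset.mem_toFinset]
      exact (Multiset.mem_erase_of_ne hne).mpr (Multiset.mem_toFinset.mp (h3 has))
    · rw [Finset.card_erase_of_mem h6, h4]
  · intro i hi
    rcases Multiset.mem_cons.mp hi with h | h
    · omega
    · exact y.1.1.parts_pos h
  · rw [Multiset.sum_cons, y.1.1.parts_sum]
    omega
  · obtain ⟨h1, h2, h3, h4⟩ := y.2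
    have hmp : m ∉ y.1.1.parts := by
      intro hmem
      have := h1 m hmem
      omega
    have hms : m ∉ y.1.2 := by
      intro hmem
      exact hmp (Multiset.mem_toFinset.mp (h3 hmem))
    refine ⟨⟨⟨fun i hi => ?_, ?_, ?_, ?_⟩, Multiset.mem_cons_self m _⟩,
      Finset.mem_insert_self m _, ?_⟩
    · rcases Multiset.mem_cons.mp hi with h | h
      · omega
      · have := h1 i h
        omega
    · rw [Multiset.card_cons]
      omega
    · intro a ha
      rw [Multiset.mem_toFinset]
      rcases Finset.mem_insert.mp ha with h | h
      · subst h
        exact Multiset.mem_cons_self a _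
      · exact Multiset.mem_cons_of_mem (Multiset.mem_toFinset.mp (h3 h))
    · rw [Finset.card_insert_of_notMem hms, h4]
      omega
    · rw [Multiset.count_cons_self, Multiset.count_eq_zero.mpr hmp]
  · intro x
    apply Subtype.ext
    apply Prod.ext
    · apply Nat.Partition.ext
      exact Multiset.cons_erase x.2.1.2
    · exact Finset.insert_erase x.2.2.1
  · intro y
    have hms : m ∉ y.1.2 := by
      intro hmem
      obtain ⟨h1, h2, h3, h4⟩ := y.2
      have := h1 m (Multiset.mem_toFinset.mp (h3 hmem))
      omega
    apply Subtype.ext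
    apply Prod.ext
    · apply Nat.Partition.ext
      exact Multiset.erase_cons_head m y.1.1.parts
    · exact Finset.erase_insert hms

lemma cardC_zero (hm : 0 < m) :
    Nat.card {p : Nat.Partition (M + m) × Finset ℕ //
        (OCond m n 0 (M + m) p ∧ m ∈ p.1.parts) ∧
          (m ∈ p.2 ∧ p.1.parts.count m = 1)} = 0 := by
  rw [Nat.card_eq_zero]
  left
  rw [isEmpty_subtype]
  rintro p ⟨⟨⟨-, -, -, h4⟩, -⟩, h6, -⟩
  rw [Finset.card_eq_zero] at h4
  rw [h4] at h6
  exact absurd h6 (Finset.notMem_empty m)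

end equivs

lemma overp_step {m n : ℕ} (hm : 0 < m) (hn : 0 < n) (k N : ℕ) :
    overp m n k N = overp (m - 1) n k N +
      (if m ≤ N then overp m (n - 1) k (N - m) else 0) +
      (if m ≤ N ∧ 1 ≤ k then overp (m - 1) (n - 1) (k - 1) (N - m) else 0) := by
  by_cases h : m ≤ N
  · obtain ⟨M, rfl⟩ : ∃ M, N = M + m := ⟨N - m, by omega⟩
    simp only [Nat.add_sub_cancel]
    rw [if_pos h]
    have hfin1 : Finite {p : Nat.Partition (M + m) × Finset ℕ // OCond m n k (M + m) p} :=
      finite_aux _ (fun p hp => hp.2.2.1)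
    have hfin2 : Finite {p : Nat.Partition (M + m) × Finset ℕ //
        OCond m n k (M + m) p ∧ m ∈ p.1.parts} :=
      finite_aux _ (fun p hp => hp.1.2.2.1)
    rw [overp_eq m n k, card_split _ (fun p => m ∈ p.1.parts) hfin1,
      card_split _ (fun p => m ∈ p.2 ∧ p.1.parts.count m = 1) hfin2,
      cardA1 hm, cardB hm hn, ← overp_eq, ← overp_eq]
    by_cases hk : 1 ≤ k
    · rw [if_pos (⟨h, hk⟩ : m ≤ M + m ∧ 1 ≤ k), cardC hm hn hk, ← overp_eq]
      ring
    · have hk0 : k = 0 := by omega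
      subst hk0
      rw [if_neg (fun hc : m ≤ M + m ∧ 1 ≤ 0 => hk hc.2), cardC_zero hm]
      ring
  · rw [if_neg h, if_neg (fun hc => h hc.1), overp_small hm (by omega)]
    ring

theorem stmt2 {R : Type*} [CommRing R] (q t : R) (m n : ℕ) (hm : 0 < m) (hn : 0 < n) :
    Oqt q t m n =
      Oqt q t (m - 1) n + q ^ m * Oqt q t m (n - 1) + t * q ^ m * Oqt q t (m - 1) (n - 1) := by
  classical
  have hmn : m * n = m * (n - 1) + m := by
    conv_lhs => rw [show n = (n - 1) + 1 by omega]
    rw [Nat.mul_succ]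
  have step1 : Oqt q t m n =
      (∑ N ∈ range (m * n + 1), ∑ k ∈ range (n + 1), (overp (m - 1) n k N : R) * t ^ k * q ^ N)
      + (∑ N ∈ range (m * n + 1), ∑ k ∈ range (n + 1),
          (if m ≤ N then (overp m (n - 1) k (N - m) : R) else 0) * t ^ k * q ^ N)
      + (∑ N ∈ range (m * n + 1), ∑ k ∈ range (n + 1),
          (if m ≤ N ∧ 1 ≤ k then (overp (m - 1) (n - 1) (k - 1) (N - m) : R) else 0)
            * t ^ k * q ^ N) := by
    simp only [Oqt]
    rw [← Finset.sum_add_distrib, ← Finset.sum_add_distrib]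
    apply Finset.sum_congr rfl
    intro N _
    rw [← Finset.sum_add_distrib, ← Finset.sum_add_distrib]
    apply Finset.sum_congr rfl
    intro k _
    rw [overp_step hm hn k N]
    push_cast [apply_ite (Nat.cast : ℕ → R)]
    ring
  rw [step1]
  congr 1
  · congr 1
    -- first summand equals Oqt q t (m-1) n
    · simp only [Oqt]
      symm
      apply Finset.sum_subset
      · apply Finset.range_subset_range.mpr
        have : (m - 1) * n ≤ m * n := Nat.mul_le_mul_right n (by omega)
        omega
      · intro N _ hN
        rw [Finset.mem_range, not_lt] at hN
        apply Finset.sum_eq_zero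
        intro k _
        rw [overp_zero_N (by omega)]
        simp
    -- second summand equals q^m * Oqt q t m (n-1)
    · rw [show m * n + 1 = m + (m * (n - 1) + 1) by omega, Finset.sum_range_add]
      have hz : ∑ N ∈ range m, ∑ k ∈ range (n + 1),
          (if m ≤ N then (overp m (n - 1) k (N - m) : R) else 0) * t ^ k * q ^ N = 0 := by
        apply Finset.sum_eq_zero
        intro N hN
        rw [Finset.mem_range] at hN
        apply Finset.sum_eq_zero
        intro k _
        rw [if_neg (by omega)]
        ring
      rw [hz, zero_add]
      simp only [Oqt]
      rw [Finset.mul_sum]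
      apply Finset.sum_congr rfl
      intro N _
      rw [Finset.mul_sum]
      have hkr : ∑ k ∈ range (n + 1),
          (if m ≤ m + N then (overp m (n - 1) k (m + N - m) : R) else 0) * t ^ k * q ^ (m + N)
          = ∑ k ∈ range (n + 1), (overp m (n - 1) k N : R) * t ^ k * q ^ (m + N) := by
        apply Finset.sum_congr rfl
        intro k _
        rw [if_pos (by omega), Nat.add_sub_cancel_left]
      rw [hkr]
      rw [show n + 1 = (n - 1 + 1) + 1 by omega, Finset.sum_range_succ]
      rw [overp_zero_k (by omega)]
      push_cast
      rw [zero_mul, zero_mul, add_zero]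
      apply Finset.sum_congr rfl
      intro k _
      rw [pow_add]
      ring
  -- third summand equals t * q^m * Oqt q t (m-1) (n-1)
  · rw [show m * n + 1 = m + (m * (n - 1) + 1) by omega, Finset.sum_range_add]
    have hz : ∑ N ∈ range m, ∑ k ∈ range (n + 1),
        (if m ≤ N ∧ 1 ≤ k then (overp (m - 1) (n - 1) (k - 1) (N - m) : R) else 0)
          * t ^ k * q ^ N = 0 := by
      apply Finset.sum_eq_zero
      intro N hN
      rw [Finset.mem_range] at hN
      apply Finset.sum_eq_zero
      intro k _
      rw [if_neg (by omega)]
      ring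
    rw [hz, zero_add]
    have hinner : ∀ N, ∑ k ∈ range (n + 1),
        (if m ≤ m + N ∧ 1 ≤ k then (overp (m - 1) (n - 1) (k - 1) (m + N - m) : R) else 0)
          * t ^ k * q ^ (m + N)
        = ∑ k ∈ range n, (overp (m - 1) (n - 1) k N : R) * t ^ (k + 1) * q ^ (m + N) := by
      intro N
      rw [Finset.sum_range_succ' (fun k =>
        (if m ≤ m + N ∧ 1 ≤ k then (overp (m - 1) (n - 1) (k - 1) (m + N - m) : R) else 0)
          * t ^ k * q ^ (m + N)) n]
      rw [if_neg (by omega), zero_mul, zero_mul, add_zero]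
      apply Finset.sum_congr rfl
      intro k _
      rw [if_pos ⟨by omega, by omega⟩, Nat.add_sub_cancel_left, Nat.add_sub_cancel]
    have houter : ∑ N ∈ range (m * (n - 1) + 1), ∑ k ∈ range (n + 1),
        (if m ≤ m + N ∧ 1 ≤ k then (overp (m - 1) (n - 1) (k - 1) (m + N - m) : R) else 0)
          * t ^ k * q ^ (m + N)
        = ∑ N ∈ range (m * (n - 1) + 1), ∑ k ∈ range n,
          (overp (m - 1) (n - 1) k N : R) * t ^ (k + 1) * q ^ (m + N) := by
      apply Finset.sum_congr rfl
      intro N _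
      exact hinner N
    rw [houter]
    have hterm : ∀ N, ∑ k ∈ range n, (overp (m - 1) (n - 1) k N : R) * t ^ (k + 1) * q ^ (m + N)
        = t * q ^ m * ∑ k ∈ range n, (overp (m - 1) (n - 1) k N : R) * t ^ k * q ^ N := by
      intro N
      rw [Finset.mul_sum]
      apply Finset.sum_congr rfl
      intro k _
      rw [pow_add, pow_succ]
      ring
    rw [Finset.sum_congr rfl (fun N _ => hterm N), ← Finset.mul_sum]
    simp only [Oqt]
    rw [show (n - 1) + 1 = n by omega]
    congr 1
    symm
    apply Finset.sum_subset
    · apply Finset.range_subset_range.mpr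
      have : (m - 1) * (n - 1) ≤ m * (n - 1) := Nat.mul_le_mul_right (n - 1) (by omega)
      omega
    · intro N _ hN
      rw [Finset.mem_range, not_lt] at hN
      apply Finset.sum_eq_zero
      intro k _
      rw [overp_zero_N (by omega)]
      simp
end

section
/- The over-(q,t)-binomial coefficient for an m×n rectangle is symmetric: the number of overpartitions of N with k overlined parts, largest part ≤ m and at most n parts equals the number of overpartitions of N with k overlined parts, largest part ≤ n and at most m parts. -/
open Finset Polynomial

namespace OverSym

open Multiset

/-- `fs s i` = number of parts of `s` which are `≥ i`. -/
def fs (s : Multiset ℕ) (i : ℕ) : ℕ := s.countP (fun j => i ≤ j)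

/-- Conjugate multiset of parts. -/
def mconj (s : Multiset ℕ) : Multiset ℕ :=
  (((Finset.Icc 1 s.sup).val.map (fun i => fs s i)).filter (fun v => 0 < v))

lemma fs_anti (s : Multiset ℕ) {i i' : ℕ} (h : i ≤ i') : fs s i' ≤ fs s i := by
  induction s using Multiset.induction_on with
  | empty => simp [fs]
  | cons a t ih =>
    simp only [fs, countP_cons] at *
    split_ifs with h1 h2 h2 <;> omega

lemma fs_le_card (s : Multiset ℕ) (i : ℕ) : fs s i ≤ Multiset.card s :=
  countP_le_card _ _

lemma fs_succ (s : Multiset ℕ) (i : ℕ) : fs s i = fs s (i + 1) + s.count i := by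
  induction s using Multiset.induction_on with
  | empty => simp [fs]
  | cons a t ih =>
    simp only [fs, countP_cons, count_cons] at *
    split_ifs with h1 h2 h3 <;> omega

lemma one_le_fs_of_mem {s : Multiset ℕ} {i : ℕ} (h : i ∈ s) : 1 ≤ fs s i :=
  countP_pos_of_mem h le_rfl

lemma le_sup_of_one_le_fs {s : Multiset ℕ} {i : ℕ} (h : 1 ≤ fs s i) : i ≤ s.sup := by
  obtain ⟨a, ha, hia⟩ := countP_pos.mp (Nat.lt_of_lt_of_le Nat.zero_lt_one h)
  exact le_trans hia (Multiset.le_sup ha)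

lemma fs_mconj (s : Multiset ℕ) {j : ℕ} (hj : 1 ≤ j) :
    fs (mconj s) j = ((Finset.Icc 1 s.sup).filter (fun i => j ≤ fs s i)).card := by
  rw [show fs (mconj s) j = Multiset.countP (fun v => j ≤ v) (mconj s) from rfl]
  unfold mconj
  rw [Multiset.countP_filter, Multiset.countP_map]
  have heq : Multiset.filter (fun a => j ≤ fs s a ∧ 0 < fs s a) (Finset.Icc 1 s.sup).val
      = Multiset.filter (fun a => j ≤ fs s a) (Finset.Icc 1 s.sup).val := by
    apply Multiset.filter_congr
    intro i _
    constructor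
    · rintro ⟨h1, _⟩; exact h1
    · intro h1; exact ⟨h1, lt_of_lt_of_le (Nat.lt_of_lt_of_le Nat.zero_lt_one hj) h1⟩
  rw [heq]
  rfl

/-- The Galois property of conjugation. -/
lemma galois (s : Multiset ℕ) {i j : ℕ} (hi : 1 ≤ i) (hj : 1 ≤ j) :
    i ≤ fs (mconj s) j ↔ j ≤ fs s i := by
  rw [fs_mconj s hj]
  constructor
  · intro h
    by_contra hcon
    push_neg at hcon
    have hsub : (Finset.Icc 1 s.sup).filter (fun i' => j ≤ fs s i') ⊆ Finset.Icc 1 (i - 1) := by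
      intro i' hi'
      simp only [Finset.mem_filter, Finset.mem_Icc] at hi' ⊢
      refine ⟨hi'.1.1, ?_⟩
      by_contra hgt
      push_neg at hgt
      have : fs s i' ≤ fs s i := fs_anti s (by omega)
      omega
    have := Finset.card_le_card hsub
    rw [Nat.card_Icc] at this
    omega
  · intro h
    have hiM : i ≤ s.sup := le_sup_of_one_le_fs (le_trans hj h)
    have hsub : Finset.Icc 1 i ⊆ (Finset.Icc 1 s.sup).filter (fun i' => j ≤ fs s i') := by
      intro i' hi'
      simp only [Finset.mem_Icc] at hi'
      simp only [Finset.mem_filter, Finset.mem_Icc]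
      exact ⟨⟨hi'.1, le_trans hi'.2 hiM⟩, le_trans h (fs_anti s hi'.2)⟩
    have := Finset.card_le_card hsub
    rw [Nat.card_Icc] at this
    omega

lemma pos_of_mem_mconj {s : Multiset ℕ} {v : ℕ} (h : v ∈ mconj s) : 0 < v :=
  (Multiset.mem_filter.mp h).2

lemma mem_mconj_of_mem {s : Multiset ℕ} {i : ℕ} (hpos : ∀ j ∈ s, 0 < j) (h : i ∈ s) :
    fs s i ∈ mconj s := by
  refine Multiset.mem_filter.mpr ⟨?_, one_le_fs_of_mem h⟩
  refine Multiset.mem_map.mpr ⟨i, ?_, rfl⟩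
  rw [Finset.mem_val, Finset.mem_Icc]
  exact ⟨hpos i h, Multiset.le_sup h⟩

lemma fs_mconj_fs {s : Multiset ℕ} {i : ℕ} (hpos : ∀ j ∈ s, 0 < j) (h : i ∈ s) :
    fs (mconj s) (fs s i) = i := by
  have hi1 : 1 ≤ i := hpos i h
  have hfi : 1 ≤ fs s i := one_le_fs_of_mem h
  have hcount : 1 ≤ s.count i := Multiset.one_le_count_iff_mem.mpr h
  have hkey : ∀ k, 1 ≤ k → (k ≤ fs (mconj s) (fs s i) ↔ k ≤ i) := by
    intro k hk
    rw [galois s hk hfi]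
    constructor
    · intro hle
      by_contra hgt
      push_neg at hgt
      have h1 : fs s k ≤ fs s (i + 1) := fs_anti s (by omega)
      have h2 := fs_succ s i
      omega
    · intro hle
      exact fs_anti s hle
  have h1 : 1 ≤ fs (mconj s) (fs s i) := (hkey 1 le_rfl).mpr hi1
  have h2 : fs (mconj s) (fs s i) ≤ i := (hkey _ h1).mp le_rfl
  have h3 : i ≤ fs (mconj s) (fs s i) := (hkey i hi1).mpr le_rfl
  omega

lemma card_mconj_le (s : Multiset ℕ) : Multiset.card (mconj s) ≤ s.sup := by
  calc Multiset.card (mconj s) ≤ Multiset.card ((Finset.Icc 1 s.sup).val.map (fun i => fs s i)) :=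
        Multiset.card_le_card (Multiset.filter_le _ _)
    _ = (Finset.Icc 1 s.sup).card := by rw [Multiset.card_map]; rfl
    _ = s.sup := by rw [Nat.card_Icc]; omega

lemma mem_mconj_le_card {s : Multiset ℕ} {v : ℕ} (h : v ∈ mconj s) :
    v ≤ Multiset.card s := by
  obtain ⟨i, _, rfl⟩ := Multiset.mem_map.mp (Multiset.mem_filter.mp h).1
  exact fs_le_card s i

lemma sum_fs (s : Multiset ℕ) {B : ℕ} (hB : ∀ j ∈ s, j ≤ B) :
    ∑ i ∈ Finset.Icc 1 B, fs s i = s.sum := by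
  induction s using Multiset.induction_on with
  | empty => simp [fs]
  | cons a t ih =>
    have haB : a ≤ B := hB a (Multiset.mem_cons_self a t)
    have ht : ∀ j ∈ t, j ≤ B := fun j hj => hB j (Multiset.mem_cons_of_mem hj)
    have hstep : ∀ i, fs (a ::ₘ t) i = fs t i + if i ≤ a then 1 else 0 :=
      fun i => Multiset.countP_cons _ _ _
    simp only [hstep, Multiset.sum_cons]
    rw [Finset.sum_add_distrib, ih ht]
    have hsum : ∑ i ∈ Finset.Icc 1 B, (if i ≤ a then 1 else 0) = a := by
      have hfe : (Finset.Icc 1 B).filter (fun i => i ≤ a) = Finset.Icc 1 a := by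
        ext i
        simp only [Finset.mem_filter, Finset.mem_Icc]
        omega
      rw [← Finset.card_filter, hfe, Nat.card_Icc]
      omega
    omega

lemma sum_mconj (s : Multiset ℕ) : (mconj s).sum = s.sum := by
  unfold mconj
  have h0 : ((((Finset.Icc 1 s.sup).val.map (fun i => fs s i))).filter (fun v => ¬ 0 < v)).sum
      = 0 := by
    apply Multiset.sum_eq_zero
    intro x hx
    have := (Multiset.mem_filter.mp hx).2
    omega
  have hsplit := Multiset.sum_filter_add_sum_filter_not
    (s := ((Finset.Icc 1 s.sup).val.map (fun i => fs s i))) (fun v => 0 < v)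
  rw [h0, add_zero] at hsplit
  rw [hsplit]
  have : (((Finset.Icc 1 s.sup).val.map (fun i => fs s i))).sum
      = ∑ i ∈ Finset.Icc 1 s.sup, fs s i := rfl
  rw [this]
  exact sum_fs s (fun j hj => Multiset.le_sup hj)

lemma fs_mconj_mconj {s : Multiset ℕ} (_hpos : ∀ j ∈ s, 0 < j) {j : ℕ} (hj : 1 ≤ j) :
    fs (mconj (mconj s)) j = fs s j := by
  have hkey : ∀ i, 1 ≤ i → (i ≤ fs (mconj (mconj s)) j ↔ i ≤ fs s j) := by
    intro i hi
    rw [galois (mconj s) hi hj, galois s hj hi]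
  rcases Nat.eq_zero_or_pos (fs (mconj (mconj s)) j) with h | h
  · rcases Nat.eq_zero_or_pos (fs s j) with h' | h'
    · omega
    · have := (hkey _ h').mpr le_rfl; omega
  · have h2 := (hkey _ h).mp le_rfl
    rcases Nat.eq_zero_or_pos (fs s j) with h' | h'
    · omega
    · have := (hkey _ h').mpr le_rfl; omega

lemma mconj_mconj {s : Multiset ℕ} (hpos : ∀ j ∈ s, 0 < j) : mconj (mconj s) = s := by
  ext a
  rcases Nat.eq_zero_or_pos a with rfl | ha
  · rw [Multiset.count_eq_zero_of_notMem, Multiset.count_eq_zero_of_notMem]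
    · intro h; exact absurd (hpos 0 h) (lt_irrefl 0)
    · intro h; exact absurd (pos_of_mem_mconj h) (lt_irrefl 0)
  · have e1 := fs_succ (mconj (mconj s)) a
    have e2 := fs_succ s a
    have h1 := fs_mconj_mconj hpos ha
    have h2 := fs_mconj_mconj hpos (show 1 ≤ a + 1 by omega)
    have l1 := fs_le_card (mconj (mconj s)) (a+1)
    omega

/-- Conjugate of a partition. -/
def conjP {N : ℕ} (p : Nat.Partition N) : Nat.Partition N where
  parts := mconj p.parts
  parts_pos h := pos_of_mem_mconj h
  parts_sum := by rw [sum_mconj]; exact p.parts_sum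

/-- The conjugation map on overpartitions. -/
def F {N : ℕ} (p : Nat.Partition N × Finset ℕ) : Nat.Partition N × Finset ℕ :=
  (conjP p.1, p.2.image (fun i => fs p.1.parts i))

lemma F_cond {m n k N : ℕ} {p : Nat.Partition N × Finset ℕ}
    (h : (∀ i ∈ p.1.parts, i ≤ m) ∧ Multiset.card p.1.parts ≤ n ∧
      p.2 ⊆ p.1.parts.toFinset ∧ p.2.card = k) :
    (∀ i ∈ (F p).1.parts, i ≤ n) ∧ Multiset.card (F p).1.parts ≤ m ∧
      (F p).2 ⊆ (F p).1.parts.toFinset ∧ (F p).2.card = k := by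
  obtain ⟨h1, h2, h3, h4⟩ := h
  have hpos : ∀ j ∈ p.1.parts, 0 < j := fun j hj => p.1.parts_pos hj
  have hmemS : ∀ i ∈ p.2, i ∈ p.1.parts := fun i hi => Multiset.mem_toFinset.mp (h3 hi)
  refine ⟨?_, ?_, ?_, ?_⟩
  · intro v hv
    exact le_trans (mem_mconj_le_card hv) h2
  · exact le_trans (card_mconj_le p.1.parts) (Multiset.sup_le.mpr h1)
  · intro v hv
    obtain ⟨i, hi, rfl⟩ := Finset.mem_image.mp hv
    exact Multiset.mem_toFinset.mpr (mem_mconj_of_mem hpos (hmemS i hi))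
  · show (p.2.image (fun i => fs p.1.parts i)).card = k
    rw [Finset.card_image_of_injOn, h4]
    intro a ha b hb hab
    calc a = fs (mconj p.1.parts) (fs p.1.parts a) :=
          (fs_mconj_fs hpos (hmemS a (Finset.mem_coe.mp ha))).symm
      _ = fs (mconj p.1.parts) (fs p.1.parts b) := congrArg _ hab
      _ = b := fs_mconj_fs hpos (hmemS b (Finset.mem_coe.mp hb))

lemma F_invol {N : ℕ} (p : Nat.Partition N × Finset ℕ)
    (h3 : p.2 ⊆ p.1.parts.toFinset) : F (F p) = p := by
  have hpos : ∀ j ∈ p.1.parts, 0 < j := fun j hj => p.1.parts_pos hj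
  have hmemS : ∀ i ∈ p.2, i ∈ p.1.parts := fun i hi => Multiset.mem_toFinset.mp (h3 hi)
  have h1 : (F (F p)).1 = p.1 := Nat.Partition.ext (mconj_mconj hpos)
  have h2 : (F (F p)).2 = p.2 := by
    show (p.2.image (fun i => fs p.1.parts i)).image (fun v => fs (mconj p.1.parts) v) = p.2
    rw [Finset.image_image]
    have hcongr : p.2.image ((fun v => fs (mconj p.1.parts) v) ∘ (fun i => fs p.1.parts i))
        = p.2.image id := by
      apply Finset.image_congr
      intro a ha
      exact fs_mconj_fs hpos (hmemS a ha)
    rw [hcongr, Finset.image_id]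
  exact Prod.ext h1 h2

end OverSym

theorem stmt3 (m n k N : ℕ) : overp m n k N = overp n m k N := by
  unfold overp
  apply Nat.card_congr
  exact {
    toFun := fun x => ⟨OverSym.F x.1, OverSym.F_cond x.2⟩
    invFun := fun x => ⟨OverSym.F x.1, OverSym.F_cond x.2⟩
    left_inv := fun x => Subtype.ext (OverSym.F_invol x.1 x.2.2.2.1)
    right_inv := fun x => Subtype.ext (OverSym.F_invol x.1 x.2.2.2.1) }
end

section
/- For |q| < 1 (or as formal power series), the Lebesgue identity holds: ∑_{k≥0} (−tq; q)_k q^{k(k+1)/2} / (q;q)_k = (−t q^2; q^2)_∞ / (q; q^2)_∞. -/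
open Finset

namespace Leb

def T (n : ℕ) : ℕ := n * (n + 1) / 2

lemma T_two (n : ℕ) : 2 * T n = n * (n + 1) := by
  rw [T, Nat.mul_div_cancel' ((Nat.even_mul_succ_self n).two_dvd)]

lemma T_succ (n : ℕ) : T (n + 1) = T n + (n + 1) := by
  have h1 := T_two n; have h2 := T_two (n+1)
  have h3 : (n+1) * (n+1+1) = n * (n+1) + 2*(n+1) := by ring
  omega

lemma T_add (j m : ℕ) : T (j + m) = T j + T m + j * m := by
  have h1 := T_two j; have h2 := T_two m; have h3 := T_two (j+m)
  have h4 : (j+m) * (j+m+1) = j*(j+1) + m*(m+1) + 2*(j*m) := by ring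
  omega

lemma le_T (n : ℕ) : n ≤ T n := by
  have := T_two n; nlinarith

/-- Weierstrass product inequality. -/
lemma one_sub_sum_le_prod (s : Finset ℕ) (a : ℕ → ℝ) (h0 : ∀ i, 0 ≤ a i) (h1 : ∀ i, a i ≤ 1) :
    1 - ∑ i ∈ s, a i ≤ ∏ i ∈ s, (1 - a i) := by
  induction s using Finset.induction with
  | empty => simp
  | @insert x s hx ih =>
    rw [Finset.prod_insert hx, Finset.sum_insert hx]
    have hp : 0 ≤ ∏ i ∈ s, (1 - a i) := Finset.prod_nonneg fun i _ => by linarith [h1 i]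
    have hs : (0:ℝ) ≤ ∑ i ∈ s, a i := Finset.sum_nonneg fun i _ => h0 i
    nlinarith [h0 x, h1 x]

end Leb

namespace Leb
open Filter

lemma P_ne_zero {q : ℂ} (hq : ‖q‖ < 1) (k : ℕ) : (∏ i ∈ range k, (1 - q^(i+1))) ≠ 0 := by
  apply Finset.prod_ne_zero_iff.2
  intro i _
  intro h
  have h2 : q ^ (i+1) = 1 := by linear_combination -h
  have : ‖q ^ (i+1)‖ < 1 := by
    rw [norm_pow]
    exact pow_lt_one₀ (norm_nonneg q) hq (Nat.succ_ne_zero i)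
  rw [h2] at this; simp at this

lemma P_lower {q : ℂ} (hq : ‖q‖ < 1) :
    ∃ c : ℝ, 0 < c ∧ ∀ k, c ≤ ‖∏ i ∈ range k, (1 - q^(i+1))‖ := by
  set r := ‖q‖ with hr
  have hr0 : 0 ≤ r := norm_nonneg q
  have hrpow : ∀ i : ℕ, r ^ (i+1) < 1 := fun i => pow_lt_one₀ hr0 hq (Nat.succ_ne_zero i)
  have hrpow0 : ∀ i : ℕ, 0 ≤ r ^ (i+1) := fun i => pow_nonneg hr0 _
  -- step A
  have stepA : ∀ k, ∏ i ∈ range k, (1 - r^(i+1)) ≤ ‖∏ i ∈ range k, (1 - q^(i+1))‖ := by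
    intro k
    rw [norm_prod]
    apply Finset.prod_le_prod (fun i _ => by linarith [hrpow i])
    intro i _
    calc 1 - r^(i+1) = ‖(1:ℂ)‖ - ‖q^(i+1)‖ := by simp [hr]
    _ ≤ ‖1 - q^(i+1)‖ := norm_sub_norm_le _ _
  -- choose N
  obtain ⟨N, hN⟩ : ∃ N : ℕ, r ^ (N+1) ≤ (1 - r)/2 := by
    have := (tendsto_pow_atTop_nhds_zero_of_lt_one hr0 hq).eventually_le_const
      (show (0:ℝ) < (1-r)/2 by linarith)
    obtain ⟨N, hN⟩ := this.exists
    exact ⟨N, by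
      calc r ^ (N+1) ≤ r ^ N := pow_le_pow_of_le_one hr0 hq.le (Nat.le_succ N)
      _ ≤ (1-r)/2 := hN⟩
  have tail : ∀ k, N ≤ k → ∑ i ∈ Finset.Ico N k, r^(i+1) ≤ 1/2 := by
    intro k hk
    rw [Finset.sum_Ico_eq_sum_range]
    have h1 : ∀ j ∈ range (k - N), r ^ (N + j + 1) ≤ r^(N+1) * r^j := by
      intro j _
      rw [← pow_add]
      apply pow_le_pow_of_le_one hr0 hq.le
      omega
    calc ∑ j ∈ range (k-N), r^(N+j+1) ≤ ∑ j ∈ range (k-N), r^(N+1) * r^j :=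
          Finset.sum_le_sum h1
    _ = r^(N+1) * ∑ j ∈ range (k-N), r^j := by rw [Finset.mul_sum]
    _ ≤ r^(N+1) * (1-r)⁻¹ := by
          apply mul_le_mul_of_nonneg_left _ (hrpow0 N)
          calc ∑ j ∈ range (k-N), r^j ≤ ∑' j : ℕ, r^j :=
                Summable.sum_le_tsum _ (fun i _ => pow_nonneg hr0 i) (summable_geometric_of_lt_one hr0 hq)
          _ = (1-r)⁻¹ := tsum_geometric_of_lt_one hr0 hq
    _ ≤ (1-r)/2 * (1-r)⁻¹ := by
          exact mul_le_mul_of_nonneg_right hN (inv_nonneg.2 (by linarith))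
    _ ≤ 1/2 := by
          rw [div_mul_eq_mul_div, mul_inv_cancel₀ (show (1:ℝ)-r ≠ 0 by intro h; rw [show r = 1 by linarith] at hq; linarith)]
  set C := ∏ i ∈ range N, (1 - r^(i+1)) with hC
  have hCpos : 0 < C := Finset.prod_pos (fun i _ => by linarith [hrpow i])
  refine ⟨C * (1/2), by positivity, fun k => ?_⟩
  refine le_trans ?_ (stepA k)
  rcases le_or_gt k N with hk | hk
  · have : ∏ i ∈ range N, (1 - r^(i+1)) ≤ ∏ i ∈ range k, (1 - r^(i+1)) := by
      rw [← Finset.prod_range_mul_prod_Ico _ hk]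
      have h2 : ∏ i ∈ Finset.Ico k N, (1 - r^(i+1)) ≤ 1 :=
        Finset.prod_le_one (fun i _ => by linarith [hrpow i]) (fun i _ => by linarith [hrpow0 i])
      have h3 : (0:ℝ) ≤ ∏ i ∈ range k, (1 - r^(i+1)) :=
        Finset.prod_nonneg (fun i _ => sub_nonneg.2 (hrpow i).le)
      nlinarith
    nlinarith
  · rw [← Finset.prod_range_mul_prod_Ico _ hk.le]
    have h2 : (1:ℝ)/2 ≤ ∏ i ∈ Finset.Ico N k, (1 - r^(i+1)) := by
      have := one_sub_sum_le_prod (Finset.Ico N k) (fun i => r^(i+1))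
        (fun i => hrpow0 i) (fun i => (hrpow i).le)
      have := tail k hk.le
      linarith
    nlinarith

end Leb

namespace Leb
open Filter

lemma summable_aux {a b : ℝ} (ha : 0 ≤ a) (hb0 : 0 ≤ b) (hb : b < 1) :
    Summable (fun m : ℕ => a ^ m * b ^ (T m)) := by
  apply summable_of_ratio_norm_eventually_le (r := 1/2) (by norm_num)
  have h0 : Tendsto (fun m : ℕ => a * b ^ (m+1)) atTop (nhds 0) := by
    have := (tendsto_pow_atTop_nhds_zero_of_lt_one hb0 hb).const_mul a
    simp only [mul_zero] at this
    exact this.comp (tendsto_add_atTop_nat 1)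
  filter_upwards [h0.eventually_le_const (show (0:ℝ) < 1/2 by norm_num)] with m hm
  have he : a ^ (m+1) * b ^ (T (m+1)) = (a^m * b^(T m)) * (a * b^(m+1)) := by
    rw [T_succ, pow_add, pow_succ]; ring
  rw [he]
  rw [norm_mul]
  have h1 : ‖a * b^(m+1)‖ ≤ 1/2 := by
    rw [Real.norm_eq_abs, abs_of_nonneg (by positivity)]; exact hm
  calc ‖a^m * b^(T m)‖ * ‖a * b^(m+1)‖ ≤ ‖a^m * b^(T m)‖ * (1/2) := by
        apply mul_le_mul_of_nonneg_left h1 (norm_nonneg _)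
  _ = 1/2 * ‖a^m * b^(T m)‖ := by ring

lemma euler_summable {q : ℂ} (hq : ‖q‖ < 1) (x : ℂ) :
    Summable (fun m : ℕ => x ^ m * q ^ (T m) / ∏ i ∈ range m, (1 - q^(i+1))) := by
  obtain ⟨c, hc, hcb⟩ := P_lower hq
  apply Summable.of_norm_bounded (g := fun m => c⁻¹ * (‖x‖ ^ m * ‖q‖ ^ (T m)))
    (((summable_aux (norm_nonneg x) (norm_nonneg q) hq)).mul_left c⁻¹)
  intro m
  rw [norm_div, norm_mul, norm_pow, norm_pow]
  rw [div_le_iff₀ (lt_of_lt_of_le hc (hcb m))]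
  calc ‖x‖^m * ‖q‖^(T m) = 1 * (‖x‖^m * ‖q‖^(T m)) := (one_mul _).symm
  _ ≤ (c⁻¹ * ‖∏ i ∈ range m, (1 - q^(i+1))‖) * (‖x‖^m * ‖q‖^(T m)) := by
      apply mul_le_mul_of_nonneg_right _ (by positivity)
      rw [← inv_mul_cancel₀ (ne_of_gt hc)]
      exact mul_le_mul_of_nonneg_left (hcb m) (inv_nonneg.2 hc.le)
  _ = c⁻¹ * (‖x‖^m * ‖q‖^(T m)) * ‖∏ i ∈ range m, (1 - q^(i+1))‖ := by ring

end Leb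

namespace Leb
open Filter Topology

noncomputable def Ef (q x : ℂ) (m : ℕ) : ℂ := x^m * q^(T m) / ∏ i ∈ range m, (1 - q^(i+1))

noncomputable def E (q x : ℂ) : ℂ := ∑' m, Ef q x m

lemma one_add_ne {z : ℂ} (h : ‖z‖ < 1) : (1 : ℂ) + z ≠ 0 := by
  intro h0
  have : z = -1 := by linear_combination h0
  rw [this] at h; simp at h

lemma one_sub_pow_ne {q : ℂ} (hq : ‖q‖ < 1) (i : ℕ) : (1:ℂ) - q^(i+1) ≠ 0 := by
  have : ‖-q^(i+1)‖ < 1 := by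
    rw [norm_neg, norm_pow]; exact pow_lt_one₀ (norm_nonneg q) hq (Nat.succ_ne_zero i)
  have := one_add_ne this
  intro h; apply this; linear_combination h

lemma Ef_summable {q : ℂ} (hq : ‖q‖ < 1) (x : ℂ) : Summable (Ef q x) :=
  euler_summable hq x

lemma Ef_zero (q x : ℂ) : Ef q x 0 = 1 := by simp [Ef, T]

lemma E_feq {q : ℂ} (hq : ‖q‖ < 1) (x : ℂ) : E q x = (1 + x*q) * E q (x*q) := by
  have h1 := Ef_summable hq x
  have h2 := Ef_summable hq (x*q)
  have key : ∀ m, Ef q x (m+1) - Ef q (x*q) (m+1) = (x*q) * Ef q (x*q) m := by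
    intro m
    have expand : x^(m+1) * q^(T m + (m+1)) - (x*q)^(m+1) * q^(T m + (m+1)) =
        (x*q * ((x*q)^m * q^(T m))) * (1 - q^(m+1)) := by
      rw [pow_add, mul_pow]; ring
    simp only [Ef, prod_range_succ, T_succ]
    rw [div_sub_div_same, expand, mul_div_mul_right _ _ (one_sub_pow_ne hq m), mul_div_assoc]
  have hd : Summable (fun m => Ef q x m - Ef q (x*q) m) := h1.sub h2
  have e1 : E q x - E q (x*q) = ∑' m, (Ef q x m - Ef q (x*q) m) := (Summable.tsum_sub h1 h2).symm
  rw [Summable.tsum_eq_zero_add hd] at e1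
  simp only [key, sub_self] at e1
  rw [Ef_zero, Ef_zero] at e1 <;> try skip
  have e2 : E q x - E q (x*q) = (x*q) * E q (x*q) := by
    rw [e1, tsum_mul_left]
    simp [E]
  linear_combination e2

lemma E_iterate {q : ℂ} (hq : ‖q‖ < 1) :
    ∀ (n : ℕ) (x : ℂ), E q x = (∏ i ∈ range n, (1 + x * q^(i+1))) * E q (x * q^n) := by
  intro n
  induction n with
  | zero => intro x; simp
  | succ n ih =>
    intro x
    rw [E_feq hq x, ih (x*q)]
    rw [prod_range_succ' (fun i => 1 + x * q^(i+1)) n]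
    have h1 : ∀ i, 1 + x*q*q^(i+1) = 1 + x * q^(i+1+1) := by intro i; ring
    have h2 : x*q*q^n = x * q^(n+1) := by ring
    rw [Finset.prod_congr rfl (fun i _ => h1 i), h2]
    ring

lemma E_bound {q : ℂ} (hq : ‖q‖ < 1) :
    ∃ K : ℝ, 0 ≤ K ∧ ∀ y : ℂ, ‖y‖ ≤ 1 → ‖E q y - 1‖ ≤ K * ‖y‖ := by
  obtain ⟨c, hc, hcb⟩ := P_lower hq
  have h1q : (0:ℝ) < 1 - ‖q‖ := by linarith
  refine ⟨c⁻¹ * (1 - ‖q‖)⁻¹, by positivity, fun y hy => ?_⟩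
  have hsum := Ef_summable hq y
  have e1 : E q y - 1 = ∑' m, Ef q y (m+1) := by
    rw [E, Summable.tsum_eq_zero_add hsum, Ef_zero]; ring
  have hb : ∀ m : ℕ, ‖Ef q y (m+1)‖ ≤ c⁻¹ * ‖y‖ * ‖q‖^(m+1) := by
    intro m
    rw [Ef, norm_div, norm_mul, norm_pow, norm_pow]
    rw [div_le_iff₀ (lt_of_lt_of_le hc (hcb (m+1)))]
    have b1 : ‖y‖^(m+1) ≤ ‖y‖ := pow_le_of_le_one (norm_nonneg y) hy (Nat.succ_ne_zero m)
    have b2 : ‖q‖^(T (m+1)) ≤ ‖q‖^(m+1) :=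
      pow_le_pow_of_le_one (norm_nonneg q) hq.le (le_T (m+1))
    have b3 : (1:ℝ) ≤ c⁻¹ * ‖∏ i ∈ range (m+1), (1 - q^(i+1))‖ := by
      rw [← inv_mul_cancel₀ (ne_of_gt hc)]
      exact mul_le_mul_of_nonneg_left (hcb (m+1)) (inv_nonneg.2 hc.le)
    calc ‖y‖^(m+1) * ‖q‖^(T (m+1)) ≤ ‖y‖ * ‖q‖^(m+1) := by
          apply mul_le_mul b1 b2 (by positivity) (norm_nonneg y)
    _ = 1 * (‖y‖ * ‖q‖^(m+1)) := by ring
    _ ≤ (c⁻¹ * ‖∏ i ∈ range (m+1), (1 - q^(i+1))‖) * (‖y‖ * ‖q‖^(m+1)) :=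
          mul_le_mul_of_nonneg_right b3 (by positivity)
    _ = c⁻¹ * ‖y‖ * ‖q‖^(m+1) * ‖∏ i ∈ range (m+1), (1 - q^(i+1))‖ := by ring
  have hgs : Summable (fun m : ℕ => c⁻¹ * ‖y‖ * ‖q‖^(m+1)) := by
    have : Summable (fun m : ℕ => ‖q‖^(m+1)) := by
      simp only [pow_succ]
      exact (summable_geometric_of_lt_one (norm_nonneg q) hq).mul_right _
    exact this.mul_left _
  have hns : Summable (fun m => ‖Ef q y (m+1)‖) :=
    Summable.of_nonneg_of_le (fun m => norm_nonneg _) hb hgs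
  calc ‖E q y - 1‖ = ‖∑' m, Ef q y (m+1)‖ := by rw [e1]
  _ ≤ ∑' m, ‖Ef q y (m+1)‖ := norm_tsum_le_tsum_norm hns
  _ ≤ ∑' m : ℕ, c⁻¹ * ‖y‖ * ‖q‖^(m+1) := Summable.tsum_le_tsum hb hns hgs
  _ = c⁻¹ * ‖y‖ * ∑' m : ℕ, ‖q‖^(m+1) := tsum_mul_left
  _ ≤ c⁻¹ * ‖y‖ * ((1-‖q‖)⁻¹) := by
        apply mul_le_mul_of_nonneg_left _ (by positivity)
        have e2 : ∑' m : ℕ, ‖q‖^(m+1) = ‖q‖ * (1-‖q‖)⁻¹ := by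
          simp only [pow_succ']
          rw [tsum_mul_left, tsum_geometric_of_lt_one (norm_nonneg q) hq]
        rw [e2]
        calc ‖q‖ * (1-‖q‖)⁻¹ ≤ 1 * (1-‖q‖)⁻¹ :=
              mul_le_mul_of_nonneg_right hq.le (by positivity)
        _ = (1-‖q‖)⁻¹ := one_mul _
  _ = c⁻¹ * (1-‖q‖)⁻¹ * ‖y‖ := by ring

lemma E_tendsto_one {q : ℂ} (hq : ‖q‖ < 1) (x : ℂ) :
    Tendsto (fun n => E q (x * q^n)) atTop (𝓝 1) := by
  obtain ⟨K, hK, hKb⟩ := E_bound hq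
  have h0 : Tendsto (fun n : ℕ => ‖x‖ * ‖q‖^n) atTop (𝓝 0) := by
    have := (tendsto_pow_atTop_nhds_zero_of_lt_one (norm_nonneg q) hq).const_mul ‖x‖
    simpa using this
  have h0K : Tendsto (fun n : ℕ => K * (‖x‖ * ‖q‖^n)) atTop (𝓝 0) := by
    have := h0.const_mul K; simpa using this
  rw [tendsto_iff_norm_sub_tendsto_zero]
  apply squeeze_zero_norm' _ h0K
  filter_upwards [h0.eventually_le_const (by norm_num : (0:ℝ) < 1)] with n hn
  have hxn : ‖x * q^n‖ ≤ 1 := by rw [norm_mul, norm_pow]; exact hn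
  have := hKb (x * q^n) hxn
  rw [norm_norm]
  calc ‖E q (x*q^n) - 1‖ ≤ K * ‖x * q^n‖ := this
  _ = K * (‖x‖ * ‖q‖^n) := by rw [norm_mul, norm_pow]

lemma mult_one_add (f : ℕ → ℂ) (hf : Summable fun n => ‖f n‖) :
    Multipliable (fun n => 1 + f n) := by
  by_cases h : ∀ n, 1 + f n ≠ 0
  · refine Complex.multipliable_of_summable_log ?_
    apply Summable.of_norm_bounded_eventually_nat (g := fun n => 3/2 * ‖f n‖) (hf.mul_left _)
    have h0 : Tendsto (fun n => ‖f n‖) atTop (𝓝 0) := hf.tendsto_atTop_zero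
    filter_upwards [h0.eventually_le_const (by norm_num : (0:ℝ) < 1/2)] with n hn
    exact Complex.norm_log_one_add_half_le_self (by simpa using hn)
  · push_neg at h; obtain ⟨j, hj⟩ := h
    refine ⟨0, ?_⟩
    rw [HasProd]
    refine tendsto_const_nhds.congr' ?_
    filter_upwards [Filter.eventually_ge_atTop ({j} : Finset ℕ)] with s hs
    exact (Finset.prod_eq_zero (hs (Finset.mem_singleton_self j)) hj).symm

lemma summable_norm_xq {q : ℂ} (hq : ‖q‖ < 1) (x : ℂ) :
    Summable (fun i : ℕ => ‖x * q^(i+1)‖) := by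
  simp only [norm_mul, norm_pow, pow_succ']
  exact (((summable_geometric_of_lt_one (norm_nonneg q) hq)).mul_left _).mul_left _

lemma euler_eq {q : ℂ} (hq : ‖q‖ < 1) (x : ℂ) :
    E q x = ∏' i : ℕ, (1 + x * q^(i+1)) := by
  have hm : Multipliable (fun i : ℕ => 1 + x * q^(i+1)) :=
    mult_one_add _ (summable_norm_xq hq x)
  have h1 : Tendsto (fun n => (∏ i ∈ range n, (1 + x*q^(i+1))) * E q (x*q^n)) atTop
      (𝓝 ((∏' i : ℕ, (1 + x * q^(i+1))) * 1)) :=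
    (hm.hasProd.tendsto_prod_nat).mul (E_tendsto_one hq x)
  have h2 : Tendsto (fun _ : ℕ => E q x) atTop (𝓝 ((∏' i : ℕ, (1 + x * q^(i+1))) * 1)) :=
    h1.congr (fun n => (E_iterate hq n x).symm)
  have := tendsto_nhds_unique tendsto_const_nhds h2
  rw [this, mul_one]

end Leb

namespace Leb

noncomputable def B (q : ℂ) (k j : ℕ) : ℂ :=
  (∏ i ∈ range k, (1 - q^(i+1))) /
    ((∏ i ∈ range j, (1 - q^(i+1))) * ∏ i ∈ range (k-j), (1 - q^(i+1)))

lemma B_zero {q : ℂ} (hq : ‖q‖ < 1) (k : ℕ) : B q k 0 = 1 := by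
  simp only [B, Nat.sub_zero, range_zero, prod_empty, one_mul]
  exact div_self (P_ne_zero hq k)

lemma B_self {q : ℂ} (hq : ‖q‖ < 1) (k : ℕ) : B q k k = 1 := by
  simp only [B, Nat.sub_self, range_zero, prod_empty, mul_one]
  exact div_self (P_ne_zero hq k)

lemma B_pascal {q : ℂ} (hq : ‖q‖ < 1) {k j : ℕ} (hj : j < k) :
    B q (k+1) (j+1) = B q k (j+1) + q^(k-j) * B q k j := by
  obtain ⟨s, hs⟩ : ∃ s, k - (j+1) = s := ⟨_, rfl⟩
  have e1 : k + 1 - (j+1) = s + 1 := by omega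
  have e2 : k - j = s + 1 := by omega
  have e3 : k - (j + 1) = s := hs
  have e4 : k + 1 = (s+1) + (j+1) := by omega
  unfold B
  rw [e1, e2, e3]
  rw [prod_range_succ (fun i => 1 - q^(i+1)) k, prod_range_succ (fun i => 1 - q^(i+1)) j,
    prod_range_succ (fun i => 1 - q^(i+1)) s]
  have h1 : (∏ i ∈ range k, (1 - q^(i+1))) ≠ 0 := P_ne_zero hq k
  have h2 : (∏ i ∈ range j, (1 - q^(i+1))) ≠ 0 := P_ne_zero hq j
  have h3 : (∏ i ∈ range s, (1 - q^(i+1))) ≠ 0 := P_ne_zero hq s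
  have h4 : (1:ℂ) - q^(j+1) ≠ 0 := one_sub_pow_ne hq j
  have h5 : (1:ℂ) - q^(s+1) ≠ 0 := one_sub_pow_ne hq s
  rw [e4, pow_add]
  field_simp
  ring

lemma gauss {q : ℂ} (hq : ‖q‖ < 1) (t : ℂ) (k : ℕ) :
    ∏ i ∈ range k, (1 + t * q^(i+1)) = ∑ j ∈ range (k+1), q^(T j) * t^j * B q k j := by
  induction k with
  | zero => simp [B, T]
  | succ k ih =>
    have key : ∑ j ∈ range (k+1+1), q^(T j) * t^j * B q (k+1) j
        = (∑ j ∈ range (k+1), q^(T j) * t^j * B q k j) * (1 + t * q^(k+1)) := by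
      rw [sum_range_succ' (fun j => q^(T j) * t^j * B q (k+1) j) (k+1)]
      rw [sum_range_succ (fun j => q^(T (j+1)) * t^(j+1) * B q (k+1) (j+1)) k]
      have hp : ∀ j ∈ range k, q^(T (j+1)) * t^(j+1) * B q (k+1) (j+1)
          = q^(T (j+1)) * t^(j+1) * B q k (j+1) + (t*q^(k+1)) * (q^(T j) * t^j * B q k j) := by
        intro j hj
        have hjk := mem_range.mp hj
        rw [B_pascal hq hjk]
        have e : T (j+1) + (k - j) = T j + (k+1) := by
          have := T_succ j; omega
        have e2 : q^(T (j+1)) * q^(k-j) = q^(T j) * q^(k+1) := by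
          rw [← pow_add, ← pow_add, e]
        have e3 : t^(j+1) = t * t^j := by rw [pow_succ]; ring
        calc q^(T (j+1)) * t^(j+1) * (B q k (j+1) + q^(k-j) * B q k j)
            = q^(T (j+1)) * t^(j+1) * B q k (j+1)
              + (q^(T (j+1)) * q^(k-j)) * t^(j+1) * B q k j := by ring
        _ = q^(T (j+1)) * t^(j+1) * B q k (j+1)
              + (q^(T j) * q^(k+1)) * (t * t^j) * B q k j := by rw [e2, e3]
        _ = q^(T (j+1)) * t^(j+1) * B q k (j+1) + (t*q^(k+1)) * (q^(T j) * t^j * B q k j) := by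
              ring
      rw [Finset.sum_congr rfl hp, Finset.sum_add_distrib]
      have r1 : ∑ j ∈ range (k+1), q^(T j) * t^j * B q k j
          = (∑ j ∈ range k, q^(T (j+1)) * t^(j+1) * B q k (j+1)) + 1 := by
        rw [sum_range_succ' (fun j => q^(T j) * t^j * B q k j) k]
        simp [B_zero hq, T]
      have r2 : ∑ j ∈ range (k+1), q^(T j) * t^j * B q k j
          = (∑ j ∈ range k, q^(T j) * t^j * B q k j) + q^(T k) * t^k := by
        rw [sum_range_succ, B_self hq]; ring
      have r3 : ∑ j ∈ range k, (t*q^(k+1)) * (q^(T j) * t^j * B q k j)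
          = (t*q^(k+1)) * ∑ j ∈ range k, q^(T j) * t^j * B q k j := by
        rw [Finset.mul_sum]
      rw [r3, B_self hq, B_zero hq]
      have e5 : q^(T (k+1)) = q^(T k) * q^(k+1) := by rw [T_succ, pow_add]
      rw [e5]
      have e6 : T 0 = 0 := rfl
      rw [e6]
      linear_combination (-1 : ℂ) * r1 - (t*q^(k+1)) * r2
    rw [prod_range_succ, ih, key]

lemma term_eq {q : ℂ} (hq : ‖q‖ < 1) (t : ℂ) (k : ℕ) :
    (∏ i ∈ range k, (1 + t * q^(i+1))) * q^(T k) / ∏ i ∈ range k, (1 - q^(i+1))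
      = ∑ j ∈ range (k+1), t^j * q^(T k + T j) /
          ((∏ i ∈ range j, (1 - q^(i+1))) * ∏ i ∈ range (k-j), (1 - q^(i+1))) := by
  rw [gauss hq t k, sum_mul, sum_div]
  apply Finset.sum_congr rfl
  intro j hj
  rw [B, pow_add]
  have h1 : (∏ i ∈ range k, (1 - q^(i+1))) ≠ 0 := P_ne_zero hq k
  have h2 : (∏ i ∈ range j, (1 - q^(i+1))) ≠ 0 := P_ne_zero hq j
  have h3 : (∏ i ∈ range (k-j), (1 - q^(i+1))) ≠ 0 := P_ne_zero hq (k-j)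
  field_simp

end Leb

namespace Leb
open Filter Topology

lemma NQ_ne_zero {q : ℂ} (hq : ‖q‖ < 1) (j : ℕ) : (∏ i ∈ range j, (1 + q^(i+1))) ≠ 0 := by
  apply Finset.prod_ne_zero_iff.2
  intro i _
  apply one_add_ne
  rw [norm_pow]
  exact pow_lt_one₀ (norm_nonneg q) hq (Nat.succ_ne_zero i)

lemma hq2 {q : ℂ} (hq : ‖q‖ < 1) : ‖q^2‖ < 1 := by
  rw [norm_pow]
  exact pow_lt_one₀ (norm_nonneg q) hq two_ne_zero

lemma multA {q : ℂ} (hq : ‖q‖ < 1) : Multipliable (fun i : ℕ => 1 + q^(i+1)) := by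
  have := mult_one_add (fun i : ℕ => q^(i+1)) (by simpa using summable_norm_xq hq 1)
  simpa using this

lemma summable_norm_pow_lin {q : ℂ} (hq : ‖q‖ < 1) (a b : ℕ) (ha : 1 ≤ a) :
    Summable (fun i : ℕ => ‖(-1 : ℂ) * q^(a*i+b)‖) := by
  simp only [norm_mul, norm_pow, norm_neg, norm_one, one_mul]
  apply Summable.of_nonneg_of_le (fun i => by positivity) (fun i => ?_)
    (summable_geometric_of_lt_one (norm_nonneg q) hq)
  apply pow_le_pow_of_le_one (norm_nonneg q) hq.le
  nlinarith

lemma multOdd {q : ℂ} (hq : ‖q‖ < 1) : Multipliable (fun i : ℕ => 1 - q^(2*i+1)) := by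
  have := mult_one_add (fun i : ℕ => (-1) * q^(2*i+1)) (summable_norm_pow_lin hq 2 1 (by norm_num))
  apply this.congr
  intro i; ring

lemma multEv {q : ℂ} (hq : ‖q‖ < 1) : Multipliable (fun i : ℕ => 1 - q^(2*i+2)) := by
  have := mult_one_add (fun i : ℕ => (-1) * q^(2*i+2)) (summable_norm_pow_lin hq 2 2 (by norm_num))
  apply this.congr
  intro i; ring

lemma multM1 {q : ℂ} (hq : ‖q‖ < 1) : Multipliable (fun i : ℕ => 1 - q^(i+1)) := by
  have := mult_one_add (fun i : ℕ => (-1) * q^(1*i+1)) (summable_norm_pow_lin hq 1 1 (by norm_num))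
  apply this.congr
  intro i
  show 1 + (-1) * q^(1*i+1) = 1 - q^(i+1)
  rw [one_mul]; ring

lemma Ev2_eq {q : ℂ} (hq : ‖q‖ < 1) :
    ∏' i : ℕ, (1 - q^(2*i+2)) = ∏' i : ℕ, (1 - (q^2)^(i+1)) := by
  apply tprod_congr
  intro i
  rw [← pow_mul, show 2*(i+1) = 2*i+2 from by ring]

lemma Ev2_ne_zero {q : ℂ} (hq : ‖q‖ < 1) : (∏' i : ℕ, (1 - (q^2)^(i+1))) ≠ 0 := by
  obtain ⟨c, hc, hcb⟩ := P_lower (hq2 hq)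
  have hM : Multipliable (fun i : ℕ => 1 - (q^2)^(i+1)) := by
    have := multEv hq
    apply this.congr  -- (fun i => 1 - q^(2i+2)) → goal 1 - q^(2i+2) = 1 - (q^2)^(i+1)
    intro i
    rw [← pow_mul, show 2*(i+1) = 2*i+2 from by ring]
  have ht := hM.hasProd.tendsto_prod_nat
  have htn : Tendsto (fun n => ‖∏ i ∈ range n, (1 - (q^2)^(i+1))‖) atTop
      (𝓝 ‖∏' i : ℕ, (1 - (q^2)^(i+1))‖) := ht.norm
  have hge : c ≤ ‖∏' i : ℕ, (1 - (q^2)^(i+1))‖ :=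
    ge_of_tendsto htn (Filter.Eventually.of_forall (fun n => hcb n))
  intro h0
  rw [h0] at hge
  simp at hge
  linarith

/-- A∞ * O = 1 -/
lemma key_prod {q : ℂ} (hq : ‖q‖ < 1) :
    (∏' i : ℕ, (1 + q^(i+1))) * (∏' i : ℕ, (1 - q^(2*i+1))) = 1 := by
  have hA := multA hq
  have hM1 := multM1 hq
  have hModd := multOdd hq
  have hMev := multEv hq
  -- even-odd split of ∏'(1 - q^(i+1))
  have hsplit : (∏' k : ℕ, (1 - q^(2*k+1))) * (∏' k : ℕ, (1 - q^(2*k+2)))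
      = ∏' k : ℕ, (1 - q^(k+1)) := by
    have he : Multipliable (fun k : ℕ => 1 - q^(2*k+1)) := hModd
    have ho : Multipliable (fun k : ℕ => 1 - q^((2*k+1)+1)) := by
      apply hMev.congr; intro i; norm_num
    have := tprod_even_mul_odd (f := fun i : ℕ => 1 - q^(i+1)) he ho
    rw [← this]
  -- termwise multiplication
  have hterm : (∏' i : ℕ, (1 + q^(i+1))) * (∏' i : ℕ, (1 - q^(i+1)))
      = ∏' i : ℕ, (1 - (q^2)^(i+1)) := by
    rw [← Multipliable.tprod_mul hA hM1]
    apply tprod_congr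
    intro i
    rw [← pow_mul]
    ring_nf
  have hEv2 : (∏' k : ℕ, (1 - q^(2*k+2))) = ∏' i : ℕ, (1 - (q^2)^(i+1)) := Ev2_eq hq
  have hne := Ev2_ne_zero hq
  -- combine: A * (O * Ev2) = A * M1∞ * Ev2 ... : A∞ * O * Ev2 = A∞ * M1 * Ev2?? 
  -- From hsplit : O * Ev2' = M1∞ (with Ev2' = ∏'(1-q^(2k+2)))
  -- From hterm : A∞ * M1∞ = Ev2
  -- ⇒ A∞ * O * Ev2 = A∞ * (O * Ev2') = A∞ * M1∞ = Ev2 ⇒ (A∞ * O) * Ev2 = 1 * Ev2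
  have step : ((∏' i : ℕ, (1 + q^(i+1))) * (∏' i : ℕ, (1 - q^(2*i+1)))) * (∏' i : ℕ, (1 - (q^2)^(i+1)))
      = 1 * (∏' i : ℕ, (1 - (q^2)^(i+1))) := by
    rw [one_mul, ← hEv2, mul_assoc, hsplit, hEv2]
    exact hterm
  exact mul_right_cancel₀ hne step

end Leb

namespace Leb

lemma tsum_antidiag (F : ℕ × ℕ → ℂ) (hF : Summable F) :
    ∑' p : ℕ × ℕ, F p = ∑' n : ℕ, ∑ kl ∈ Finset.HasAntidiagonal.antidiagonal n, F kl := by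
  conv_rhs => congr; ext; rw [← Finset.sum_finset_coe, ← tsum_fintype (L := SummationFilter.unconditional _)]
  rw [← Finset.HasAntidiagonal.sigmaAntidiagonalEquivProd.tsum_eq F]
  exact Summable.tsum_sigma' (fun n => (hasSum_fintype _).summable)
    (Finset.HasAntidiagonal.sigmaAntidiagonalEquivProd.summable_iff.2 hF)

end Leb

set_option maxHeartbeats 1000000 in
/-- The Lebesgue identity. -/
theorem stmt6 (q t : ℂ) (hq : ‖q‖ < 1) :
    ∑' k : ℕ, (∏ i ∈ range k, (1 + t * q ^ (i + 1))) * q ^ (k * (k + 1) / 2) /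
        ∏ i ∈ range k, (1 - q ^ (i + 1)) =
      (∏' i : ℕ, (1 + t * q ^ (2 * i + 2))) / ∏' i : ℕ, (1 - q ^ (2 * i + 1)) := by
  classical
  obtain ⟨c, hc, hcb⟩ := Leb.P_lower hq
  set F : ℕ × ℕ → ℂ := fun p => t^p.1 * q^(Leb.T (p.1 + p.2) + Leb.T p.1) /
      ((∏ i ∈ range p.1, (1 - q^(i+1))) * ∏ i ∈ range p.2, (1 - q^(i+1))) with hFdef
  have hF : Summable F := by
    have hsum2 : Summable (fun m : ℕ => c⁻¹ * ‖q‖^(Leb.T m)) := by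
      have := Leb.summable_aux zero_le_one (norm_nonneg q) hq
      simpa using this.mul_left c⁻¹
    have hsum1 : Summable (fun j : ℕ => c⁻¹ * (‖t‖^j * ‖q‖^(Leb.T j))) :=
      (Leb.summable_aux (norm_nonneg t) (norm_nonneg q) hq).mul_left c⁻¹
    apply Summable.of_norm_bounded
      (hsum1.mul_of_nonneg hsum2 (fun j => by positivity) (fun m => by positivity))
    rintro ⟨j, m⟩
    show ‖F (j, m)‖ ≤ (c⁻¹ * (‖t‖^j * ‖q‖^(Leb.T j))) * (c⁻¹ * ‖q‖^(Leb.T m))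
    have hd1 : (0:ℝ) < c * c := by positivity
    have hd2 : c * c ≤ ‖∏ i ∈ range j, (1 - q^(i+1))‖ * ‖∏ i ∈ range m, (1 - q^(i+1))‖ :=
      mul_le_mul (hcb j) (hcb m) hc.le (norm_nonneg _)
    have hnum : ‖t‖^j * ‖q‖^(Leb.T (j+m) + Leb.T j) ≤ ‖t‖^j * ‖q‖^(Leb.T j + Leb.T m) := by
      apply mul_le_mul_of_nonneg_left _ (by positivity)
      apply pow_le_pow_of_le_one (norm_nonneg q) hq.le
      have := Leb.T_add j m; omega
    calc ‖F (j, m)‖ = (‖t‖^j * ‖q‖^(Leb.T (j+m) + Leb.T j)) /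
          (‖∏ i ∈ range j, (1 - q^(i+1))‖ * ‖∏ i ∈ range m, (1 - q^(i+1))‖) := by
          simp only [hFdef]
          rw [norm_div, norm_mul, norm_mul, norm_pow, norm_pow]
    _ ≤ (‖t‖^j * ‖q‖^(Leb.T j + Leb.T m)) / (c*c) := div_le_div₀ (by positivity) hnum hd1 hd2
    _ = (c⁻¹ * (‖t‖^j * ‖q‖^(Leb.T j))) * (c⁻¹ * ‖q‖^(Leb.T m)) := by
          rw [pow_add]; field_simp
  have hterm : ∀ k : ℕ, (∏ i ∈ range k, (1 + t * q ^ (i + 1))) * q ^ (k * (k + 1) / 2) /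
        ∏ i ∈ range k, (1 - q ^ (i + 1)) = ∑ kl ∈ Finset.HasAntidiagonal.antidiagonal k, F kl := by
    intro k
    rw [show k * (k+1)/2 = Leb.T k from rfl, Leb.term_eq hq t k,
      Finset.Nat.sum_antidiagonal_eq_sum_range_succ_mk F k]
    apply Finset.sum_congr rfl
    intro j hj
    have hjk : j ≤ k := by have := mem_range.mp hj; omega
    simp only [hFdef]
    rw [show j + (k - j) = k from by omega]
  rw [tsum_congr hterm, ← Leb.tsum_antidiag F hF, Summable.tsum_prod hF]
  have hcol : ∀ j : ℕ, ∑' m : ℕ, F (j, m)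
      = (∏' i : ℕ, (1 + q^(i+1))) * Leb.Ef (q^2) t j := by
    intro j
    have hPj := Leb.P_ne_zero hq j
    have e1 : ∀ m : ℕ, F (j, m) =
        (t^j * q^(2*Leb.T j) / ∏ i ∈ range j, (1 - q^(i+1))) * Leb.Ef q (q^j) m := by
      intro m
      have hPm := Leb.P_ne_zero hq m
      simp only [hFdef]
      rw [Leb.Ef]
      rw [show Leb.T (j + m) + Leb.T j = (2*Leb.T j) + (j*m + Leb.T m) from by
        have := Leb.T_add j m; omega]
      rw [pow_add, pow_add, pow_mul]
      field_simp
      ring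
    rw [tsum_congr e1, tsum_mul_left,
      show (∑' m, Leb.Ef q (q^j) m) = Leb.E q (q^j) from rfl]
    have hNQ := Leb.NQ_ne_zero hq j
    have eA : Leb.E q 1 = ∏' i : ℕ, (1 + q^(i+1)) := by
      rw [Leb.euler_eq hq 1]
      apply tprod_congr
      intro i
      rw [one_mul]
    have e4 : Leb.E q 1 = (∏ i ∈ range j, (1 + q^(i+1))) * Leb.E q (q^j) := by
      have h := Leb.E_iterate hq j 1
      simpa using h
    have e5 : Leb.E q (q^j) = Leb.E q 1 / ∏ i ∈ range j, (1 + q^(i+1)) := by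
      rw [eq_div_iff hNQ]
      linear_combination -e4
    rw [e5, ← eA, Leb.Ef]
    have e6 : (∏ i ∈ range j, (1 - q^(i+1))) * (∏ i ∈ range j, (1 + q^(i+1)))
        = ∏ i ∈ range j, (1 - (q^2)^(i+1)) := by
      rw [← Finset.prod_mul_distrib]
      apply Finset.prod_congr rfl
      intro i _
      rw [← pow_mul]
      ring
    rw [show q^(2*Leb.T j) = (q^2)^(Leb.T j) from by rw [← pow_mul], ← e6]
    field_simp
  rw [tsum_congr hcol, tsum_mul_left,
    show (∑' j, Leb.Ef (q^2) t j) = Leb.E (q^2) t from rfl, Leb.euler_eq (Leb.hq2 hq) t]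
  have h2 : ∏' i : ℕ, (1 + t * (q^2)^(i+1)) = ∏' i : ℕ, (1 + t * q^(2*i+2)) :=
    tprod_congr (fun i => by rw [← pow_mul, show 2*(i+1) = 2*i+2 from by ring])
  rw [h2]
  have hk := Leb.key_prod hq
  have hOne : (∏' i : ℕ, (1 - q^(2*i+1))) ≠ 0 := by
    intro h0; rw [h0, mul_zero] at hk; exact one_ne_zero hk.symm
  rw [eq_div_iff hOne]
  linear_combination (∏' i : ℕ, (1 + t * q^(2*i+2))) * hk
end

section
/- For positive integers m and n: O(m+n+1, m+1) = 1 + ∑_{j=1}^{n} q^j ( O(m+j, j) + t·O(m+j−1, j−1) ), where O(a,b) is the over-(q,t)-binomial coefficient for overpartitions fitting inside the (a−b)×b rectangle. -/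
open Finset Polynomial

namespace OverPf

/-- number of elements of `s` that are `≥ i`. -/
def cge (s : Multiset ℕ) (i : ℕ) : ℕ := (s.filter (i ≤ ·)).card

lemma cge_anti (s : Multiset ℕ) {i j : ℕ} (hij : i ≤ j) : cge s j ≤ cge s i :=
  Multiset.card_le_card (Multiset.monotone_filter_right s fun a ha => le_trans hij ha)

lemma cge_succ (s : Multiset ℕ) (v : ℕ) : cge s v = s.count v + cge s (v+1) := by
  induction s using Multiset.induction_on with
  | empty => simp [cge]
  | cons a s ih =>
    simp only [cge, Multiset.filter_cons, Multiset.count_cons, Multiset.card_add,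
      apply_ite Multiset.card, Multiset.card_singleton, Multiset.card_zero] at *
    split_ifs <;> omega

lemma cge_pos_of_mem {s : Multiset ℕ} {v : ℕ} (hv : v ∈ s) : 0 < cge s v := by
  have : v ∈ s.filter (v ≤ ·) := Multiset.mem_filter.2 ⟨hv, le_refl v⟩
  exact Multiset.card_pos.2 fun h => by simp [h] at this

lemma cge_le_card (s : Multiset ℕ) (v : ℕ) : cge s v ≤ Multiset.card s :=
  Multiset.card_le_card (Multiset.filter_le _ s)

lemma sum_le_sum_of_le {s t : Multiset ℕ} (h : s ≤ t) : s.sum ≤ t.sum := by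
  obtain ⟨u, rfl⟩ := Multiset.le_iff_exists_add.1 h
  simp

lemma cge_le_sum (s : Multiset ℕ) {v : ℕ} (hv : 1 ≤ v) : cge s v ≤ s.sum := by
  calc cge s v = Multiset.card (s.filter (v ≤ ·)) • 1 := by simp [cge]
    _ ≤ (s.filter (v ≤ ·)).sum :=
        Multiset.card_nsmul_le_sum (fun a ha => le_trans hv (Multiset.of_mem_filter ha))
    _ ≤ s.sum := sum_le_sum_of_le (Multiset.filter_le _ s)

lemma mem_le_sum {s : Multiset ℕ} {a : ℕ} (ha : a ∈ s) : a ≤ s.sum :=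
  Multiset.single_le_sum (fun x _ => Nat.zero_le x) a ha

lemma cge_eq_zero {s : Multiset ℕ} {v : ℕ} (hv : s.sum < v) : cge s v = 0 := by
  unfold cge
  rw [Multiset.card_eq_zero, Multiset.filter_eq_nil]
  intro a ha h
  exact absurd (mem_le_sum ha) (by omega)

/-- conjugate multiset of parts -/
def conjP (s : Multiset ℕ) : Multiset ℕ :=
  ((Finset.Icc 1 s.sum).val.map (cge s)).filter (0 < ·)

lemma conjP_pos {s : Multiset ℕ} : ∀ a ∈ conjP s, 0 < a := fun _ ha =>
  (Multiset.mem_filter.1 ha).2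

lemma card_filter_map (A : Finset ℕ) (f : ℕ → ℕ) (p : ℕ → Prop) [DecidablePred p] :
    Multiset.card ((A.val.map f).filter p) = (A.filter (fun i => p (f i))).card := by
  rw [← Multiset.countP_eq_card_filter, Multiset.countP_map]
  rfl

lemma card_conjP (s : Multiset ℕ) :
    Multiset.card (conjP s) = ((Finset.Icc 1 s.sum).filter (fun i => 0 < cge s i)).card :=
  card_filter_map _ _ _

lemma mem_conjP {s : Multiset ℕ} {a : ℕ} :
    a ∈ conjP s ↔ (∃ i ∈ Finset.Icc 1 s.sum, cge s i = a) ∧ 0 < a := by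
  unfold conjP
  simp [Multiset.mem_filter, Multiset.mem_map]

lemma cge_conjP (s : Multiset ℕ) {v : ℕ} (hv : 1 ≤ v) :
    cge (conjP s) v = ((Finset.Icc 1 s.sum).filter (fun i => v ≤ cge s i)).card := by
  unfold cge conjP
  rw [Multiset.filter_filter]
  rw [Multiset.filter_congr (q := fun x => v ≤ x) (fun x _ => by omega)]
  exact card_filter_map _ _ _

lemma sum_cge {B : ℕ} (s : Multiset ℕ) (hB : ∀ a ∈ s, a ≤ B) :
    ∑ i ∈ Icc 1 B, cge s i = s.sum := by
  induction s using Multiset.induction_on with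
  | empty => simp [cge]
  | cons a s ih =>
    have h1 : ∀ i, cge (a ::ₘ s) i = cge s i + if i ≤ a then 1 else 0 := by
      intro i
      simp only [cge, Multiset.filter_cons, apply_ite Multiset.card, Multiset.card_add,
        Multiset.card_singleton, Multiset.card_zero]
      split_ifs <;> omega
    have ha : a ≤ B := hB a (Multiset.mem_cons_self a s)
    simp only [h1, Finset.sum_add_distrib, Multiset.sum_cons]
    rw [ih (fun x hx => hB x (Multiset.mem_cons_of_mem hx))]
    have hf : (Icc 1 B).filter (fun i => i ≤ a) = Icc 1 a := by
      ext i; simp only [mem_filter, mem_Icc]; omega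
    have hcount : (∑ x ∈ Icc 1 B, if x ≤ a then (1:ℕ) else 0) = a := by
      rw [Finset.sum_ite, Finset.sum_const, Finset.sum_const_zero, add_zero, smul_eq_mul,
        mul_one, hf, Nat.card_Icc]
      omega
    omega

lemma sum_conjP (s : Multiset ℕ) : (conjP s).sum = s.sum := by
  unfold conjP
  have hsplit := Multiset.filter_add_not (fun x => 0 < x) ((Finset.Icc 1 s.sum).val.map (cge s))
  have h0 : (((Finset.Icc 1 s.sum).val.map (cge s)).filter (fun x => ¬ 0 < x)).sum = 0 :=
    Multiset.sum_eq_zero fun x hx => by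
      have := (Multiset.mem_filter.1 hx).2; omega
  have := congrArg Multiset.sum hsplit
  rw [Multiset.sum_add, h0, add_zero] at this
  rw [this]
  rw [show ((Finset.Icc 1 s.sum).val.map (cge s)).sum = ∑ i ∈ Icc 1 s.sum, cge s i from rfl]
  exact sum_cge s fun a ha => mem_le_sum ha

lemma conjP_parts_le {s : Multiset ℕ} {n : ℕ} (hcard : Multiset.card s ≤ n) :
    ∀ a ∈ conjP s, a ≤ n := by
  intro a ha
  obtain ⟨⟨i, _, rfl⟩, _⟩ := mem_conjP.1 ha
  exact (cge_le_card s i).trans hcard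

lemma conjP_card_le {s : Multiset ℕ} {m : ℕ} (hm : ∀ a ∈ s, a ≤ m) :
    Multiset.card (conjP s) ≤ m := by
  rw [card_conjP]
  have hsub : (Finset.Icc 1 s.sum).filter (fun i => 0 < cge s i) ⊆ Finset.Icc 1 m := by
    intro i hi
    rw [mem_filter, mem_Icc] at hi
    obtain ⟨⟨h1, _⟩, hpos⟩ := hi
    have : ∃ a ∈ s, i ≤ a := by
      by_contra hc
      push_neg at hc
      have : s.filter (i ≤ ·) = 0 := Multiset.filter_eq_nil.2 fun a ha h => (hc a ha).not_ge h
      simp [cge, this] at hpos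
    obtain ⟨a, ha, hia⟩ := this
    exact mem_Icc.2 ⟨h1, hia.trans (hm a ha)⟩
  calc _ ≤ (Finset.Icc 1 m).card := Finset.card_le_card hsub
    _ = m := by simp

lemma galois (s : Multiset ℕ) {i v : ℕ} (hi : 1 ≤ i) (hv : 1 ≤ v) :
    v ≤ ((Finset.Icc 1 s.sum).filter (fun j => i ≤ cge s j)).card ↔ i ≤ cge s v := by
  constructor
  · intro h
    by_contra hc
    push_neg at hc
    have hsub : (Finset.Icc 1 s.sum).filter (fun j => i ≤ cge s j) ⊆ Finset.Icc 1 (v-1) := by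
      intro j hj
      rw [mem_filter, mem_Icc] at hj
      obtain ⟨⟨h1, _⟩, hcge⟩ := hj
      rw [mem_Icc]
      refine ⟨h1, ?_⟩
      by_contra hjv
      push_neg at hjv
      exact absurd ((cge_anti s (by omega : v ≤ j)).trans' hcge) (by omega)
    have h2 := Finset.card_le_card hsub
    rw [Nat.card_Icc] at h2
    omega
  · intro h
    have hvM : v ≤ s.sum := by
      by_contra hc
      push_neg at hc
      rw [cge_eq_zero hc] at h
      omega
    have hsub : Finset.Icc 1 v ⊆ (Finset.Icc 1 s.sum).filter (fun j => i ≤ cge s j) := by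
      intro j hj
      rw [mem_Icc] at hj
      rw [mem_filter, mem_Icc]
      exact ⟨⟨hj.1, hj.2.trans hvM⟩, h.trans (cge_anti s hj.2)⟩
    calc v = (Finset.Icc 1 v).card := by simp
      _ ≤ _ := Finset.card_le_card hsub

lemma cge_conjP_conjP (s : Multiset ℕ) {v : ℕ} (hv : 1 ≤ v) :
    cge (conjP (conjP s)) v = cge s v := by
  rw [cge_conjP _ hv, sum_conjP]
  have hfe : (Finset.Icc 1 s.sum).filter (fun i => v ≤ cge (conjP s) i)
      = (Finset.Icc 1 s.sum).filter (fun i => i ≤ cge s v) := by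
    apply Finset.filter_congr
    intro i hi
    rw [mem_Icc] at hi
    rw [cge_conjP _ hi.1]
    exact galois s hi.1 hv
  rw [hfe]
  have : (Finset.Icc 1 s.sum).filter (fun i => i ≤ cge s v) = Finset.Icc 1 (cge s v) := by
    ext i
    simp only [mem_filter, mem_Icc]
    have := cge_le_sum s hv
    omega
  rw [this, Nat.card_Icc]
  omega

lemma conjP_conjP {s : Multiset ℕ} (hs : ∀ a ∈ s, 0 < a) : conjP (conjP s) = s := by
  ext a
  rcases Nat.eq_zero_or_pos a with rfl | ha
  · rw [Multiset.count_eq_zero.2 (fun h => by have := conjP_pos _ h; omega),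
      Multiset.count_eq_zero.2 (fun h => by have := hs _ h; omega)]
  · have h1 := cge_succ (conjP (conjP s)) a
    have h2 := cge_succ s a
    rw [cge_conjP_conjP s ha, cge_conjP_conjP s (by omega : 1 ≤ a + 1)] at h1
    omega

lemma toFinset_card_le_conjP {s : Multiset ℕ} (hs : ∀ a ∈ s, 0 < a) :
    s.toFinset.card ≤ (conjP s).toFinset.card := by
  apply Finset.card_le_card_of_injOn (fun v => cge s v)
  · intro v hv
    rw [Finset.mem_coe, Multiset.mem_toFinset] at hv ⊢
    rw [mem_conjP]
    exact ⟨⟨v, mem_Icc.2 ⟨hs v hv, mem_le_sum hv⟩, rfl⟩, cge_pos_of_mem hv⟩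
  · have key : ∀ v ∈ s, ∀ w ∈ s, v < w → cge s w < cge s v := by
      intro v hv w hw hvw
      have h1 := cge_succ s v
      have h2 : cge s w ≤ cge s (v+1) := cge_anti s (by omega)
      have h3 : 1 ≤ s.count v := Multiset.one_le_count_iff_mem.2 hv
      omega
    intro v hv w hw h
    simp only [Finset.mem_coe, Multiset.mem_toFinset] at hv hw
    by_contra hne
    rcases Nat.lt_or_ge v w with hlt | hge
    · exact absurd h (key v hv w hw hlt).ne'
    · exact absurd h (key w hw v hv (by omega)).ne

lemma toFinset_card_conjP {s : Multiset ℕ} (hs : ∀ a ∈ s, 0 < a) :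
    (conjP s).toFinset.card = s.toFinset.card := by
  refine le_antisymm ?_ (toFinset_card_le_conjP hs)
  have := toFinset_card_le_conjP (s := conjP s) conjP_pos
  rwa [conjP_conjP hs] at this

/-- partitions of `N` fitting in an `m × n` box -/
def Pbox (m n N : ℕ) : Finset (Nat.Partition N) :=
  Finset.univ.filter (fun l => (∀ i ∈ l.parts, i ≤ m) ∧ Multiset.card l.parts ≤ n)

lemma mem_Pbox {m n N : ℕ} {l : Nat.Partition N} :
    l ∈ Pbox m n N ↔ (∀ i ∈ l.parts, i ≤ m) ∧ Multiset.card l.parts ≤ n := by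
  simp [Pbox]

/-- number of distinct parts -/
def dp {N : ℕ} (l : Nat.Partition N) : ℕ := l.parts.toFinset.card

lemma overp_eq_sum (m n k N : ℕ) :
    overp m n k N = ∑ l ∈ Pbox m n N, (dp l).choose k := by
  unfold overp
  have e : {p : Nat.Partition N × Finset ℕ //
      (∀ i ∈ p.1.parts, i ≤ m) ∧ Multiset.card p.1.parts ≤ n ∧
      p.2 ⊆ p.1.parts.toFinset ∧ p.2.card = k} ≃
      (Σ l : {l : Nat.Partition N // (∀ i ∈ l.parts, i ≤ m) ∧ Multiset.card l.parts ≤ n},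
        {s : Finset ℕ // s ∈ Finset.powersetCard k l.1.parts.toFinset}) := by
    refine ⟨fun p => ⟨⟨p.1.1, p.2.1, p.2.2.1⟩,
      ⟨p.1.2, Finset.mem_powersetCard.2 ⟨p.2.2.2.1, p.2.2.2.2⟩⟩⟩,
      fun x => ⟨(x.1.1, x.2.1), x.1.2.1, x.1.2.2,
        (Finset.mem_powersetCard.1 x.2.2).1, (Finset.mem_powersetCard.1 x.2.2).2⟩,
      fun p => rfl, fun x => rfl⟩
  rw [Nat.card_congr e, Nat.card_eq_fintype_card, Fintype.card_sigma]
  have h1 : ∀ l : {l : Nat.Partition N // (∀ i ∈ l.parts, i ≤ m) ∧ Multiset.card l.parts ≤ n},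
      Fintype.card {s : Finset ℕ // s ∈ Finset.powersetCard k l.1.parts.toFinset}
        = (dp l.1).choose k := by
    intro l
    rw [Fintype.card_coe, Finset.card_powersetCard]; rfl
  simp only [h1]
  rw [← Finset.sum_subtype (Pbox m n N) (fun l => mem_Pbox) (fun l => (dp l).choose k)]

def pconj {N : ℕ} (l : Nat.Partition N) : Nat.Partition N :=
  ⟨conjP l.parts, fun {i} hi => conjP_pos i hi, by rw [sum_conjP, l.parts_sum]⟩

lemma pconj_parts {N : ℕ} (l : Nat.Partition N) : (pconj l).parts = conjP l.parts := rfl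

lemma pconj_pconj {N : ℕ} (l : Nat.Partition N) : pconj (pconj l) = l := by
  apply Nat.Partition.ext
  rw [pconj_parts, pconj_parts]
  exact conjP_conjP fun a ha => l.parts_pos ha

lemma overp_symm (m n k N : ℕ) : overp m n k N = overp n m k N := by
  rw [overp_eq_sum, overp_eq_sum]
  refine Finset.sum_nbij' (fun l => pconj l) (fun l => pconj l) ?_ ?_ ?_ ?_ ?_
  · intro l hl
    rw [mem_Pbox] at hl ⊢
    exact ⟨conjP_parts_le hl.2, conjP_card_le hl.1⟩
  · intro l hl
    rw [mem_Pbox] at hl ⊢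
    exact ⟨conjP_parts_le hl.2, conjP_card_le hl.1⟩
  · intro l _; exact pconj_pconj l
  · intro l _; exact pconj_pconj l
  · intro l _
    unfold dp
    rw [pconj_parts, toFinset_card_conjP fun a ha => l.parts_pos ha]

lemma overp_eq_zero_of_k {m n k N : ℕ} (h : n < k) : overp m n k N = 0 := by
  rw [overp_eq_sum]
  refine Finset.sum_eq_zero fun l hl => ?_
  rw [mem_Pbox] at hl
  exact Nat.choose_eq_zero_of_lt (lt_of_le_of_lt
    ((Multiset.toFinset_card_le _).trans hl.2) h)

lemma overp_eq_zero_of_N {m n k N : ℕ} (h : m * n < N) : overp m n k N = 0 := by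
  rw [overp_eq_sum]
  refine Finset.sum_eq_zero fun l hl => ?_
  rw [mem_Pbox] at hl
  exfalso
  have h1 : l.parts.sum ≤ Multiset.card l.parts • m := Multiset.sum_le_card_nsmul _ _ hl.1
  rw [l.parts_sum, smul_eq_mul] at h1
  have h2 : Multiset.card l.parts * m ≤ n * m := Nat.mul_le_mul_right m hl.2
  have := h1.trans h2
  rw [mul_comm] at this
  omega

lemma overp_N_zero (a b k : ℕ) : overp a b k 0 = if k = 0 then 1 else 0 := by
  rw [overp_eq_sum]
  have hP : Pbox a b 0 = {(default : Nat.Partition 0)} := by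
    apply Finset.eq_singleton_iff_unique_mem.2
    constructor
    · rw [mem_Pbox]; simp
    · intro l _; exact Subsingleton.elim l default
  rw [hP, Finset.sum_singleton]
  have : dp (default : Nat.Partition 0) = 0 := by
    unfold dp; simp
  rw [this]
  cases k with
  | zero => simp
  | succ k => simp [Nat.choose]

lemma sup_mem_of_ne_zero {s : Multiset ℕ} (h : s ≠ 0) : s.sup ∈ s := by
  induction s using Multiset.induction_on with
  | empty => exact absurd rfl h
  | cons a s ih =>
    rw [Multiset.sup_cons]
    rcases eq_or_ne s 0 with rfl | hs
    · simp
    · rcases le_total a s.sup with h1 | h1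
      · rw [sup_eq_right.2 h1]
        exact Multiset.mem_cons_of_mem (ih hs)
      · rw [sup_eq_left.2 h1]
        exact Multiset.mem_cons_self a s

/-- coefficient restricted to partitions with largest part `j` -/
def Fcoef (n m j k N : ℕ) : ℕ :=
  ∑ l ∈ (Pbox n (m+1) N).filter (fun l => l.parts.sup = j), (dp l).choose k

lemma D1 (n m k N : ℕ) (hN : 1 ≤ N) :
    overp n (m+1) k N = ∑ j ∈ Icc 1 n, Fcoef n m j k N := by
  rw [overp_eq_sum]
  refine (Finset.sum_fiberwise_of_maps_to ?_ _).symm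
  intro l hl
  rw [mem_Pbox] at hl
  have hne : l.parts ≠ 0 := by
    intro h0
    have := l.parts_sum
    rw [h0] at this
    simp at this
    omega
  have hmem := sup_mem_of_ne_zero hne
  exact mem_Icc.2 ⟨l.parts_pos hmem, hl.1 _ hmem⟩

lemma F_vanish (n m j k N : ℕ) (hN : N < j) : Fcoef n m j k N = 0 := by
  unfold Fcoef
  refine Finset.sum_eq_zero fun l hl => ?_
  rw [Finset.mem_filter] at hl
  exfalso
  have hne : l.parts ≠ 0 := by
    intro h0
    have h1 := hl.2
    rw [h0] at h1
    simp [Multiset.sup_zero] at h1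
    -- sup of empty is 0, so j = 0, but N < j means N < 0 impossible unless...
    omega
  have hmem := sup_mem_of_ne_zero hne
  rw [hl.2] at hmem
  have := Multiset.single_le_sum (fun x _ => Nat.zero_le x) j hmem
  rw [l.parts_sum] at this
  omega

lemma Pbox_pred {j m M : ℕ} (hj : 1 ≤ j) :
    (Pbox j m M).filter (fun u => j ∉ u.parts) = Pbox (j-1) m M := by
  ext u
  simp only [Finset.mem_filter, mem_Pbox]
  constructor
  · rintro ⟨⟨h1, h2⟩, h3⟩
    refine ⟨fun i hi => ?_, h2⟩
    have := h1 i hi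
    have : i ≠ j := fun h => h3 (h ▸ hi)
    omega
  · rintro ⟨h1, h2⟩
    refine ⟨⟨fun i hi => (h1 i hi).trans (by omega), h2⟩, fun hmem => ?_⟩
    have := h1 j hmem
    omega

/-- The core bijection: adding a part `j`. -/
lemma core_sum (n m j M k : ℕ) (hj : 1 ≤ j) (hjn : j ≤ n) :
    ∑ u ∈ Pbox j m M, ((dp u) + (if j ∈ u.parts then 0 else 1)).choose k
      = Fcoef n m j k (j + M) := by
  unfold Fcoef
  refine Finset.sum_bij' (i := fun u hu => (⟨j ::ₘ u.parts, ?_, ?_⟩ : Nat.Partition (j+M)))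
    (j := fun l hl => (⟨l.parts.erase j, ?_, ?_⟩ : Nat.Partition M)) ?_ ?_ ?_ ?_ ?_
  case refine_1 =>
    intro i hi
    rcases Multiset.mem_cons.1 hi with rfl | hi
    · omega
    · exact u.parts_pos hi
  case refine_2 => rw [Multiset.sum_cons, u.parts_sum]
  case refine_3 =>
    intro i hi
    exact l.parts_pos (Multiset.mem_of_mem_erase hi)
  case refine_4 =>
    rw [Finset.mem_filter] at hl
    have hne : l.parts ≠ 0 := by
      intro h0
      have := l.parts_sum
      rw [h0] at this
      simp at this
      omega
    have hjmem : j ∈ l.parts := by have h99 := sup_mem_of_ne_zero hne; rwa [hl.2] at h99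
    have := congrArg Multiset.sum (Multiset.cons_erase hjmem)
    rw [Multiset.sum_cons, l.parts_sum] at this
    omega
  case refine_5 =>
    intro u hu
    rw [mem_Pbox] at hu
    rw [Finset.mem_filter, mem_Pbox]
    refine ⟨⟨?_, ?_⟩, ?_⟩
    · intro i hi
      rcases Multiset.mem_cons.1 hi with rfl | hi
      · exact hjn
      · exact (hu.1 i hi).trans hjn
    · simpa using Nat.add_le_add_right hu.2 1
    · show (j ::ₘ u.parts).sup = j
      rw [Multiset.sup_cons]
      exact sup_eq_left.2 (Multiset.sup_le.2 hu.1)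
  case refine_6 =>
    intro l hl
    rw [Finset.mem_filter, mem_Pbox] at hl
    rw [mem_Pbox]
    constructor
    · intro i hi
      have hmem := Multiset.mem_of_mem_erase hi
      have := Multiset.le_sup hmem
      rw [hl.2] at this
      exact this
    · have hne : l.parts ≠ 0 := by
        intro h0
        have := hl.2
        rw [h0] at this
        simp [Multiset.sup_zero] at this
        omega
      have hjmem : j ∈ l.parts := by have h99 := sup_mem_of_ne_zero hne; rwa [hl.2] at h99
      rw [Multiset.card_erase_of_mem hjmem]
      have h9 := hl.1.2
      have h10 : (Multiset.card l.parts).pred = Multiset.card l.parts - 1 := rfl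
      omega
  case refine_7 =>
    intro u hu
    apply Nat.Partition.ext
    simp
  case refine_8 =>
    intro l hl
    apply Nat.Partition.ext
    rw [Finset.mem_filter, mem_Pbox] at hl
    have hne : l.parts ≠ 0 := by
      intro h0
      have := hl.2
      rw [h0] at this
      simp [Multiset.sup_zero] at this
      omega
    have hjmem : j ∈ l.parts := by have h99 := sup_mem_of_ne_zero hne; rwa [hl.2] at h99
    exact Multiset.cons_erase hjmem
  case refine_9 =>
    intro u hu
    congr 1
    unfold dp
    show _ = (Multiset.toFinset (j ::ₘ u.parts)).card
    rw [Multiset.toFinset_cons]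
    by_cases hmem : j ∈ u.parts
    · rw [Finset.insert_eq_self.2 (Multiset.mem_toFinset.2 hmem), if_pos hmem, add_zero]
    · rw [Finset.card_insert_of_notMem (fun h => hmem (Multiset.mem_toFinset.1 h)), if_neg hmem]

lemma coreS (n m j M k : ℕ) (hj : 1 ≤ j) (hjn : j ≤ n) :
    Fcoef n m j (k+1) (j + M) = overp j m (k+1) M + overp (j-1) m k M := by
  rw [← core_sum n m j M (k+1) hj hjn, overp_eq_sum, overp_eq_sum, ← Pbox_pred hj]
  rw [← Finset.sum_filter_add_sum_filter_not (Pbox j m M) (fun u => j ∈ u.parts)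
    (fun u => ((dp u) + (if j ∈ u.parts then 0 else 1)).choose (k+1))]
  rw [← Finset.sum_filter_add_sum_filter_not (Pbox j m M) (fun u => j ∈ u.parts)
    (fun u => (dp u).choose (k+1))]
  have h1 : ∀ u ∈ (Pbox j m M).filter (fun u => j ∈ u.parts),
      ((dp u) + (if j ∈ u.parts then 0 else 1)).choose (k+1) = (dp u).choose (k+1) := by
    intro u hu
    rw [Finset.mem_filter] at hu
    rw [if_pos hu.2, add_zero]
  have h2 : ∀ u ∈ (Pbox j m M).filter (fun u => j ∉ u.parts),
      ((dp u) + (if j ∈ u.parts then 0 else 1)).choose (k+1)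
        = (dp u).choose (k+1) + (dp u).choose k := by
    intro u hu
    rw [Finset.mem_filter] at hu
    rw [if_neg hu.2, Nat.choose_succ_succ]
    simp only [Nat.succ_eq_add_one]
    omega
  rw [Finset.sum_congr rfl h1, Finset.sum_congr rfl h2, Finset.sum_add_distrib]
  omega

lemma core0 (n m j M : ℕ) (hj : 1 ≤ j) (hjn : j ≤ n) :
    Fcoef n m j 0 (j + M) = overp j m 0 M := by
  rw [← core_sum n m j M 0 hj hjn, overp_eq_sum]
  simp

lemma Oqt_eq {R : Type*} [CommRing R] (q t : R) (a b X Y : ℕ) (hX : a*b+1 ≤ X)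
    (hY : b+1 ≤ Y) :
    Oqt q t a b = ∑ N ∈ range X, ∑ k ∈ range Y, (overp a b k N : R) * t^k * q^N := by
  unfold Oqt
  rw [Finset.sum_subset (Finset.range_subset_range.2 hX) (fun N _ hN =>
    Finset.sum_eq_zero fun k _ => by
      rw [overp_eq_zero_of_N (by rw [Finset.mem_range] at hN; omega)]
      simp)]
  refine Finset.sum_congr rfl fun N _ => ?_
  refine Finset.sum_subset (Finset.range_subset_range.2 hY) fun k _ hk => ?_
  rw [overp_eq_zero_of_k (by rw [Finset.mem_range] at hk; omega)]
  simp

lemma Oqt_symm {R : Type*} [CommRing R] (q t : R) (a b : ℕ) :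
    Oqt q t a b = Oqt q t b a := by
  rw [Oqt_eq q t a b (a*b+1) (a+b+1) le_rfl (by omega),
      Oqt_eq q t b a (a*b+1) (a+b+1) (by rw [Nat.mul_comm]) (by omega)]
  exact Finset.sum_congr rfl fun N _ => Finset.sum_congr rfl fun k _ => by
    rw [overp_symm]
end OverPf

open OverPf in
theorem stmt7 {R : Type*} [CommRing R] (q t : R) (m n : ℕ) (hm : 0 < m) (hn : 0 < n) :
    Oqt q t n (m + 1) = 1 + ∑ j ∈ Icc 1 n, q ^ j * (Oqt q t m j + t * Oqt q t m (j - 1)) := by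
  rw [Oqt_eq q t n (m+1) (n*(m+1)+1) (n+m+2) le_rfl (by omega)]
  set X := n*(m+1)+1 with hXdef
  set Y := n+m+2 with hYdef
  have hrange : range X = insert 0 (Ico 1 X) := by
    ext i
    simp only [Finset.mem_range, Finset.mem_insert, Finset.mem_Ico]
    omega
  rw [hrange, Finset.sum_insert (by simp)]
  have hzero : ∑ k ∈ range Y, (overp n (m+1) k 0 : R) * t^k * q^0 = 1 := by
    rw [Finset.sum_eq_single 0]
    · rw [overp_N_zero]; simp
    · intro k _ hk; rw [overp_N_zero, if_neg hk]; simp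
    · intro h; exact absurd (Finset.mem_range.2 (by omega)) h
  rw [hzero]
  congr 1
  have step1 : ∀ N ∈ Ico 1 X, ∑ k ∈ range Y, (overp n (m+1) k N : R) * t^k * q^N
      = ∑ j ∈ Icc 1 n, ∑ k ∈ range Y, (Fcoef n m j k N : R) * t^k * q^N := by
    intro N hN
    rw [Finset.mem_Ico] at hN
    calc ∑ k ∈ range Y, (overp n (m+1) k N : R) * t^k * q^N
        = ∑ k ∈ range Y, ∑ j ∈ Icc 1 n, (Fcoef n m j k N : R) * t^k * q^N := by
          refine Finset.sum_congr rfl fun k _ => ?_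
          rw [D1 n m k N hN.1]
          push_cast
          rw [Finset.sum_mul, Finset.sum_mul]
      _ = ∑ j ∈ Icc 1 n, ∑ k ∈ range Y, (Fcoef n m j k N : R) * t^k * q^N :=
          Finset.sum_comm
  rw [Finset.sum_congr rfl step1, Finset.sum_comm]
  apply Finset.sum_congr rfl
  intro j hj
  rw [Finset.mem_Icc] at hj
  have hsub : Finset.Ico j X ⊆ Finset.Ico 1 X := Finset.Ico_subset_Ico hj.1 le_rfl
  have hvan : ∀ N ∈ Finset.Ico 1 X, N ∉ Finset.Ico j X →
      ∑ k ∈ range Y, (Fcoef n m j k N : R) * t^k * q^N = 0 := by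
    intro N hN1 hN2
    rw [Finset.mem_Ico] at hN1
    refine Finset.sum_eq_zero fun k _ => ?_
    rw [F_vanish n m j k N (by rw [Finset.mem_Ico] at hN2; omega)]
    simp
  rw [← Finset.sum_subset hsub hvan, Finset.sum_Ico_eq_sum_range]
  have inner : ∀ M, ∑ k ∈ range Y, (Fcoef n m j k (j+M) : R) * t^k
      = (∑ k ∈ range Y, (overp j m k M : R) * t^k)
        + t * (∑ k ∈ range (n+m+1), (overp (j-1) m k M : R) * t^k) := by
    intro M
    rw [show Y = (n+m+1)+1 from rfl]
    rw [Finset.sum_range_succ' (fun k => (Fcoef n m j k (j+M) : R) * t^k)]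
    rw [Finset.sum_range_succ' (fun k => (overp j m k M : R) * t^k)]
    have e0 : (Fcoef n m j 0 (j+M) : R) = (overp j m 0 M : R) := by
      rw [core0 n m j M hj.1 hj.2]
    have hL : ∀ k ∈ range (n+m+1), (Fcoef n m j (k+1) (j+M) : R) * t^(k+1)
        = (overp j m (k+1) M : R)*t^(k+1) + (overp (j-1) m k M : R)*t^(k+1) := by
      intro k _
      rw [coreS n m j M k hj.1 hj.2]
      push_cast
      ring
    rw [e0, Finset.sum_congr rfl hL, Finset.sum_add_distrib, Finset.mul_sum]
    rw [Finset.sum_congr rfl (fun k _ => show (overp (j-1) m k M : R)*t^(k+1)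
      = t * ((overp (j-1) m k M : R) * t^k) by ring)]
    ring
  have hjm : j * m ≤ n * m := Nat.mul_le_mul_right m hj.2
  have hjm' : (j-1) * m ≤ n * m := Nat.mul_le_mul_right m (by omega)
  have hX' : X = n*m + n + 1 := by rw [hXdef]; ring
  calc ∑ M ∈ range (X-j), ∑ k ∈ range Y, (Fcoef n m j k (j+M) : R) * t^k * q^(j+M)
      = ∑ M ∈ range (X-j), ((∑ k ∈ range Y, (overp j m k M : R)*t^k)
          + t*(∑ k ∈ range (n+m+1), (overp (j-1) m k M : R)*t^k)) * (q^j * q^M) := by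
        refine Finset.sum_congr rfl fun M _ => ?_
        rw [← Finset.sum_mul, inner M, pow_add]
    _ = q^j * ((∑ M ∈ range (X-j), ∑ k ∈ range Y, (overp j m k M : R)*t^k*q^M)
          + t * (∑ M ∈ range (X-j), ∑ k ∈ range (n+m+1),
              (overp (j-1) m k M : R)*t^k*q^M)) := by
        have expand : ∀ M ∈ range (X-j),
            ((∑ k ∈ range Y, (overp j m k M : R)*t^k)
              + t*(∑ k ∈ range (n+m+1), (overp (j-1) m k M : R)*t^k)) * (q^j * q^M)
            = q^j * ((∑ k ∈ range Y, (overp j m k M : R)*t^k) * q^M)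
              + q^j * (t * ((∑ k ∈ range (n+m+1), (overp (j-1) m k M : R)*t^k) * q^M)) :=
          fun M _ => by ring
        rw [Finset.sum_congr rfl expand, Finset.sum_add_distrib, ← Finset.mul_sum,
          ← Finset.mul_sum, mul_add]
        congr 1
        · congr 1
          refine Finset.sum_congr rfl fun M _ => ?_
          rw [Finset.sum_mul]
        · rw [← Finset.mul_sum]
          congr 2
          refine Finset.sum_congr rfl fun M _ => ?_
          rw [Finset.sum_mul]
    _ = q^j * (Oqt q t j m + t * Oqt q t (j-1) m) := by
        rw [← Oqt_eq q t j m (X-j) Y (by omega) (by omega),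
            ← Oqt_eq q t (j-1) m (X-j) (n+m+1) (by omega) (by omega)]
    _ = q^j * (Oqt q t m j + t * Oqt q t m (j-1)) := by
        rw [Oqt_symm q t j m, Oqt_symm q t (j-1) m]
end

section
/- For positive integers m, n ≥ h: ∑_{k=0}^{h} q^{(n−k)(h−k)} ( O(n,k)·O(m, h−k) + t·O(n−1, k)·O(m−1, h−k−1) ) = O(m+n, h), where O(a,b) denotes the over-(q,t)-binomial coefficient for the (a−b)×b rectangle (interpreted as 0 when b < 0 or b > a). -/
open Finset Polynomial

def bigM (a b : ℕ) : Multiset ℕ := (Multiset.range (a+1)).bind (fun i => Multiset.replicate b i)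

theorem count_bigM (a b i : ℕ) (hia : i < a + 1) : Multiset.count i (bigM a b) = b := by
  have h1 : Multiset.count i (bigM a b)
      = ∑ j ∈ Finset.range (a+1), Multiset.count i (Multiset.replicate b j) := by
    rw [bigM, Multiset.count_bind]; rfl
  rw [h1]
  simp only [Multiset.count_replicate]
  rw [Finset.sum_ite_eq' (Finset.range (a+1)) i (fun _ => b)]
  simp [hia]

def Box (a b : ℕ) : Finset (Multiset ℕ × Finset ℕ) :=
  ((bigM a b).powerset.toFinset ×ˢ (Finset.range (a+1)).powerset).filter
    (fun x => (∀ i ∈ x.1, 0 < i ∧ i ≤ a) ∧ Multiset.card x.1 ≤ b ∧ x.2 ⊆ x.1.toFinset)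

theorem mem_Box {a b : ℕ} {x : Multiset ℕ × Finset ℕ} :
    x ∈ Box a b ↔ (∀ i ∈ x.1, 0 < i ∧ i ≤ a) ∧ Multiset.card x.1 ≤ b ∧ x.2 ⊆ x.1.toFinset := by
  constructor
  · intro hx; exact (Finset.mem_filter.1 hx).2
  · intro hx
    refine Finset.mem_filter.2 ⟨Finset.mem_product.2 ⟨?_, ?_⟩, hx⟩
    · rw [Multiset.mem_toFinset, Multiset.mem_powerset, Multiset.le_iff_count]
      intro i
      by_cases hi : i ∈ x.1
      · rw [count_bigM a b i (Nat.lt_succ_of_le (hx.1 i hi).2)]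
        exact le_trans (Multiset.count_le_card i x.1) hx.2.1
      · simp [Multiset.count_eq_zero_of_notMem hi]
    · rw [Finset.mem_powerset]
      intro i hi
      have := hx.2.2 hi
      rw [Multiset.mem_toFinset] at this
      exact Finset.mem_range.2 (Nat.lt_succ_of_le (hx.1 i this).2)

theorem overp_eq_s8 (a b k N : ℕ) :
    overp a b k N = (((Box a b).filter (fun x => x.1.sum = N ∧ x.2.card = k))).card := by
  rw [overp, ← Fintype.card_coe, ← Nat.card_eq_fintype_card]
  apply Nat.card_congr
  refine ⟨fun p => ⟨(p.1.1.parts, p.1.2), ?_⟩, fun x => ⟨(⟨x.1.1, ?_, ?_⟩, x.1.2), ?_⟩, ?_, ?_⟩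
  · obtain ⟨⟨P, S⟩, hle, hcard, hsub, hk⟩ := p
    refine Finset.mem_filter.2 ⟨mem_Box.2 ⟨fun i hi => ⟨P.parts_pos hi, hle i hi⟩, hcard, hsub⟩,
      P.parts_sum, hk⟩
  · intro i hi; exact ((mem_Box.1 (Finset.mem_filter.1 x.2).1).1 i hi).1
  · exact (Finset.mem_filter.1 x.2).2.1
  · obtain ⟨⟨s, S⟩, hx⟩ := x
    have h1 := Finset.mem_filter.1 hx
    have h2 := mem_Box.1 h1.1
    exact ⟨fun i hi => (h2.1 i hi).2, h2.2.1, h2.2.2, h1.2.2⟩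
  · intro p; rfl
  · intro x; rfl

theorem Oqt_eq {R : Type*} [CommRing R] (q t : R) (a b : ℕ) :
    Oqt q t a b = ∑ x ∈ Box a b, t ^ x.2.card * q ^ x.1.sum := by
  rw [Oqt, ← Finset.sum_product']
  have hmaps : ∀ x ∈ Box a b, (x.1.sum, x.2.card) ∈ range (a*b+1) ×ˢ range (b+1) := by
    intro x hx
    have h := mem_Box.1 hx
    refine Finset.mem_product.2 ⟨Finset.mem_range.2 (Nat.lt_succ_of_le ?_),
      Finset.mem_range.2 (Nat.lt_succ_of_le ?_)⟩
    · calc x.1.sum ≤ Multiset.card x.1 • a :=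
            Multiset.sum_le_card_nsmul x.1 a (fun i hi => (h.1 i hi).2)
        _ = Multiset.card x.1 * a := by rw [smul_eq_mul]
        _ ≤ b * a := Nat.mul_le_mul_right a h.2.1
        _ = a * b := Nat.mul_comm _ _
    · exact le_trans (Finset.card_le_card (fun i hi => h.2.2 hi))
        (le_trans (Multiset.toFinset_card_le x.1) h.2.1)
  rw [← Finset.sum_fiberwise_of_maps_to hmaps (fun x => t ^ x.2.card * q ^ x.1.sum)]
  apply Finset.sum_congr rfl
  intro p hp
  have : ((Box a b).filter (fun x => (x.1.sum, x.2.card) = p))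
      = ((Box a b).filter (fun x => x.1.sum = p.1 ∧ x.2.card = p.2)) := by
    apply Finset.filter_congr
    intro x _
    simp [Prod.ext_iff]
  rw [this]
  rw [Finset.sum_congr rfl (fun x hx => by
    have h := (Finset.mem_filter.1 hx).2
    rw [h.1, h.2])]
  rw [Finset.sum_const, overp_eq_s8 a b p.2 p.1, nsmul_eq_mul]
  ring


def cgt (n k : ℕ) (s : Multiset ℕ) : ℕ := Multiset.card (s.filter (fun i => n - k < i))

def kval (n h : ℕ) (s : Multiset ℕ) : ℕ :=
  Nat.findGreatest (fun k => cgt n k s + k ≤ h) h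

theorem cgt_mono {n : ℕ} {k k' : ℕ} (hkk : k ≤ k') (s : Multiset ℕ) : cgt n k s ≤ cgt n k' s := by
  apply Multiset.card_le_card
  apply Multiset.monotone_filter_right
  intro i hi
  exact lt_of_le_of_lt (Nat.sub_le_sub_left hkk n) hi

theorem kval_le (n h : ℕ) (s : Multiset ℕ) : kval n h s ≤ h := Nat.findGreatest_le h

theorem kval_P {n h : ℕ} {s : Multiset ℕ} (hs : Multiset.card s ≤ h) :
    cgt n (kval n h s) s + kval n h s ≤ h := by
  have h0 : cgt n 0 s + 0 ≤ h := by
    simpa [cgt] using le_trans (Multiset.card_le_card (Multiset.filter_le _ s)) hs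
  exact Nat.findGreatest_spec (P := fun k => cgt n k s + k ≤ h) (Nat.zero_le h) h0

theorem kval_not {n h : ℕ} {s : Multiset ℕ} (hs : Multiset.card s ≤ h)
    (hlt : kval n h s < h) : h < cgt n (kval n h s + 1) s + (kval n h s + 1) := by
  have h0 : ¬ (cgt n (kval n h s + 1) s + (kval n h s + 1) ≤ h) := by
    exact Nat.findGreatest_is_greatest (P := fun k => cgt n k s + k ≤ h)
      (n := h) (Nat.lt_succ_of_le (le_refl _)) (Nat.succ_le_of_lt hlt)
  omega

theorem kval_eq {n h k : ℕ} {s : Multiset ℕ} (hk : k ≤ h)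
    (hP : cgt n k s + k ≤ h) (hP' : k < h → h < cgt n (k+1) s + (k+1)) :
    kval n h s = k := by
  have h1 : k ≤ kval n h s := Nat.le_findGreatest hk hP
  by_contra hne
  have h2 : k < kval n h s := lt_of_le_of_ne h1 (fun a => hne a.symm)
  have h3 : kval n h s ≤ h := kval_le n h s
  have h4 : cgt n (kval n h s) s + kval n h s ≤ h := by
    exact Nat.findGreatest_spec (P := fun k => cgt n k s + k ≤ h) hk hP
  have h5 := hP' (lt_of_lt_of_le h2 h3)
  have h6 : cgt n (k+1) s + (k+1) ≤ cgt n (kval n h s) s + kval n h s := by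
    have h7 : cgt n (k+1) s ≤ cgt n (kval n h s) s := cgt_mono (n := n) h2 s
    omega
  omega

/-- assembled multiset from the μ-part `w` (top rows, shifted) and ν-part `u` -/
def asms (n h k : ℕ) (w u : Multiset ℕ) : Multiset ℕ :=
  w.map (fun i => i + (n-k)) + Multiset.replicate (h - k - Multiset.card w) (n-k) + u

section asmsLemmas

variable {n h k : ℕ} {w u : Multiset ℕ}

theorem asms_card (hwc : Multiset.card w ≤ h - k) :
    Multiset.card (asms n h k w u) = (h - k) + Multiset.card u := by
  rw [asms]
  simp [Multiset.card_replicate]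
  omega

theorem asms_filter_gt (hw_pos : ∀ i ∈ w, 0 < i) (hu_le : ∀ i ∈ u, i ≤ n - k) :
    (asms n h k w u).filter (fun i => n - k < i) = w.map (fun i => i + (n-k)) := by
  rw [asms, Multiset.filter_add, Multiset.filter_add]
  rw [Multiset.filter_eq_self.2 (by
    intro i hi
    obtain ⟨j, hj, rfl⟩ := Multiset.mem_map.1 hi
    have := hw_pos j hj
    omega)]
  rw [Multiset.filter_eq_nil.2 (by
    intro i hi
    have := Multiset.eq_of_mem_replicate hi
    omega)]
  rw [Multiset.filter_eq_nil.2 (by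
    intro i hi
    have := hu_le i hi
    omega)]
  simp

theorem asms_filter_le (hw_pos : ∀ i ∈ w, 0 < i) (hu_le : ∀ i ∈ u, i ≤ n - k) :
    (asms n h k w u).filter (fun i => i ≤ n - k)
      = Multiset.replicate (h - k - Multiset.card w) (n-k) + u := by
  rw [asms, Multiset.filter_add, Multiset.filter_add]
  rw [Multiset.filter_eq_nil.2 (by
    intro i hi
    obtain ⟨j, hj, rfl⟩ := Multiset.mem_map.1 hi
    have := hw_pos j hj
    omega)]
  rw [Multiset.filter_eq_self.2 (by
    intro i hi
    have := Multiset.eq_of_mem_replicate hi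
    omega)]
  rw [Multiset.filter_eq_self.2 (by
    intro i hi
    exact hu_le i hi)]
  simp

theorem asms_cgt_succ_ge (hnh : h ≤ n) (hk : k ≤ h)
    (hw_pos : ∀ i ∈ w, 0 < i) (hwc : Multiset.card w ≤ h - k) :
    h - k ≤ cgt n (k+1) (asms n h k w u) := by
  rw [cgt, asms, Multiset.filter_add, Multiset.filter_add]
  rw [Multiset.filter_eq_self.2 (by
    intro i hi
    obtain ⟨j, hj, rfl⟩ := Multiset.mem_map.1 hi
    have := hw_pos j hj
    omega)]
  by_cases hB : h - k - Multiset.card w = 0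
  · simp only [hB, Multiset.replicate_zero, Multiset.filter_zero, Multiset.card_add]
    simp only [Multiset.card_map]
    omega
  · have hkh : k < h := by omega
    have hv1 : 1 ≤ n - k := by omega
    rw [Multiset.filter_eq_self.2 (by
      intro i hi
      have := Multiset.eq_of_mem_replicate hi
      omega)]
    simp only [Multiset.card_add, Multiset.card_map, Multiset.card_replicate]
    omega

theorem asms_kval (hnh : h ≤ n) (hk : k ≤ h)
    (hw_pos : ∀ i ∈ w, 0 < i) (hu_le : ∀ i ∈ u, i ≤ n - k)
    (hwc : Multiset.card w ≤ h - k) :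
    kval n h (asms n h k w u) = k := by
  apply kval_eq hk
  · rw [cgt, asms_filter_gt hw_pos hu_le]
    simp only [Multiset.card_map]
    omega
  · intro hkh
    have := asms_cgt_succ_ge (u := u) hnh hk hw_pos hwc
    omega

end asmsLemmas

def mu (n k : ℕ) (s : Multiset ℕ) : Multiset ℕ :=
  (s.filter (fun i => n - k < i)).map (fun i => i - (n - k))

def nu (n h k : ℕ) (s : Multiset ℕ) : Multiset ℕ :=
  s.filter (fun i => i ≤ n - k) - Multiset.replicate (h - k - cgt n k s) (n - k)

theorem sum_map_shift (v : ℕ) (w : Multiset ℕ) :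
    (w.map (fun i => i + v)).sum = w.sum + Multiset.card w * v := by
  induction w using Multiset.induction with
  | empty => simp
  | cons a s ih => simp [ih]; ring

theorem asms_sum {n h k : ℕ} {w u : Multiset ℕ} (hwc : Multiset.card w ≤ h - k) :
    (asms n h k w u).sum = u.sum + w.sum + (h - k) * (n - k) := by
  rw [asms]
  simp only [Multiset.sum_add, sum_map_shift, Multiset.sum_replicate, smul_eq_mul]
  have : Multiset.card w * (n-k) + (h - k - Multiset.card w) * (n-k) = (h-k) * (n-k) := by
    rw [← Nat.add_mul]
    congr 1
    omega
  omega

theorem cgt_succ_eq {n k : ℕ} {s : Multiset ℕ} (hpos : ∀ i ∈ s, 0 < i) :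
    cgt n (k+1) s = cgt n k s + Multiset.count (n-k) s := by
  have e1 : s.filter (fun i => n-(k+1) < i)
      = s.filter (fun i => n-k < i ∨ n-k = i) := by
    apply Multiset.filter_congr
    intro i hi
    have := hpos i hi
    omega
  have e2 : s.filter (fun i => n-k < i) + s.filter (fun i => n-k = i)
      = s.filter (fun i => n-k < i ∨ n-k = i) := by
    rw [Multiset.filter_add_filter]
    rw [show s.filter (fun a => (n-k < a) ∧ (n-k = a)) = 0 from
      Multiset.filter_eq_nil.2 (fun i _ => by omega)]
    simp
  rw [cgt, e1, ← e2]
  simp only [Multiset.card_add]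
  rw [cgt, Multiset.count_eq_card_filter_eq]

section disLemmas

variable {n h k : ℕ} {s : Multiset ℕ}

/-- the basic splitting of `s` -/
theorem split_s : s.filter (fun i => n - k < i) + s.filter (fun i => i ≤ n - k) = s := by
  have : s.filter (fun i => i ≤ n - k) = s.filter (fun i => ¬ (n - k < i)) := by
    apply Multiset.filter_congr; intro i _; omega
  rw [this, Multiset.filter_add_not]

theorem count_nu_ge (hpos : ∀ i ∈ s, 0 < i) (hcard : Multiset.card s ≤ h)
    (hkv : kval n h s = k) : h - k - cgt n k s ≤ Multiset.count (n-k) s := by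
  by_cases hkh : k < h
  · have h1 := kval_not hcard (hkv ▸ hkh)
    rw [hkv] at h1
    have h2 := cgt_succ_eq (k := k) (n := n) hpos
    omega
  · have : k ≤ h := hkv ▸ kval_le n h s
    omega

theorem repl_le_filter (hpos : ∀ i ∈ s, 0 < i) (hcard : Multiset.card s ≤ h)
    (hkv : kval n h s = k) :
    Multiset.replicate (h - k - cgt n k s) (n-k) ≤ s.filter (fun i => i ≤ n - k) := by
  rw [Multiset.le_iff_count]
  intro j
  rw [Multiset.count_replicate]
  by_cases hj : n - k = j
  · subst hj
    simp only [if_pos rfl]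
    rw [Multiset.count_filter_of_pos (p := fun i => i ≤ n - k) (le_refl _)]
    exact count_nu_ge hpos hcard hkv
  · simp [hj]

theorem nu_add_repl (hpos : ∀ i ∈ s, 0 < i) (hcard : Multiset.card s ≤ h)
    (hkv : kval n h s = k) :
    nu n h k s + Multiset.replicate (h - k - cgt n k s) (n-k)
      = s.filter (fun i => i ≤ n - k) :=
  tsub_add_cancel_of_le (repl_le_filter hpos hcard hkv)

theorem nu_le_filter : nu n h k s ≤ s.filter (fun i => i ≤ n - k) := tsub_le_self

theorem nu_le_s : nu n h k s ≤ s := le_trans nu_le_filter (Multiset.filter_le _ s)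

theorem count_nu (hpos : ∀ i ∈ s, 0 < i) (hcard : Multiset.card s ≤ h)
    (hkv : kval n h s = k) (j : ℕ) (hj : j ≤ n - k) :
    Multiset.count j (nu n h k s)
      = Multiset.count j s - (if n - k = j then h - k - cgt n k s else 0) := by
  have e := nu_add_repl hpos hcard hkv
  have e2 := congrArg (Multiset.count j) e
  rw [Multiset.count_add, Multiset.count_replicate,
    Multiset.count_filter_of_pos (p := fun i => i ≤ n - k) hj] at e2
  omega

theorem card_nu (hpos : ∀ i ∈ s, 0 < i) (hcard : Multiset.card s ≤ h)
    (hkv : kval n h s = k) :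
    Multiset.card (nu n h k s) + (h - k - cgt n k s)
      = Multiset.card s - cgt n k s := by
  have e := congrArg Multiset.card (nu_add_repl hpos hcard hkv)
  rw [Multiset.card_add, Multiset.card_replicate] at e
  have e2 := congrArg Multiset.card (split_s (n := n) (k := k) (s := s))
  rw [Multiset.card_add] at e2
  rw [cgt] at *
  omega

theorem card_nu_le (hpos : ∀ i ∈ s, 0 < i) (hcard : Multiset.card s ≤ h)
    (hkv : kval n h s = k) : Multiset.card (nu n h k s) ≤ k := by
  have h1 := card_nu hpos hcard hkv
  have h2 : cgt n k s + k ≤ h := hkv ▸ kval_P hcard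
  have e2 := congrArg Multiset.card (split_s (n := n) (k := k) (s := s))
  rw [Multiset.card_add] at e2
  rw [cgt] at *
  omega

theorem map_sub_add_roundtrip (v : ℕ) (w : Multiset ℕ) (hv : ∀ i ∈ w, v ≤ i) :
    (w.map (fun i => i - v)).map (fun i => i + v) = w := by
  rw [Multiset.map_map]
  rw [show w = Multiset.map id w by simp]
  apply Multiset.map_congr
  · simp
  · intro i hi
    have := hv i (by simpa using hi)
    simp
    omega

/-- reassembling the disassembled multiset gives back `s` -/
theorem dis_asms (hpos : ∀ i ∈ s, 0 < i) (hcard : Multiset.card s ≤ h)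
    (hkv : kval n h s = k) :
    asms n h k (mu n k s) (nu n h k s) = s := by
  rw [asms, mu, Multiset.card_map]
  rw [map_sub_add_roundtrip (n-k) _ (by
    intro i hi
    have := Multiset.of_mem_filter hi
    omega)]
  have : cgt n k s = Multiset.card (s.filter (fun i => n - k < i)) := rfl
  rw [← this, add_assoc, add_comm (Multiset.replicate _ _) (nu n h k s),
    nu_add_repl hpos hcard hkv, split_s]

theorem sum_dis (hpos : ∀ i ∈ s, 0 < i) (hcard : Multiset.card s ≤ h)
    (hkv : kval n h s = k) :
    s.sum = (nu n h k s).sum + (mu n k s).sum + (h - k) * (n - k) := by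
  conv_lhs => rw [← dis_asms hpos hcard hkv]
  apply asms_sum
  rw [mu, Multiset.card_map, ← cgt]
  have h2 : cgt n k s + k ≤ h := hkv ▸ kval_P hcard
  omega

end disLemmas

theorem asms_mu {n h k : ℕ} {w u : Multiset ℕ}
    (hw_pos : ∀ i ∈ w, 0 < i) (hu_le : ∀ i ∈ u, i ≤ n - k) :
    mu n k (asms n h k w u) = w := by
  rw [mu, asms_filter_gt hw_pos hu_le, Multiset.map_map]
  rw [show w = Multiset.map id w by simp]
  apply Multiset.map_congr
  · simp
  · intro i _; simp

theorem asms_nu {n h k : ℕ} {w u : Multiset ℕ}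
    (hw_pos : ∀ i ∈ w, 0 < i) (hu_le : ∀ i ∈ u, i ≤ n - k)
    (hwc : Multiset.card w ≤ h - k) :
    nu n h k (asms n h k w u) = u := by
  have hc : cgt n k (asms n h k w u) = Multiset.card w := by
    rw [cgt, asms_filter_gt hw_pos hu_le, Multiset.card_map]
  rw [nu, hc, asms_filter_le hw_pos hu_le, add_tsub_cancel_left]

theorem main_bij {R : Type*} [CommRing R] (q t : R) (m n h k : ℕ)
    (hmh : h ≤ m) (hnh : h ≤ n) (hk : k ≤ h) :
    ∑ x ∈ (Box (m+n-h) h).filter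
        (fun x => kval n h x.1 = k ∧ ¬ ((n-k) ∈ x.2 ∧ (n-k) ∉ nu n h k x.1)),
      t ^ x.2.card * q ^ x.1.sum
    = q ^ ((n-k)*(h-k)) * (Oqt q t (n-k) k * Oqt q t (m-h+k) (h-k)) := by
  rw [Oqt_eq, Oqt_eq, Finset.sum_mul_sum, ← Finset.sum_product', Finset.mul_sum]
  refine Finset.sum_nbij'
    (fun x => ((nu n h k x.1, x.2.filter (fun i => i ≤ n-k)),
               (mu n k x.1, (x.2.filter (fun i => n-k < i)).image (fun i => i - (n-k)))))
    (fun p => (asms n h k p.2.1 p.1.1, p.2.2.image (fun i => i + (n-k)) ∪ p.1.2))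
    ?_ ?_ ?_ ?_ ?_
  · -- forward membership
    intro x hx
    obtain ⟨hx1, hx2, hx3⟩ := Finset.mem_filter.1 hx
    obtain ⟨hb1, hb2, hb3⟩ := mem_Box.1 hx1
    have hpos : ∀ i ∈ x.1, 0 < i := fun i hi => (hb1 i hi).1
    have hcgt : cgt n k x.1 + k ≤ h := hx2 ▸ kval_P hb2
    refine Finset.mem_product.2 ⟨mem_Box.2 ⟨?_, ?_, ?_⟩, mem_Box.2 ⟨?_, ?_, ?_⟩⟩
    · intro i hi
      have hif : i ∈ x.1.filter (fun i => i ≤ n-k) := Multiset.mem_of_le nu_le_filter hi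
      exact ⟨hpos i (Multiset.mem_of_le (Multiset.filter_le _ _) hif),
        (Multiset.mem_filter.1 hif).2⟩
    · exact card_nu_le hpos hb2 hx2
    · intro i hi
      obtain ⟨hiS, hiv⟩ := Finset.mem_filter.1 hi
      have his : i ∈ x.1 := Multiset.mem_toFinset.1 (hb3 hiS)
      by_cases hieq : n - k = i
      · subst hieq
        rw [Multiset.mem_toFinset]
        by_contra hnot
        exact hx3 ⟨hiS, hnot⟩
      · rw [Multiset.mem_toFinset, ← Multiset.count_pos,
          count_nu hpos hb2 hx2 i hiv, if_neg hieq]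
        have := Multiset.count_pos.2 his
        omega
    · intro i hi
      obtain ⟨j, hj, rfl⟩ := Multiset.mem_map.1 hi
      have hjs := Multiset.mem_of_le (Multiset.filter_le _ _) hj
      have hjgt := Multiset.of_mem_filter hj
      have := (hb1 j hjs).2
      constructor <;> omega
    · have : Multiset.card (mu n k x.1) = cgt n k x.1 := by
        simp only [mu, cgt, Multiset.card_map]
      rw [this]
      omega
    · intro i hi
      obtain ⟨j, hj, rfl⟩ := Finset.mem_image.1 hi
      obtain ⟨hjS, hjv⟩ := Finset.mem_filter.1 hj
      have hjs : j ∈ x.1 := Multiset.mem_toFinset.1 (hb3 hjS)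
      rw [Multiset.mem_toFinset]
      simp only [mu]
      exact Multiset.mem_map.2 ⟨j, Multiset.mem_filter.2 ⟨hjs, hjv⟩, rfl⟩
  · -- backward membership
    intro p hp
    obtain ⟨hp1, hp2⟩ := Finset.mem_product.1 hp
    obtain ⟨hu1, hu2, hu3⟩ := mem_Box.1 hp1
    obtain ⟨hw1, hw2, hw3⟩ := mem_Box.1 hp2
    have hu_pos : ∀ i ∈ p.1.1, 0 < i := fun i hi => (hu1 i hi).1
    have hu_le : ∀ i ∈ p.1.1, i ≤ n - k := fun i hi => (hu1 i hi).2
    have hw_pos : ∀ i ∈ p.2.1, 0 < i := fun i hi => (hw1 i hi).1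
    have hw_le : ∀ i ∈ p.2.1, i ≤ m-h+k := fun i hi => (hw1 i hi).2
    refine Finset.mem_filter.2 ⟨mem_Box.2 ⟨?_, ?_, ?_⟩, ?_, ?_⟩
    · intro i hi
      simp only [asms] at hi
      rw [Multiset.mem_add, Multiset.mem_add] at hi
      rcases hi with (hi | hi) | hi
      · obtain ⟨j, hj, rfl⟩ := Multiset.mem_map.1 hi
        have h1 := hw_pos j hj
        have h2 := hw_le j hj
        constructor <;> omega
      · obtain ⟨hc, rfl⟩ := Multiset.mem_replicate.1 hi
        constructor <;> omega
      · exact ⟨hu_pos i hi, by have := hu_le i hi; omega⟩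
    · show Multiset.card (asms n h k p.2.1 p.1.1) ≤ h
      rw [asms_card hw2]
      omega
    · intro i hi
      rcases Finset.mem_union.1 hi with hi | hi
      · obtain ⟨j, hj, rfl⟩ := Finset.mem_image.1 hi
        have : j ∈ p.2.1 := Multiset.mem_toFinset.1 (hw3 hj)
        rw [Multiset.mem_toFinset]
        simp only [asms]
        exact Multiset.mem_add.2 (Or.inl (Multiset.mem_add.2 (Or.inl
          (Multiset.mem_map.2 ⟨j, this, rfl⟩))))
      · have : i ∈ p.1.1 := Multiset.mem_toFinset.1 (hu3 hi)
        rw [Multiset.mem_toFinset]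
        simp only [asms]
        exact Multiset.mem_add.2 (Or.inr this)
    · exact asms_kval hnh hk hw_pos hu_le hw2
    · rw [asms_nu hw_pos hu_le hw2]
      rintro ⟨hvS, hvu⟩
      rcases Finset.mem_union.1 hvS with hv | hv
      · obtain ⟨j, hj, hje⟩ := Finset.mem_image.1 hv
        have : j ∈ p.2.1 := Multiset.mem_toFinset.1 (hw3 hj)
        have := hw_pos j this
        omega
      · exact hvu (Multiset.mem_toFinset.1 (hu3 hv))
  · -- left inverse
    intro x hx
    obtain ⟨hx1, hx2, hx3⟩ := Finset.mem_filter.1 hx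
    obtain ⟨hb1, hb2, hb3⟩ := mem_Box.1 hx1
    have hpos : ∀ i ∈ x.1, 0 < i := fun i hi => (hb1 i hi).1
    have e1 : asms n h k (mu n k x.1) (nu n h k x.1) = x.1 := dis_asms hpos hb2 hx2
    refine Prod.ext e1 ?_
    show ((x.2.filter (fun i => n-k < i)).image (fun i => i - (n-k))).image (fun i => i + (n-k))
        ∪ x.2.filter (fun i => i ≤ n-k) = x.2
    rw [Finset.image_image]
    rw [show (x.2.filter (fun i => n-k < i)).image ((fun i => i + (n-k)) ∘ (fun i => i - (n-k)))
        = (x.2.filter (fun i => n-k < i)).image id by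
      apply Finset.image_congr
      intro i hi
      have := (Finset.mem_filter.1 hi).2
      simp only [Function.comp_apply, id_eq]
      omega]
    rw [Finset.image_id]
    ext a
    simp only [Finset.mem_union, Finset.mem_filter]
    constructor
    · rintro (⟨ha, _⟩ | ⟨ha, _⟩) <;> exact ha
    · intro ha
      rcases Nat.lt_or_ge (n-k) a with hlt | hge
      · exact Or.inl ⟨ha, hlt⟩
      · exact Or.inr ⟨ha, hge⟩
  · -- right inverse
    intro p hp
    obtain ⟨hp1, hp2⟩ := Finset.mem_product.1 hp
    obtain ⟨hu1, hu2, hu3⟩ := mem_Box.1 hp1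
    obtain ⟨hw1, hw2, hw3⟩ := mem_Box.1 hp2
    have hu_pos : ∀ i ∈ p.1.1, 0 < i := fun i hi => (hu1 i hi).1
    have hu_le : ∀ i ∈ p.1.1, i ≤ n - k := fun i hi => (hu1 i hi).2
    have hw_pos : ∀ i ∈ p.2.1, 0 < i := fun i hi => (hw1 i hi).1
    have himg_gt : ∀ i ∈ p.2.2.image (fun i => i + (n-k)), n - k < i := by
      intro i hi
      obtain ⟨j, hj, rfl⟩ := Finset.mem_image.1 hi
      have := hw_pos j (Multiset.mem_toFinset.1 (hw3 hj))
      omega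
    have hU_le : ∀ i ∈ p.1.2, i ≤ n - k := by
      intro i hi
      exact hu_le i (Multiset.mem_toFinset.1 (hu3 hi))
    have efil_le : (p.2.2.image (fun i => i + (n-k)) ∪ p.1.2).filter (fun i => i ≤ n-k)
        = p.1.2 := by
      rw [Finset.filter_union]
      rw [Finset.filter_false_of_mem (fun i hi => by have := himg_gt i hi; omega)]
      rw [Finset.filter_true_of_mem hU_le, Finset.empty_union]
    have efil_gt : (p.2.2.image (fun i => i + (n-k)) ∪ p.1.2).filter (fun i => n-k < i)
        = p.2.2.image (fun i => i + (n-k)) := by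
      rw [Finset.filter_union]
      rw [Finset.filter_true_of_mem himg_gt]
      rw [Finset.filter_false_of_mem (fun i hi => by have := hU_le i hi; omega),
        Finset.union_empty]
    have eimg : (p.2.2.image (fun i => i + (n-k))).image (fun i => i - (n-k)) = p.2.2 := by
      rw [Finset.image_image]
      rw [show p.2.2.image ((fun i => i - (n-k)) ∘ (fun i => i + (n-k)))
          = p.2.2.image id by
        apply Finset.image_congr
        intro i _
        simp]
      rw [Finset.image_id]
    dsimp only
    refine Prod.ext (Prod.ext ?_ ?_) (Prod.ext ?_ ?_)
    · exact asms_nu hw_pos hu_le hw2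
    · exact efil_le
    · exact asms_mu hw_pos hu_le
    · rw [efil_gt, eimg]
  · -- weights
    intro x hx
    obtain ⟨hx1, hx2, hx3⟩ := Finset.mem_filter.1 hx
    obtain ⟨hb1, hb2, hb3⟩ := mem_Box.1 hx1
    have hpos : ∀ i ∈ x.1, 0 < i := fun i hi => (hb1 i hi).1
    have hsum : x.1.sum = (nu n h k x.1).sum + (mu n k x.1).sum + (h-k)*(n-k) :=
      sum_dis hpos hb2 hx2
    have hcardS : x.2.card
        = (x.2.filter (fun i => i ≤ n-k)).card + (x.2.filter (fun i => n-k < i)).card := by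
      rw [show x.2.filter (fun i => n-k < i) = x.2.filter (fun i => ¬ (i ≤ n-k)) from
        Finset.filter_congr (fun i _ => by omega)]
      rw [Finset.card_filter_add_card_filter_not]
    have hcardimg : ((x.2.filter (fun i => n-k < i)).image (fun i => i - (n-k))).card
        = (x.2.filter (fun i => n-k < i)).card := by
      apply Finset.card_image_of_injOn
      intro a ha b hb hab
      have ha2 := (Finset.mem_filter.1 (Finset.mem_coe.1 ha)).2
      have hb2' := (Finset.mem_filter.1 (Finset.mem_coe.1 hb)).2
      have hab' : a - (n-k) = b - (n-k) := hab
      omega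
    dsimp only
    rw [hsum, hcardS, hcardimg, pow_add, pow_add, pow_add, Nat.mul_comm (h-k) (n-k)]
    ring

theorem t_bij {R : Type*} [CommRing R] (q t : R) (m n h k : ℕ)
    (hmh : h ≤ m) (hnh : h ≤ n) (hkh : k < h) :
    ∑ x ∈ (Box (m+n-h) h).filter
        (fun x => kval n h x.1 = k ∧ ((n-k) ∈ x.2 ∧ (n-k) ∉ nu n h k x.1)),
      t ^ x.2.card * q ^ x.1.sum
    = q ^ ((n-k)*(h-k)) * (t * (Oqt q t (n-1-k) k * Oqt q t (m-h+k) (h-k-1))) := by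
  have hk : k ≤ h := le_of_lt hkh
  rw [Oqt_eq, Oqt_eq, Finset.sum_mul_sum, ← Finset.sum_product', Finset.mul_sum,
    Finset.mul_sum]
  refine Finset.sum_nbij'
    (fun x => ((nu n h k x.1, x.2.filter (fun i => i < n-k)),
               (mu n k x.1, (x.2.filter (fun i => n-k < i)).image (fun i => i - (n-k)))))
    (fun p => (asms n h k p.2.1 p.1.1,
               insert (n-k) (p.2.2.image (fun i => i + (n-k)) ∪ p.1.2)))
    ?_ ?_ ?_ ?_ ?_
  · -- forward membership
    intro x hx
    obtain ⟨hx1, hx2, hvS, hvnu⟩ := Finset.mem_filter.1 hx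
    obtain ⟨hb1, hb2, hb3⟩ := mem_Box.1 hx1
    have hpos : ∀ i ∈ x.1, 0 < i := fun i hi => (hb1 i hi).1
    have hvs : (n-k) ∈ x.1 := Multiset.mem_toFinset.1 (hb3 hvS)
    have hv1 : 0 < n - k := hpos _ hvs
    have hcgt : cgt n k x.1 + k ≤ h := hx2 ▸ kval_P hb2
    have hcv : Multiset.count (n-k) (nu n h k x.1) = 0 :=
      Multiset.count_eq_zero_of_notMem hvnu
    rw [count_nu hpos hb2 hx2 (n-k) (le_refl _), if_pos rfl] at hcv
    have hke : h - k - cgt n k x.1 = Multiset.count (n-k) x.1 := by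
      have := count_nu_ge hpos hb2 hx2
      omega
    have hcnt1 : 1 ≤ Multiset.count (n-k) x.1 := Multiset.count_pos.2 hvs
    have hcgt' : cgt n k x.1 ≤ h - k - 1 := by omega
    refine Finset.mem_product.2 ⟨mem_Box.2 ⟨?_, ?_, ?_⟩, mem_Box.2 ⟨?_, ?_, ?_⟩⟩
    · intro i hi
      have hif : i ∈ x.1.filter (fun j => j ≤ n-k) := Multiset.mem_of_le nu_le_filter hi
      have hile : i ≤ n - k := (Multiset.mem_filter.1 hif).2
      have hine : i ≠ n - k := by
        rintro rfl
        exact hvnu hi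
      exact ⟨hpos i (Multiset.mem_of_le (Multiset.filter_le _ _) hif), by omega⟩
    · exact card_nu_le hpos hb2 hx2
    · intro i hi
      obtain ⟨hiS, hiv⟩ := Finset.mem_filter.1 hi
      have his : i ∈ x.1 := Multiset.mem_toFinset.1 (hb3 hiS)
      rw [Multiset.mem_toFinset, ← Multiset.count_pos,
        count_nu hpos hb2 hx2 i (le_of_lt hiv), if_neg (by omega)]
      have := Multiset.count_pos.2 his
      omega
    · intro i hi
      obtain ⟨j, hj, rfl⟩ := Multiset.mem_map.1 hi
      have hjs := Multiset.mem_of_le (Multiset.filter_le _ _) hj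
      have hjgt := (Multiset.mem_filter.1 hj).2
      have := (hb1 j hjs).2
      constructor <;> omega
    · have : Multiset.card (mu n k x.1) = cgt n k x.1 := by
        simp only [mu, cgt, Multiset.card_map]
      rw [this]
      omega
    · intro i hi
      obtain ⟨j, hj, rfl⟩ := Finset.mem_image.1 hi
      obtain ⟨hjS, hjv⟩ := Finset.mem_filter.1 hj
      have hjs : j ∈ x.1 := Multiset.mem_toFinset.1 (hb3 hjS)
      rw [Multiset.mem_toFinset]
      simp only [mu]
      exact Multiset.mem_map.2 ⟨j, Multiset.mem_filter.2 ⟨hjs, hjv⟩, rfl⟩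
  · -- backward membership
    intro p hp
    obtain ⟨hp1, hp2⟩ := Finset.mem_product.1 hp
    obtain ⟨hu1, hu2, hu3⟩ := mem_Box.1 hp1
    obtain ⟨hw1, hw2, hw3⟩ := mem_Box.1 hp2
    have hu_pos : ∀ i ∈ p.1.1, 0 < i := fun i hi => (hu1 i hi).1
    have hu_le : ∀ i ∈ p.1.1, i ≤ n - k := fun i hi => by have := (hu1 i hi).2; omega
    have hw_pos : ∀ i ∈ p.2.1, 0 < i := fun i hi => (hw1 i hi).1
    have hw_le : ∀ i ∈ p.2.1, i ≤ m-h+k := fun i hi => (hw1 i hi).2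
    have hwc' : Multiset.card p.2.1 ≤ h - k := by omega
    have hv1 : 0 < n - k := by omega
    have hvmem : (n-k) ∈ asms n h k p.2.1 p.1.1 := by
      simp only [asms]
      refine Multiset.mem_add.2 (Or.inl (Multiset.mem_add.2 (Or.inr ?_)))
      rw [Multiset.mem_replicate]
      constructor
      · omega
      · rfl
    refine Finset.mem_filter.2 ⟨mem_Box.2 ⟨?_, ?_, ?_⟩, ?_, ?_, ?_⟩
    · intro i hi
      simp only [asms] at hi
      rw [Multiset.mem_add, Multiset.mem_add] at hi
      rcases hi with (hi | hi) | hi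
      · obtain ⟨j, hj, rfl⟩ := Multiset.mem_map.1 hi
        have h1 := hw_pos j hj
        have h2 := hw_le j hj
        constructor <;> omega
      · obtain ⟨hc, rfl⟩ := Multiset.mem_replicate.1 hi
        constructor <;> omega
      · exact ⟨hu_pos i hi, by have := hu_le i hi; omega⟩
    · show Multiset.card (asms n h k p.2.1 p.1.1) ≤ h
      rw [asms_card hwc']
      omega
    · intro i hi
      rcases Finset.mem_insert.1 hi with rfl | hi
      · exact Multiset.mem_toFinset.2 hvmem
      rcases Finset.mem_union.1 hi with hi | hi
      · obtain ⟨j, hj, rfl⟩ := Finset.mem_image.1 hi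
        have : j ∈ p.2.1 := Multiset.mem_toFinset.1 (hw3 hj)
        rw [Multiset.mem_toFinset]
        simp only [asms]
        exact Multiset.mem_add.2 (Or.inl (Multiset.mem_add.2 (Or.inl
          (Multiset.mem_map.2 ⟨j, this, rfl⟩))))
      · have : i ∈ p.1.1 := Multiset.mem_toFinset.1 (hu3 hi)
        rw [Multiset.mem_toFinset]
        simp only [asms]
        exact Multiset.mem_add.2 (Or.inr this)
    · exact asms_kval hnh hk hw_pos hu_le hwc'
    · exact Finset.mem_insert_self _ _
    · rw [asms_nu hw_pos hu_le hwc']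
      intro hv
      have := hu1 _ hv
      omega
  · -- left inverse
    intro x hx
    obtain ⟨hx1, hx2, hvS, hvnu⟩ := Finset.mem_filter.1 hx
    obtain ⟨hb1, hb2, hb3⟩ := mem_Box.1 hx1
    have hpos : ∀ i ∈ x.1, 0 < i := fun i hi => (hb1 i hi).1
    have e1 : asms n h k (mu n k x.1) (nu n h k x.1) = x.1 := dis_asms hpos hb2 hx2
    refine Prod.ext e1 ?_
    show insert (n-k)
        (((x.2.filter (fun i => n-k < i)).image (fun i => i - (n-k))).image (fun i => i + (n-k))
          ∪ x.2.filter (fun i => i < n-k)) = x.2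
    rw [Finset.image_image]
    rw [show (x.2.filter (fun i => n-k < i)).image ((fun i => i + (n-k)) ∘ (fun i => i - (n-k)))
        = (x.2.filter (fun i => n-k < i)).image id by
      apply Finset.image_congr
      intro i hi
      have := (Finset.mem_filter.1 hi).2
      simp only [Function.comp_apply, id_eq]
      omega]
    rw [Finset.image_id]
    ext a
    simp only [Finset.mem_insert, Finset.mem_union, Finset.mem_filter]
    constructor
    · rintro (rfl | ⟨ha, _⟩ | ⟨ha, _⟩)
      · exact hvS
      · exact ha
      · exact ha
    · intro ha
      rcases Nat.lt_trichotomy (n-k) a with hlt | heq | hgt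
      · exact Or.inr (Or.inl ⟨ha, hlt⟩)
      · exact Or.inl heq.symm
      · exact Or.inr (Or.inr ⟨ha, hgt⟩)
  · -- right inverse
    intro p hp
    obtain ⟨hp1, hp2⟩ := Finset.mem_product.1 hp
    obtain ⟨hu1, hu2, hu3⟩ := mem_Box.1 hp1
    obtain ⟨hw1, hw2, hw3⟩ := mem_Box.1 hp2
    have hu_pos : ∀ i ∈ p.1.1, 0 < i := fun i hi => (hu1 i hi).1
    have hu_le : ∀ i ∈ p.1.1, i ≤ n - k := fun i hi => by have := (hu1 i hi).2; omega
    have hw_pos : ∀ i ∈ p.2.1, 0 < i := fun i hi => (hw1 i hi).1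
    have hwc' : Multiset.card p.2.1 ≤ h - k := by omega
    have hv1 : 0 < n - k := by omega
    have himg_gt : ∀ i ∈ p.2.2.image (fun i => i + (n-k)), n - k < i := by
      intro i hi
      obtain ⟨j, hj, rfl⟩ := Finset.mem_image.1 hi
      have := hw_pos j (Multiset.mem_toFinset.1 (hw3 hj))
      omega
    have hU_lt : ∀ i ∈ p.1.2, i < n - k := by
      intro i hi
      have := (hu1 i (Multiset.mem_toFinset.1 (hu3 hi))).2
      omega
    have efil_lt : (insert (n-k) (p.2.2.image (fun i => i + (n-k)) ∪ p.1.2)).filter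
        (fun i => i < n-k) = p.1.2 := by
      rw [Finset.filter_insert, if_neg (by omega), Finset.filter_union]
      rw [Finset.filter_false_of_mem (fun i hi => by have := himg_gt i hi; omega)]
      rw [Finset.filter_true_of_mem hU_lt, Finset.empty_union]
    have efil_gt : (insert (n-k) (p.2.2.image (fun i => i + (n-k)) ∪ p.1.2)).filter
        (fun i => n-k < i) = p.2.2.image (fun i => i + (n-k)) := by
      rw [Finset.filter_insert, if_neg (by omega), Finset.filter_union]
      rw [Finset.filter_true_of_mem himg_gt]
      rw [Finset.filter_false_of_mem (fun i hi => by have := hU_lt i hi; omega),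
        Finset.union_empty]
    have eimg : (p.2.2.image (fun i => i + (n-k))).image (fun i => i - (n-k)) = p.2.2 := by
      rw [Finset.image_image]
      rw [show p.2.2.image ((fun i => i - (n-k)) ∘ (fun i => i + (n-k)))
          = p.2.2.image id by
        apply Finset.image_congr
        intro i _
        simp]
      rw [Finset.image_id]
    dsimp only
    refine Prod.ext (Prod.ext ?_ ?_) (Prod.ext ?_ ?_)
    · exact asms_nu hw_pos hu_le hwc'
    · exact efil_lt
    · exact asms_mu hw_pos hu_le
    · rw [efil_gt, eimg]
  · -- weights
    intro x hx
    obtain ⟨hx1, hx2, hvS, hvnu⟩ := Finset.mem_filter.1 hx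
    obtain ⟨hb1, hb2, hb3⟩ := mem_Box.1 hx1
    have hpos : ∀ i ∈ x.1, 0 < i := fun i hi => (hb1 i hi).1
    have hsum : x.1.sum = (nu n h k x.1).sum + (mu n k x.1).sum + (h-k)*(n-k) :=
      sum_dis hpos hb2 hx2
    have hsplit : x.2.filter (fun i => i ≤ n-k) = insert (n-k) (x.2.filter (fun i => i < n-k)) := by
      ext a
      simp only [Finset.mem_insert, Finset.mem_filter]
      constructor
      · rintro ⟨ha, hle⟩
        rcases Nat.eq_or_lt_of_le hle with heq | hlt
        · exact Or.inl heq
        · exact Or.inr ⟨ha, hlt⟩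
      · rintro (rfl | ⟨ha, hlt⟩)
        · exact ⟨hvS, le_refl _⟩
        · exact ⟨ha, le_of_lt hlt⟩
    have hcardS : x.2.card
        = (x.2.filter (fun i => i ≤ n-k)).card + (x.2.filter (fun i => n-k < i)).card := by
      rw [show x.2.filter (fun i => n-k < i) = x.2.filter (fun i => ¬ (i ≤ n-k)) from
        Finset.filter_congr (fun i _ => by omega)]
      rw [Finset.card_filter_add_card_filter_not]
    have hcardle : (x.2.filter (fun i => i ≤ n-k)).card
        = (x.2.filter (fun i => i < n-k)).card + 1 := by
      rw [hsplit, Finset.card_insert_of_notMem (by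
        intro hmem
        have := (Finset.mem_filter.1 hmem).2
        omega)]
    have hcardimg : ((x.2.filter (fun i => n-k < i)).image (fun i => i - (n-k))).card
        = (x.2.filter (fun i => n-k < i)).card := by
      apply Finset.card_image_of_injOn
      intro a ha b hb hab
      have ha2 := (Finset.mem_filter.1 (Finset.mem_coe.1 ha)).2
      have hb2' := (Finset.mem_filter.1 (Finset.mem_coe.1 hb)).2
      have hab' : a - (n-k) = b - (n-k) := hab
      omega
    dsimp only
    rw [hsum, hcardS, hcardle, hcardimg, pow_add, pow_add, pow_add, pow_add, pow_one,
      Nat.mul_comm (h-k) (n-k)]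
    ring

theorem t_empty (m n h : ℕ) :
    (Box (m+n-h) h).filter
      (fun x => kval n h x.1 = h ∧ ((n-h) ∈ x.2 ∧ (n-h) ∉ nu n h h x.1)) = ∅ := by
  rw [Finset.filter_eq_empty_iff]
  rintro x hx ⟨hkv, hvS, hvnu⟩
  obtain ⟨hb1, hb2, hb3⟩ := mem_Box.1 hx
  have hpos : ∀ i ∈ x.1, 0 < i := fun i hi => (hb1 i hi).1
  have hvs : (n-h) ∈ x.1 := Multiset.mem_toFinset.1 (hb3 hvS)
  apply hvnu
  rw [← Multiset.count_pos, count_nu hpos hb2 hkv (n-h) (le_refl _), if_pos rfl]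
  have h1 := Multiset.count_pos.2 hvs
  omega

theorem stmt8 {R : Type*} [CommRing R] (q t : R) (m n h : ℕ)
    (hm : 0 < m) (hn : 0 < n) (hmh : h ≤ m) (hnh : h ≤ n) :
    ∑ k ∈ range (h + 1), q ^ ((n - k) * (h - k)) *
        (Oqt q t (n - k) k * Oqt q t (m - h + k) (h - k) +
          t * (if k < h then Oqt q t (n - 1 - k) k * Oqt q t (m - h + k) (h - k - 1) else 0)) =
      Oqt q t (m + n - h) h := by
  rw [Oqt_eq q t (m+n-h) h]
  have hmaps : ∀ x ∈ Box (m+n-h) h, kval n h x.1 ∈ range (h+1) := by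
    intro x _
    exact Finset.mem_range.2 (Nat.lt_succ_of_le (kval_le n h x.1))
  rw [← Finset.sum_fiberwise_of_maps_to hmaps (fun x => t ^ x.2.card * q ^ x.1.sum)]
  apply Finset.sum_congr rfl
  intro k hk
  have hkle : k ≤ h := Nat.lt_succ_iff.1 (Finset.mem_range.1 hk)
  rw [← Finset.sum_filter_add_sum_filter_not
    ((Box (m+n-h) h).filter (fun x => kval n h x.1 = k))
    (fun x => (n-k) ∈ x.2 ∧ (n-k) ∉ nu n h k x.1)
    (fun x => t ^ x.2.card * q ^ x.1.sum)]
  rw [Finset.filter_filter, Finset.filter_filter]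
  by_cases hkh : k < h
  · rw [if_pos hkh, t_bij q t m n h k hmh hnh hkh, main_bij q t m n h k hmh hnh hkle]
    ring
  · have hkeq : k = h := by omega
    subst hkeq
    rw [if_neg hkh, t_empty m n k, Finset.sum_empty,
      main_bij q t m n k k hmh hnh (le_refl k)]
    ring
end

section
/- For all positive integers n: ∑_{k=0}^{n} (−1)^k D(n−k, k) equals 0 if n is odd, equals −1 if n ≡ 2 (mod 4), and equals 1 if n ≡ 0 (mod 4), where D(m,n) are the Delannoy numbers. -/
open Finset

/-- The Delannoy numbers. -/
def D : ℕ → ℕ → ℕ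
  | 0, _ => 1
  | _ + 1, 0 => 1
  | m + 1, n + 1 => D m (n + 1) + D (m + 1) n + D m n

def S (n : ℕ) : ℤ := ∑ k ∈ range (n + 1), (-1 : ℤ) ^ k * (D (n - k) k : ℤ)

lemma D_zero_left (n : ℕ) : D 0 n = 1 := by cases n <;> simp [D]

lemma D_zero_right (n : ℕ) : D n 0 = 1 := by cases n <;> simp [D]

lemma D_rec (m n : ℕ) : D (m+1) (n+1) = D m (n+1) + D (m+1) n + D m n := by
  simp [D]

lemma S_succ_succ (n : ℕ) : S (n + 2) = - S n := by
  have h1 : S (n + 2) = (∑ i ∈ range (n + 1),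
      (-1:ℤ)^(i+1) * (D (n + 2 - (i+1)) (i+1) : ℤ)) + 1 + (-1:ℤ)^n := by
    rw [S, Finset.sum_range_succ, Finset.sum_range_succ']
    have h0 : (n + 2 - (n + 2)) = 0 := by omega
    rw [h0, D_zero_left, D_zero_right]
    push_cast
    rw [show ((-1:ℤ))^(n+2) = (-1)^n by ring]
    ring
  have h2 : ∀ i ∈ range (n + 1), (-1:ℤ)^(i+1) * (D (n + 2 - (i+1)) (i+1) : ℤ) =
      -((-1:ℤ)^i * (D (n - i) (i+1) : ℤ)) + -((-1:ℤ)^i * (D (n + 1 - i) i : ℤ))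
      + -((-1:ℤ)^i * (D (n - i) i : ℤ)) := by
    intro i hi
    simp only [Finset.mem_range] at hi
    have e1 : n + 2 - (i + 1) = (n - i) + 1 := by omega
    have e2 : n + 1 - i = (n - i) + 1 := by omega
    rw [e1, D_rec, ← e2]
    push_cast
    ring
  rw [h1, Finset.sum_congr rfl h2]
  rw [Finset.sum_add_distrib, Finset.sum_add_distrib]
  have hA : (∑ i ∈ range (n + 1), -((-1:ℤ)^i * (D (n - i) (i+1) : ℤ))) = S (n+1) - 1 := by
    have e : (∑ i ∈ range (n + 1), -((-1:ℤ)^i * (D (n - i) (i+1) : ℤ)))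
        = ∑ i ∈ range (n + 1), (-1:ℤ)^(i+1) * (D (n + 1 - (i+1)) (i+1) : ℤ) := by
      apply Finset.sum_congr rfl
      intro i hi
      simp only [Finset.mem_range] at hi
      have : n + 1 - (i + 1) = n - i := by omega
      rw [this, pow_succ]
      ring
    rw [e]
    rw [S, Finset.sum_range_succ' (fun k => (-1:ℤ)^k * (D (n + 1 - k) k : ℤ)) (n+1)]
    simp [D_zero_right]
  have hB : (∑ i ∈ range (n + 1), -((-1:ℤ)^i * (D (n + 1 - i) i : ℤ)))
      = -(S (n+1)) - (-1:ℤ)^n := by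
    rw [S, Finset.sum_range_succ (fun k => (-1:ℤ)^k * (D (n + 1 - k) k : ℤ)) (n+1)]
    have h0 : n + 1 - (n + 1) = 0 := by omega
    rw [h0, D_zero_left, Finset.sum_neg_distrib]
    push_cast
    rw [show ((-1:ℤ))^(n+1) = -(-1)^n by ring]
    ring
  have hC : (∑ i ∈ range (n + 1), -((-1:ℤ)^i * (D (n - i) i : ℤ))) = - S n := by
    rw [S, Finset.sum_neg_distrib]
  rw [hA, hB, hC]
  ring

theorem stmt11 (n : ℕ) (hn : 0 < n) :
    ∑ k ∈ range (n + 1), (-1 : ℤ) ^ k * (D (n - k) k : ℤ) =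
      if Odd n then 0 else if n % 4 = 2 then -1 else 1 := by
  clear hn
  show S n = _
  induction n using Nat.twoStepInduction with
  | zero => simp [S, D]
  | one => simp [S, Finset.sum_range_succ, D]
  | more n ih _ =>
    rw [S_succ_succ, ih]
    have hodd : Odd (n + 2) ↔ Odd n := by rw [Nat.odd_iff, Nat.odd_iff]; omega
    rcases Nat.even_or_odd n with h | h
    · have h2 : ¬ Odd n := by simpa [Nat.not_odd_iff_even]
      have h3 : ¬ Odd (n+2) := by rw [hodd]; exact h2
      have h4 := Nat.even_iff.mp h
      simp only [if_neg h2, if_neg h3]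
      split_ifs with a b <;> omega
    · simp [h, hodd.mpr h]
end
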